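/- arXiv:1904.12010 — 6 statements merged into one kernel-verified Lean document; each statement's English description precedes it below -/
import Mathlib

section
/- Let P, Q be continuous functions on [0,∞) with Q > 0. If u and v are solutions of u'' = P u' + Q u with u(0) ≥ v(0) and u'(0) ≥ v'(0), and u is not identical to v, then u(t) > v(t) and u'(t) > v'(t) for all t > 0. -/
open Set Real Filter Topology

lemma mono_aux {D : Set ℝ} (hD : Convex ℝ D) (hsub : D ⊆ Ici 0) {f f' : ℝ → ℝ}
    (hf : ∀ t ∈ Ici (0:ℝ), HasDerivWithinAt f (f' t) (Ici 0) t)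
    (h0 : ∀ x ∈ interior D, 0 ≤ f' x) : MonotoneOn f D :=
  monotoneOn_of_hasDerivWithinAt_nonneg hD
    (fun x hx => ((hf x (hsub hx)).continuousWithinAt).mono hsub)
    (fun x hx => (hf x (hsub (interior_subset hx))).mono (interior_subset.trans hsub)) h0

lemma strict_mono_aux {D : Set ℝ} (hD : Convex ℝ D) (hsub : D ⊆ Ici 0) {f f' : ℝ → ℝ}
    (hf : ∀ t ∈ Ici (0:ℝ), HasDerivWithinAt f (f' t) (Ici 0) t)
    (h0 : ∀ x ∈ interior D, 0 < f' x) : StrictMonoOn f D :=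
  strictMonoOn_of_hasDerivWithinAt_pos hD
    (fun x hx => ((hf x (hsub hx)).continuousWithinAt).mono hsub)
    (fun x hx => (hf x (hsub (interior_subset hx))).mono (interior_subset.trans hsub)) h0

lemma anti_aux {D : Set ℝ} (hD : Convex ℝ D) (hsub : D ⊆ Ici 0) {f f' : ℝ → ℝ}
    (hf : ∀ t ∈ Ici (0:ℝ), HasDerivWithinAt f (f' t) (Ici 0) t)
    (h0 : ∀ x ∈ interior D, f' x ≤ 0) : AntitoneOn f D :=
  antitoneOn_of_hasDerivWithinAt_nonpos hD
    (fun x hx => ((hf x (hsub hx)).continuousWithinAt).mono hsub)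
    (fun x hx => (hf x (hsub (interior_subset hx))).mono (interior_subset.trans hsub)) h0

/-- Gronwall-type uniqueness: trivial initial data forces the zero solution. -/
lemma gronwall_zero (P Q w w' : ℝ → ℝ)
    (hP : ContinuousOn P (Ici 0)) (hQ : ContinuousOn Q (Ici 0))
    (hw : ∀ t ∈ Ici (0:ℝ), HasDerivWithinAt w (w' t) (Ici 0) t)
    (hw' : ∀ t ∈ Ici (0:ℝ), HasDerivWithinAt w' (P t * w' t + Q t * w t) (Ici 0) t)
    (hz : w 0 = 0) (hz' : w' 0 = 0) :
    ∀ t ∈ Ici (0:ℝ), w t = 0 := by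
  intro T hT
  rcases eq_or_lt_of_le (α := ℝ) hT with hT0 | hT0
  · rw [← hT0]; exact hz
  -- bound |P|, |Q| on [0,T]
  obtain ⟨M1, hM1⟩ := isCompact_Icc.exists_bound_of_continuousOn
    (hP.mono (Icc_subset_Ici_self : Icc (0:ℝ) T ⊆ Ici 0))
  obtain ⟨M2, hM2⟩ := isCompact_Icc.exists_bound_of_continuousOn
    (hQ.mono (Icc_subset_Ici_self : Icc (0:ℝ) T ⊆ Ici 0))
  set M : ℝ := max M1 (max M2 0) with hMdef
  have hM0 : 0 ≤ M := le_trans (le_max_right _ _) (le_max_right _ _)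
  have hPM : ∀ s ∈ Icc (0:ℝ) T, |P s| ≤ M := fun s hs =>
    le_trans (by simpa using hM1 s hs) (le_max_left _ _)
  have hQM : ∀ s ∈ Icc (0:ℝ) T, |Q s| ≤ M := fun s hs =>
    le_trans (by simpa using hM2 s hs) (le_trans (le_max_left _ _) (le_max_right _ _))
  set K : ℝ := 1 + 3 * M with hKdef
  set E : ℝ → ℝ := fun s => w s * w s + w' s * w' s with hEdef
  set F : ℝ → ℝ := fun s => E s * Real.exp (-(K * s)) with hFdef
  have hEderiv : ∀ s ∈ Ici (0:ℝ), HasDerivWithinAt E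
      (w' s * w s + w s * w' s +
        ((P s * w' s + Q s * w s) * w' s + w' s * (P s * w' s + Q s * w s))) (Ici 0) s :=
    fun s hs => ((hw s hs).mul (hw s hs)).add ((hw' s hs).mul (hw' s hs))
  have hexpK : ∀ s : ℝ, HasDerivAt (fun x => Real.exp (-(K * x))) (Real.exp (-(K * s)) * -K) s := by
    intro s
    have h1 : HasDerivAt (fun x : ℝ => -(K * x)) (-K) s := by
      simpa using ((hasDerivAt_id s).const_mul K).fun_neg
    exact h1.exp
  have hFderiv : ∀ s ∈ Ici (0:ℝ), HasDerivWithinAt F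
      ((w' s * w s + w s * w' s +
        ((P s * w' s + Q s * w s) * w' s + w' s * (P s * w' s + Q s * w s))) *
          Real.exp (-(K * s)) + E s * (Real.exp (-(K * s)) * -K)) (Ici 0) s :=
    fun s hs => (hEderiv s hs).mul ((hexpK s).hasDerivWithinAt)
  have hanti : AntitoneOn F (Icc 0 T) := by
    apply anti_aux (convex_Icc 0 T) (Icc_subset_Ici_self) hFderiv
    intro x hx
    rw [interior_Icc] at hx
    have hx' : x ∈ Icc (0:ℝ) T := ⟨hx.1.le, hx.2.le⟩
    have he : 0 < Real.exp (-(K * x)) := Real.exp_pos _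
    have hPx := abs_le.mp (hPM x hx')
    have hQx := abs_le.mp (hQM x hx')
    have hcore : w' x * w x + w x * w' x +
        ((P x * w' x + Q x * w x) * w' x + w' x * (P x * w' x + Q x * w x)) ≤ K * E x := by
      have h1 : 0 ≤ (M - P x) * (w' x * w' x) :=
        mul_nonneg (by linarith [hPx.2]) (mul_self_nonneg _)
      have h2 : 0 ≤ (M - Q x) * ((w x + w' x) * (w x + w' x)) :=
        mul_nonneg (by linarith [hQx.2]) (mul_self_nonneg _)
      have h3 : 0 ≤ (M + Q x) * ((w x - w' x) * (w x - w' x)) :=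
        mul_nonneg (by linarith [hQx.1]) (mul_self_nonneg _)
      have h4 : 0 ≤ (w x - w' x) * (w x - w' x) := mul_self_nonneg _
      have h5 : 0 ≤ M * (w x * w x) := mul_nonneg hM0 (mul_self_nonneg _)
      simp only [hEdef, hKdef]
      nlinarith [h1, h2, h3, h4, h5]
    have : (w' x * w x + w x * w' x +
        ((P x * w' x + Q x * w x) * w' x + w' x * (P x * w' x + Q x * w x))) *
          Real.exp (-(K * x)) + E x * (Real.exp (-(K * x)) * -K)
        = ((w' x * w x + w x * w' x +
        ((P x * w' x + Q x * w x) * w' x + w' x * (P x * w' x + Q x * w x))) - K * E x) *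
          Real.exp (-(K * x)) := by ring
    rw [this]
    exact mul_nonpos_of_nonpos_of_nonneg (by linarith) he.le
  have hF0 : F 0 = 0 := by simp [hFdef, hEdef, hz, hz']
  have hFT : F T ≤ 0 := by
    have := hanti (left_mem_Icc.mpr hT) ⟨hT, le_refl T⟩ hT
    rwa [hF0] at this
  have hE : E T ≤ 0 := by
    have he : 0 < Real.exp (-(K * T)) := Real.exp_pos _
    by_contra h
    push_neg at h
    exact absurd hFT (not_le.mpr (mul_pos h he))
  have h1 : w T * w T ≤ 0 := by
    have := mul_self_nonneg (w' T)
    simp only [hEdef] at hE; linarith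
  exact mul_self_eq_zero.mp (le_antisymm h1 (mul_self_nonneg _))

lemma ode_aux (P Q w w' : ℝ → ℝ)
    (hP : ContinuousOn P (Ici 0)) (hQpos : ∀ t ∈ Ici (0:ℝ), 0 < Q t)
    (hw : ∀ t ∈ Ici (0:ℝ), HasDerivWithinAt w (w' t) (Ici 0) t)
    (hw' : ∀ t ∈ Ici (0:ℝ), HasDerivWithinAt w' (P t * w' t + Q t * w t) (Ici 0) t)
    (h0 : 0 ≤ w 0) (h0' : 0 ≤ w' 0)
    (hnz : 0 < w 0 ∨ 0 < w' 0) :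
    ∀ t > (0:ℝ), 0 < w t ∧ 0 < w' t := by
  have hcw : ContinuousOn w (Ici 0) := fun t ht => (hw t ht).continuousWithinAt
  have hcw' : ContinuousOn w' (Ici 0) := fun t ht => (hw' t ht).continuousWithinAt
  -- helpers
  have hposmul : ∀ a e : ℝ, 0 < e → 0 ≤ a * e → 0 ≤ a := by
    intro a e he h; by_contra hc; push_neg at hc; nlinarith
  have hposmul' : ∀ a e : ℝ, 0 < e → 0 < a * e → 0 < a := by
    intro a e he h; by_contra hc; push_neg at hc; nlinarith
  -- antiderivative of P
  set Pe : ℝ → ℝ := fun s => P (max s 0) with hPedef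
  have hPc : Continuous Pe := hP.comp_continuous (continuous_id.max continuous_const)
    (fun x => mem_Ici.mpr (le_max_right _ _))
  set A : ℝ → ℝ := fun t => ∫ s in (0:ℝ)..t, Pe s with hAdef
  have hA : ∀ t ∈ Ici (0:ℝ), HasDerivAt A (P t) t := by
    intro t ht
    have h := intervalIntegral.integral_hasDerivAt_right
      (hPc.intervalIntegrable 0 t)
      (hPc.stronglyMeasurable.stronglyMeasurableAtFilter)
      hPc.continuousAt
    rwa [show Pe t = P t by simp [hPedef, max_eq_left (mem_Ici.mp ht)]] at h
  have hA0 : A 0 = 0 := by simp [hAdef]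
  set g : ℝ → ℝ := fun t => w' t * Real.exp (-(A t)) with hgdef
  have hg : ∀ t ∈ Ici (0:ℝ), HasDerivWithinAt g (Q t * w t * Real.exp (-(A t))) (Ici 0) t := by
    intro t ht
    have hexp : HasDerivAt (fun s => Real.exp (-(A s))) (Real.exp (-(A t)) * -(P t)) t :=
      ((hA t ht).neg).exp
    have h2 := (hw' t ht).fun_mul hexp.hasDerivWithinAt
    exact h2.congr_deriv (by ring)
  have hg0 : g 0 = w' 0 := by simp [hgdef, hA0]
  have hgnn0 : 0 ≤ g 0 := by rw [hg0]; exact h0'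
  -- positivity neighborhoods from continuity
  have hposnbhd : ∀ f : ℝ → ℝ, ContinuousOn f (Ici 0) → ∀ b ∈ Ici (0:ℝ), 0 < f b →
      ∃ ε > 0, ∀ x ∈ Ici (0:ℝ), |x - b| < ε → 0 < f x := by
    intro f hf b hb hfb
    have h1 : (f ⁻¹' Ioi 0) ∈ 𝓝[Ici 0] b := hf b hb (Ioi_mem_nhds hfb)
    rw [Metric.mem_nhdsWithin_iff] at h1
    obtain ⟨ε, hε, hsub⟩ := h1
    exact ⟨ε, hε, fun x hx hd => hsub ⟨by rw [Metric.mem_ball, Real.dist_eq]; exact hd, hx⟩⟩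
  have hnegnbhd : ∀ f : ℝ → ℝ, ContinuousOn f (Ici 0) → ∀ b ∈ Ici (0:ℝ), f b < 0 →
      ∃ ε > 0, ∀ x ∈ Ici (0:ℝ), |x - b| < ε → f x < 0 := by
    intro f hf b hb hfb
    have h1 : (f ⁻¹' Iio 0) ∈ 𝓝[Ici 0] b := hf b hb (Iio_mem_nhds hfb)
    rw [Metric.mem_nhdsWithin_iff] at h1
    obtain ⟨ε, hε, hsub⟩ := h1
    exact ⟨ε, hε, fun x hx hd => hsub ⟨by rw [Metric.mem_ball, Real.dist_eq]; exact hd, hx⟩⟩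
  -- main nonnegativity claim
  have hNN : ∀ T ∈ Ici (0:ℝ), ∀ s ∈ Icc (0:ℝ) T, 0 ≤ w s := by
    intro T hT
    set S : Set ℝ := {t | t ∈ Icc (0:ℝ) T ∧ ∀ s ∈ Icc (0:ℝ) t, 0 ≤ w s} with hSdef
    have hS0 : (0:ℝ) ∈ S := ⟨⟨le_refl 0, hT⟩, fun s hs => by
      have hs0 : s = 0 := le_antisymm hs.2 hs.1
      rw [hs0]; exact h0⟩
    have hSne : S.Nonempty := ⟨0, hS0⟩
    have hSbdd : BddAbove S := ⟨T, fun x hx => hx.1.2⟩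
    set b := sSup S with hbdef
    have hb0 : 0 ≤ b := le_csSup hSbdd hS0
    have hbT : b ≤ T := csSup_le hSne (fun x hx => hx.1.2)
    have hlt : ∀ s, 0 ≤ s → s < b → 0 ≤ w s := by
      intro s hs hsb
      obtain ⟨t, htS, hst⟩ := exists_lt_of_lt_csSup hSne hsb
      exact htS.2 s ⟨hs, hst.le⟩
    have hwb : 0 ≤ w b := by
      by_contra hneg
      push_neg at hneg
      rcases eq_or_lt_of_le hb0 with hb' | hb'
      · rw [← hb'] at hneg; linarith
      · obtain ⟨ε, hε, hsub⟩ := hnegnbhd w hcw b hb0 hneg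
        set s := max (b/2) (b - ε/2) with hsdef
        have hsb : s < b := max_lt (by linarith) (by linarith)
        have hs0 : 0 ≤ s := le_trans (by positivity) (le_max_left _ _)
        have hd : |s - b| < ε := by
          rw [abs_lt]
          have h1 : b - ε/2 ≤ s := le_max_right _ _
          constructor <;> linarith
        have := hsub s hs0 hd
        exact absurd (hlt s hs0 hsb) (not_le.mpr this)
    have hIccb : ∀ s ∈ Icc (0:ℝ) b, 0 ≤ w s := by
      intro s hs
      rcases eq_or_lt_of_le hs.2 with h | h
      · rw [h]; exact hwb
      · exact hlt s hs.1 h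
    have hgm : MonotoneOn g (Icc 0 b) := by
      apply mono_aux (convex_Icc 0 b) Icc_subset_Ici_self hg
      intro x hx
      rw [interior_Icc] at hx
      exact mul_nonneg (mul_nonneg (hQpos x hx.1.le).le (hIccb x ⟨hx.1.le, hx.2.le⟩))
        (Real.exp_pos _).le
    have hw'b : ∀ s ∈ Icc (0:ℝ) b, 0 ≤ w' s := by
      intro s hs
      have h2 : 0 ≤ g s := le_trans hgnn0 (hgm (left_mem_Icc.mpr hb0) hs hs.1)
      exact hposmul _ _ (Real.exp_pos _) h2
    have hwm : MonotoneOn w (Icc 0 b) := by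
      apply mono_aux (convex_Icc 0 b) Icc_subset_Ici_self hw
      intro x hx; rw [interior_Icc] at hx
      exact hw'b x ⟨hx.1.le, hx.2.le⟩
    rcases eq_or_lt_of_le hbT with hbeq | hblt
    · intro s hs; exact hIccb s (by rw [hbeq]; exact hs)
    exfalso
    rcases eq_or_lt_of_le hwb with hwb0 | hwbpos
    · -- w b = 0
      have hw0b : w 0 ≤ w b := hwm (left_mem_Icc.mpr hb0) (right_mem_Icc.mpr hb0) hb0
      have hw00 : w 0 = 0 := le_antisymm (by linarith [hwb0.symm]) h0
      have hw'pos : 0 < w' 0 := hnz.resolve_left (by rw [hw00]; exact lt_irrefl 0)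
      obtain ⟨ε, hε, hpos⟩ := hposnbhd w' hcw' 0 self_mem_Ici hw'pos
      set c := min (ε/2) T with hcdef
      have hc0 : 0 < c := lt_min (by linarith) (lt_of_le_of_lt hb0 hblt)
      have hsm : StrictMonoOn w (Icc 0 c) := by
        apply strict_mono_aux (convex_Icc 0 c) Icc_subset_Ici_self hw
        intro x hx; rw [interior_Icc] at hx
        apply hpos x hx.1.le
        rw [sub_zero, abs_of_pos hx.1]
        have : c ≤ ε/2 := min_le_left _ _
        linarith [hx.2]
      have hcS : c ∈ S := by
        refine ⟨⟨hc0.le, min_le_right _ _⟩, fun s hs => ?_⟩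
        rcases eq_or_lt_of_le hs.1 with h | h
        · rw [← h]; exact h0
        · have := hsm (left_mem_Icc.mpr hc0.le) hs h
          rw [hw00] at this
          exact this.le
      have hcb : c ≤ b := le_csSup hSbdd hcS
      have h1 : w c ≤ w b := hwm ⟨hc0.le, hcb⟩ (right_mem_Icc.mpr hb0) hcb
      have h2 : w 0 < w c := hsm (left_mem_Icc.mpr hc0.le) (right_mem_Icc.mpr hc0.le) hc0
      rw [hw00] at h2
      linarith [hwb0.symm]
    · -- w b > 0
      obtain ⟨ε, hε, hpos⟩ := hposnbhd w hcw b hb0 hwbpos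
      set c := min (b + ε/2) T with hcdef
      have hbc : b < c := lt_min (by linarith) hblt
      have hcS : c ∈ S := by
        refine ⟨⟨le_trans hb0 hbc.le, min_le_right _ _⟩, fun s hs => ?_⟩
        rcases le_or_gt s b with h | h
        · exact hIccb s ⟨hs.1, h⟩
        · refine (hpos s (le_trans hb0 h.le) ?_).le
          rw [abs_lt]
          have hcle : c ≤ b + ε/2 := min_le_left _ _
          constructor <;> linarith [hs.2]
      exact absurd (le_csSup hSbdd hcS) (not_le.mpr hbc)
  -- globalize
  have hwnn : ∀ t ∈ Ici (0:ℝ), 0 ≤ w t := fun t ht => hNN t ht t ⟨ht, le_refl t⟩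
  have hgm : MonotoneOn g (Ici 0) := by
    apply mono_aux (convex_Ici 0) (subset_refl _) hg
    intro x hx; rw [interior_Ici] at hx
    exact mul_nonneg (mul_nonneg (hQpos x (mem_Ici.mpr hx.le)).le (hwnn x (mem_Ici.mpr hx.le))) (Real.exp_pos _).le
  have hw'nn : ∀ t ∈ Ici (0:ℝ), 0 ≤ w' t := by
    intro t ht
    exact hposmul _ _ (Real.exp_pos _) (le_trans hgnn0 (hgm self_mem_Ici ht ht))
  have hwm : MonotoneOn w (Ici 0) := by
    apply mono_aux (convex_Ici 0) (subset_refl _) hw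
    intro x hx; rw [interior_Ici] at hx; exact hw'nn x (mem_Ici.mpr hx.le)
  intro t ht
  rcases hnz with hc | hc
  · have hwt : 0 < w t := lt_of_lt_of_le hc (hwm self_mem_Ici (le_of_lt ht) (le_of_lt ht))
    have hgsm : StrictMonoOn g (Ici 0) := by
      apply strict_mono_aux (convex_Ici 0) (subset_refl _) hg
      intro x hx; rw [interior_Ici] at hx
      have hwx : 0 < w x := lt_of_lt_of_le hc (hwm self_mem_Ici (mem_Ici.mpr hx.le) hx.le)
      exact mul_pos (mul_pos (hQpos x (mem_Ici.mpr hx.le)) hwx) (Real.exp_pos _)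
    have h2 : 0 < g t := lt_of_le_of_lt hgnn0 (hgsm self_mem_Ici ht.le ht)
    exact ⟨hwt, hposmul' _ _ (Real.exp_pos _) h2⟩
  · have hg0' : 0 < g 0 := by rw [hg0]; exact hc
    have hw't : ∀ x ∈ Ici (0:ℝ), 0 < w' x := by
      intro x hx
      exact hposmul' _ _ (Real.exp_pos _) (lt_of_lt_of_le hg0' (hgm self_mem_Ici hx hx))
    have hsm : StrictMonoOn w (Ici 0) := by
      apply strict_mono_aux (convex_Ici 0) (subset_refl _) hw
      intro x hx; rw [interior_Ici] at hx; exact hw't x (mem_Ici.mpr hx.le)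
    exact ⟨lt_of_le_of_lt h0 (hsm self_mem_Ici ht.le ht), hw't t ht.le⟩

/-- Comparison for solutions of `u'' = P u' + Q u` on `[0,∞)` with `Q > 0`. -/
theorem ode_comparison (P Q u u' v v' : ℝ → ℝ)
    (hP : ContinuousOn P (Ici 0)) (hQ : ContinuousOn Q (Ici 0))
    (hQpos : ∀ t ∈ Ici (0:ℝ), 0 < Q t)
    (hu : ∀ t ∈ Ici (0:ℝ), HasDerivWithinAt u (u' t) (Ici 0) t)
    (hu' : ∀ t ∈ Ici (0:ℝ), HasDerivWithinAt u' (P t * u' t + Q t * u t) (Ici 0) t)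
    (hv : ∀ t ∈ Ici (0:ℝ), HasDerivWithinAt v (v' t) (Ici 0) t)
    (hv' : ∀ t ∈ Ici (0:ℝ), HasDerivWithinAt v' (P t * v' t + Q t * v t) (Ici 0) t)
    (h0 : v 0 ≤ u 0) (h0' : v' 0 ≤ u' 0)
    (hne : ¬ ∀ t ∈ Ici (0:ℝ), u t = v t) :
    ∀ t > (0:ℝ), v t < u t ∧ v' t < u' t := by
  set w : ℝ → ℝ := fun t => u t - v t with hwdef
  set W : ℝ → ℝ := fun t => u' t - v' t with hWdef
  have hw : ∀ t ∈ Ici (0:ℝ), HasDerivWithinAt w (W t) (Ici 0) t :=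
    fun t ht => (hu t ht).sub (hv t ht)
  have hw' : ∀ t ∈ Ici (0:ℝ), HasDerivWithinAt W (P t * W t + Q t * w t) (Ici 0) t := by
    intro t ht
    have h2 := (hu' t ht).fun_sub (hv' t ht)
    exact h2.congr_deriv (by simp only [hwdef, hWdef]; ring)
  have hz0 : 0 ≤ w 0 := sub_nonneg.mpr h0
  have hz0' : 0 ≤ W 0 := sub_nonneg.mpr h0'
  have hnz : 0 < w 0 ∨ 0 < W 0 := by
    by_contra h
    push_neg at h
    have hzero := gronwall_zero P Q w W hP hQ hw hw'
      (le_antisymm h.1 hz0) (le_antisymm h.2 hz0')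
    exact hne fun t ht => sub_eq_zero.mp (hzero t ht)
  intro t ht
  obtain ⟨h1, h2⟩ := ode_aux P Q w W hP hQpos hw hw' hz0 hz0' hnz t ht
  exact ⟨sub_pos.mp h1, sub_pos.mp h2⟩
end

section
/- Let P, Q be continuous functions on [0,∞) with Q > 0. Then there exists a solution u of u'' = P u' + Q u on [0,∞) with u(t) > 0 and u'(t) < 0 for all t ≥ 0. -/
open Set Real

set_option linter.unusedSectionVars false

noncomputable section OdeShootSection

namespace OdeShoot

/-- The first-order vector field associated to `u'' = P u' + Q u`. -/
def fld (P Q : ℝ → ℝ) (t : ℝ) (x : ℝ × ℝ) : ℝ × ℝ := (x.2, P t * x.2 + Q t * x.1)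

lemma fld_norm_le {P Q : ℝ → ℝ} {M : ℝ} {t : ℝ} (hp : |P t| ≤ M) (hq : |Q t| ≤ M)
    (x : ℝ × ℝ) : ‖fld P Q t x‖ ≤ (1 + 2 * M) * ‖x‖ := by
  have hM : 0 ≤ M := (abs_nonneg _).trans hp
  have h1 : |x.1| ≤ ‖x‖ := by rw [Prod.norm_def]; exact le_max_left _ _
  have h2 : |x.2| ≤ ‖x‖ := by rw [Prod.norm_def]; exact le_max_right _ _
  have hxn : 0 ≤ ‖x‖ := norm_nonneg _
  rw [fld, Prod.norm_def]
  apply max_le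
  · calc ‖x.2‖ ≤ ‖x‖ := h2
      _ ≤ (1 + 2*M) * ‖x‖ := by nlinarith
  · have h3 : ‖P t * x.2 + Q t * x.1‖ ≤ |P t| * |x.2| + |Q t| * |x.1| := by
      rw [Real.norm_eq_abs]
      calc |P t * x.2 + Q t * x.1| ≤ |P t * x.2| + |Q t * x.1| := abs_add_le _ _
        _ = |P t| * |x.2| + |Q t| * |x.1| := by rw [abs_mul, abs_mul]
    calc ‖P t * x.2 + Q t * x.1‖ ≤ |P t| * |x.2| + |Q t| * |x.1| := h3
      _ ≤ M * ‖x‖ + M * ‖x‖ := by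
          have := abs_nonneg (x.1); have := abs_nonneg (x.2); nlinarith
      _ ≤ (1 + 2*M) * ‖x‖ := by nlinarith

lemma fld_lip {P Q : ℝ → ℝ} {M : ℝ} {t : ℝ} (hp : |P t| ≤ M) (hq : |Q t| ≤ M) :
    LipschitzWith ((1 + 2 * M).toNNReal) (fld P Q t) := by
  have hM : 0 ≤ M := (abs_nonneg _).trans hp
  apply LipschitzWith.of_dist_le_mul
  intro x y
  have hco : ((1 + 2*M).toNNReal : ℝ) = 1 + 2*M := Real.coe_toNNReal _ (by positivity)
  rw [hco, dist_eq_norm, dist_eq_norm]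
  have heq : fld P Q t x - fld P Q t y = fld P Q t (x - y) := by
    simp only [fld, Prod.mk_sub_mk, Prod.fst_sub, Prod.snd_sub]
    rw [Prod.mk.injEq]
    exact ⟨rfl, by ring⟩
  rw [heq]
  exact fld_norm_le hp hq _


/-- One Picard-Lindelöf step of uniform length for the linear field. -/
lemma step {P Q : ℝ → ℝ} (hP : Continuous P) (hQ : Continuous Q) {M a b : ℝ}
    (hM : 0 ≤ M) (hPb : ∀ t ∈ Icc a b, |P t| ≤ M) (hQb : ∀ t ∈ Icc a b, |Q t| ≤ M)
    (hab : a ≤ b) (hlen : b - a ≤ 1 / (2 * (1 + 2 * M))) (x₀ : ℝ × ℝ) :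
    ∃ f : ℝ → ℝ × ℝ, f a = x₀ ∧
      ∀ t ∈ Icc a b, HasDerivWithinAt f (fld P Q t (f t)) (Icc a b) t := by
  set K : ℝ := 1 + 2 * M with hK
  have hKpos : 0 < K := by positivity
  set R : ℝ := ‖x₀‖ + 1 with hR
  have hRnn : 0 ≤ R := by rw [hR]; positivity
  have hpl : IsPicardLindelof (fld P Q) (tmin := a) (tmax := b) ⟨a, le_refl a, hab⟩ x₀
      R.toNNReal 0 (K * (‖x₀‖ + R)).toNNReal K.toNNReal := by
    constructor
    · intro t ht
      exact (fld_lip (hPb t ht) (hQb t ht)).lipschitzOnWith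
    · intro x _
      apply Continuous.continuousOn
      exact continuous_const.prodMk ((hP.mul continuous_const).add (hQ.mul continuous_const))
    · intro t ht x hx
      rw [Real.coe_toNNReal _ hRnn] at hx
      rw [Real.coe_toNNReal _ (by positivity)]
      have hxb : ‖x‖ ≤ ‖x₀‖ + R := by
        have := mem_closedBall_iff_norm.mp hx
        calc ‖x‖ = ‖x₀ + (x - x₀)‖ := by ring_nf
          _ ≤ ‖x₀‖ + ‖x - x₀‖ := norm_add_le _ _
          _ ≤ ‖x₀‖ + R := by linarith
      calc ‖fld P Q t x‖ ≤ K * ‖x‖ := fld_norm_le (hPb t ht) (hQb t ht) x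
        _ ≤ K * (‖x₀‖ + R) := by nlinarith
    · rw [Real.coe_toNNReal _ (by positivity), Real.coe_toNNReal _ hRnn, NNReal.coe_zero,
        sub_zero]
      show K * (‖x₀‖ + R) * max (b - a) (a - a) ≤ R
      have hmax : max (b - a) (a - a) = b - a := by
        rw [sub_self]; exact max_eq_left (by linarith)
      rw [hmax]
      have hn : 0 ≤ ‖x₀‖ := norm_nonneg _
      calc K * (‖x₀‖ + R) * (b - a) ≤ K * (‖x₀‖ + R) * (1 / (2 * K)) := by
            apply mul_le_mul_of_nonneg_left hlen; positivity
        _ = (‖x₀‖ + R) / 2 := by field_simp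
        _ ≤ R := by rw [hR]; linarith
  obtain ⟨f, hf0, hf⟩ := hpl.exists_eq_forall_mem_Icc_hasDerivWithinAt₀
  exact ⟨f, hf0, hf⟩


/-- Glue two local solutions at a junction point. -/
lemma glue {F : ℝ → ℝ × ℝ → ℝ × ℝ} {f g : ℝ → ℝ × ℝ} {a m b : ℝ} (ham : a ≤ m) (hmb : m ≤ b)
    (hf : ∀ t ∈ Icc a m, HasDerivWithinAt f (F t (f t)) (Icc a m) t)
    (hg : ∀ t ∈ Icc m b, HasDerivWithinAt g (F t (g t)) (Icc m b) t)
    (hfg : g m = f m) :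
    ∃ h : ℝ → ℝ × ℝ, EqOn h f (Icc a m) ∧
      ∀ t ∈ Icc a b, HasDerivWithinAt h (F t (h t)) (Icc a b) t := by
  classical
  set h : ℝ → ℝ × ℝ := fun t => if t ≤ m then f t else g t with hh
  have hEf : EqOn h f (Icc a m) := fun t ht => if_pos ht.2
  have hEg : EqOn h g (Icc m b) := by
    intro t ht
    by_cases htm : t ≤ m
    · have : t = m := le_antisymm htm ht.1
      simp [hh, htm, this, hfg]
    · simp [hh, htm]
  refine ⟨h, hEf, ?_⟩
  intro t ht
  rcases lt_trichotomy t m with hlt | heq | hgt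
  · -- t < m
    have hmem : Icc a m ∈ nhdsWithin t (Icc a b) := by
      apply Filter.mem_of_superset (inter_mem_nhdsWithin (Icc a b) (Iic_mem_nhds hlt))
      rintro x ⟨hx1, hx2⟩; exact ⟨hx1.1, hx2⟩
    have H := (hf t ⟨ht.1, hlt.le⟩).mono_of_mem_nhdsWithin hmem
    have heq' : h =ᶠ[nhdsWithin t (Icc a b)] f :=
      Filter.eventually_iff_exists_mem.mpr ⟨Icc a m, hmem, fun x hx => hEf hx⟩
    have hth : h t = f t := hEf ⟨ht.1, hlt.le⟩
    rw [hth]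
    exact H.congr_of_eventuallyEq heq' hth
  · -- t = m
    subst heq
    have H1 : HasDerivWithinAt h (F t (h t)) (Icc a t) t := by
      have := (hf t ⟨ht.1, le_refl t⟩).congr (fun x hx => hEf hx) (hEf ⟨ht.1, le_refl t⟩)
      rwa [hEf ⟨ht.1, le_refl t⟩]
    have H2 : HasDerivWithinAt h (F t (h t)) (Icc t b) t := by
      have := (hg t ⟨le_refl t, ht.2⟩).congr (fun x hx => hEg hx) (hEg ⟨le_refl t, ht.2⟩)
      rwa [hEg ⟨le_refl t, ht.2⟩]
    have := H1.union H2
    rwa [Icc_union_Icc_eq_Icc ht.1 ht.2] at this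
  · -- m < t
    have hmem : Icc m b ∈ nhdsWithin t (Icc a b) := by
      apply Filter.mem_of_superset (inter_mem_nhdsWithin (Icc a b) (Ioi_mem_nhds hgt))
      rintro x ⟨hx1, hx2⟩; exact ⟨le_of_lt hx2, hx1.2⟩
    have H := (hg t ⟨hgt.le, ht.2⟩).mono_of_mem_nhdsWithin hmem
    have heq' : h =ᶠ[nhdsWithin t (Icc a b)] g :=
      Filter.eventually_iff_exists_mem.mpr ⟨Icc m b, hmem, fun x hx => hEg hx⟩
    have hth : h t = g t := hEg ⟨hgt.le, ht.2⟩
    rw [hth]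
    exact H.congr_of_eventuallyEq heq' hth


/-- Global solution on `Icc 0 n`. -/
lemma solve_Icc {P Q : ℝ → ℝ} (hP : Continuous P) (hQ : Continuous Q) {n : ℝ}
    (hn : 0 ≤ n) (x₀ : ℝ × ℝ) :
    ∃ f : ℝ → ℝ × ℝ, f 0 = x₀ ∧
      ∀ t ∈ Icc 0 n, HasDerivWithinAt f (fld P Q t (f t)) (Icc 0 n) t := by
  obtain ⟨MP, hMP⟩ := (isCompact_Icc (a := (0:ℝ)) (b := n)).exists_bound_of_continuousOn
    hP.continuousOn
  obtain ⟨MQ, hMQ⟩ := (isCompact_Icc (a := (0:ℝ)) (b := n)).exists_bound_of_continuousOn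
    hQ.continuousOn
  obtain ⟨M, hM0, hPb, hQb⟩ : ∃ M : ℝ, 0 ≤ M ∧ (∀ t ∈ Icc (0:ℝ) n, |P t| ≤ M) ∧
      (∀ t ∈ Icc (0:ℝ) n, |Q t| ≤ M) := by
    refine ⟨max 0 (max MP MQ), le_max_left _ _, fun t ht => ?_, fun t ht => ?_⟩
    · exact le_trans (hMP t ht) (le_trans (le_max_left _ _) (le_max_right _ _))
    · exact le_trans (hMQ t ht) (le_trans (le_max_right _ _) (le_max_right _ _))
  obtain ⟨ε, hεval, hεpos⟩ : ∃ ε : ℝ, ε = 1 / (2 * (1 + 2 * M)) ∧ 0 < ε :=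
    ⟨_, rfl, by positivity⟩
  have key : ∀ k : ℕ, ∃ f : ℝ → ℝ × ℝ, f 0 = x₀ ∧
      ∀ t ∈ Icc 0 (min (((k:ℝ) + 1) * ε) n),
        HasDerivWithinAt f (fld P Q t (f t)) (Icc 0 (min (((k:ℝ) + 1) * ε) n)) t := by
    intro k
    induction k with
    | zero =>
      have hsub : Icc (0:ℝ) (min ((((0:ℕ):ℝ) + 1) * ε) n) ⊆ Icc 0 n :=
        Icc_subset_Icc le_rfl (min_le_right _ _)
      have h0 : (0:ℝ) ≤ min ((((0:ℕ):ℝ) + 1) * ε) n := le_min (by positivity) hn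
      have h2 : min ((((0:ℕ):ℝ) + 1) * ε) n - 0 ≤ 1 / (2 * (1 + 2 * M)) := by
        rw [← hεval]
        have := min_le_left ((((0:ℕ):ℝ) + 1) * ε) n
        push_cast at this ⊢
        linarith
      obtain ⟨f, hf0, hf⟩ := step hP hQ hM0
        (fun t ht => hPb t (hsub ht)) (fun t ht => hQb t (hsub ht)) h0 h2 x₀
      exact ⟨f, hf0, hf⟩
    | succ k ih =>
      obtain ⟨f, hf0, hf⟩ := ih
      by_cases hcase : n ≤ ((k:ℝ) + 1) * ε
      · have hmn : min (((k:ℝ) + 1) * ε) n = n := min_eq_right hcase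
        have hmn2 : min ((((k+1:ℕ):ℝ) + 1) * ε) n = n := by
          apply min_eq_right
          push_cast
          nlinarith
        rw [hmn2]; rw [hmn] at hf
        exact ⟨f, hf0, hf⟩
      · push_neg at hcase
        have hmval : min (((k:ℝ) + 1) * ε) n = ((k:ℝ) + 1) * ε := min_eq_left hcase.le
        have hm0 : (0:ℝ) ≤ min (((k:ℝ) + 1) * ε) n := le_min (by positivity) hn
        have hmb : min (((k:ℝ) + 1) * ε) n ≤ min ((((k+1:ℕ):ℝ) + 1) * ε) n := by
          apply le_min _ (min_le_right _ _)
          rw [hmval]; push_cast; nlinarith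
        have hbn : min ((((k+1:ℕ):ℝ) + 1) * ε) n ≤ n := min_le_right _ _
        have hblen : min ((((k+1:ℕ):ℝ) + 1) * ε) n - min (((k:ℝ) + 1) * ε) n
            ≤ 1 / (2 * (1 + 2 * M)) := by
          rw [← hεval, hmval]
          have := min_le_left ((((k+1:ℕ):ℝ) + 1) * ε) n
          push_cast at this ⊢
          nlinarith
        obtain ⟨g, hg0, hg⟩ := step hP hQ hM0
          (fun t ht => hPb t ⟨hm0.trans ht.1, ht.2.trans hbn⟩)
          (fun t ht => hQb t ⟨hm0.trans ht.1, ht.2.trans hbn⟩)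
          hmb hblen (f (min (((k:ℝ) + 1) * ε) n))
        obtain ⟨h, hEf, hder⟩ := glue hm0 hmb hf hg hg0
        refine ⟨h, ?_, hder⟩
        rw [hEf ⟨le_refl 0, hm0⟩]; exact hf0
  obtain ⟨k, hk⟩ := exists_nat_ge (n / ε)
  obtain ⟨f, hf0, hf⟩ := key k
  have hmin : min (((k:ℝ) + 1) * ε) n = n := by
    apply min_eq_right
    rw [div_le_iff₀ hεpos] at hk
    nlinarith
  rw [hmin] at hf
  exact ⟨f, hf0, hf⟩


/-- restrict a derivative within `Icc 0 n` to within `Ici t`. -/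
lemma toIcit {f : ℝ → ℝ × ℝ} {d : ℝ × ℝ} {n t : ℝ}
    (h : HasDerivWithinAt f d (Icc 0 n) t) (ht : 0 ≤ t) (htn : t < n) :
    HasDerivWithinAt f d (Ici t) t := by
  apply h.mono_of_mem_nhdsWithin
  apply Filter.mem_of_superset (inter_mem_nhdsWithin (Ici t) (Iio_mem_nhds htn))
  rintro x ⟨hx1, hx2⟩; exact ⟨ht.trans hx1, hx2.le⟩

/-- restrict a derivative within `Icc 0 n` to within `Ici 0`. -/
lemma toIci0 {f : ℝ → ℝ × ℝ} {d : ℝ × ℝ} {n t : ℝ}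
    (h : HasDerivWithinAt f d (Icc 0 n) t) (htn : t < n) :
    HasDerivWithinAt f d (Ici 0) t := by
  apply h.mono_of_mem_nhdsWithin
  apply Filter.mem_of_superset (inter_mem_nhdsWithin (Ici 0) (Iio_mem_nhds htn))
  rintro x ⟨hx1, hx2⟩; exact ⟨hx1, hx2.le⟩

/-- Uniqueness of solutions on `Icc 0 m`, with derivative hypotheses within `Ici t`. -/
lemma unique_Icc {P Q : ℝ → ℝ} (hP : Continuous P) (hQ : Continuous Q) {m : ℝ}
    (hm : 0 ≤ m) {f g : ℝ → ℝ × ℝ}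
    (hfc : ContinuousOn f (Icc 0 m)) (hgc : ContinuousOn g (Icc 0 m))
    (hf : ∀ t ∈ Ico 0 m, HasDerivWithinAt f (fld P Q t (f t)) (Ici t) t)
    (hg : ∀ t ∈ Ico 0 m, HasDerivWithinAt g (fld P Q t (g t)) (Ici t) t)
    (h0 : f 0 = g 0) : EqOn f g (Icc 0 m) := by
  obtain ⟨MP, hMP⟩ := (isCompact_Icc (a := (0:ℝ)) (b := m)).exists_bound_of_continuousOn
    hP.continuousOn
  obtain ⟨MQ, hMQ⟩ := (isCompact_Icc (a := (0:ℝ)) (b := m)).exists_bound_of_continuousOn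
    hQ.continuousOn
  obtain ⟨M, hM0, hPb, hQb⟩ : ∃ M : ℝ, 0 ≤ M ∧ (∀ t ∈ Icc (0:ℝ) m, |P t| ≤ M) ∧
      (∀ t ∈ Icc (0:ℝ) m, |Q t| ≤ M) := by
    refine ⟨max 0 (max MP MQ), le_max_left _ _, fun t ht => ?_, fun t ht => ?_⟩
    · exact le_trans (hMP t ht) (le_trans (le_max_left _ _) (le_max_right _ _))
    · exact le_trans (hMQ t ht) (le_trans (le_max_right _ _) (le_max_right _ _))
  set v : ℝ → ℝ × ℝ → ℝ × ℝ := fun t x => fld P Q (min (max t 0) m) x with hv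
  have hclamp : ∀ t : ℝ, min (max t 0) m ∈ Icc (0:ℝ) m := fun t =>
    ⟨le_min (le_max_right _ _) hm, min_le_right _ _⟩
  have hlip : ∀ t, LipschitzOnWith ((1 + 2 * M).toNNReal) (v t) univ := fun t =>
    (fld_lip (hPb _ (hclamp t)) (hQb _ (hclamp t))).lipschitzOnWith
  have hveq : ∀ t ∈ Ico (0:ℝ) m, ∀ x, v t x = fld P Q t x := by
    intro t ht x
    rw [hv]
    simp only [max_eq_left ht.1, min_eq_left ht.2.le]
  exact ODE_solution_unique_of_mem_Icc_right (fun t _ => hlip t) hfc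
    (fun t ht => (hveq t ht (f t)) ▸ hf t ht) (fun _ _ => trivial) hgc
    (fun t ht => (hveq t ht (g t)) ▸ hg t ht) (fun _ _ => trivial) h0

/-- Existence of a global solution pair on `[0, ∞)`. -/
lemma exists_sol {P Q : ℝ → ℝ} (hP : Continuous P) (hQ : Continuous Q) (x₀ : ℝ × ℝ) :
    ∃ u v : ℝ → ℝ, u 0 = x₀.1 ∧ v 0 = x₀.2 ∧
      (∀ t ∈ Ici (0:ℝ), HasDerivWithinAt u (v t) (Ici 0) t) ∧
      (∀ t ∈ Ici (0:ℝ), HasDerivWithinAt v (P t * v t + Q t * u t) (Ici 0) t) := by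
  classical
  have hsol : ∀ n : ℕ, ∃ f : ℝ → ℝ × ℝ, f 0 = x₀ ∧
      ∀ t ∈ Icc 0 (n:ℝ), HasDerivWithinAt f (fld P Q t (f t)) (Icc 0 (n:ℝ)) t :=
    fun n => solve_Icc hP hQ (Nat.cast_nonneg n) x₀
  set sol : ℕ → ℝ → ℝ × ℝ := fun n => (hsol n).choose with hsoldef
  have sol0 : ∀ n, sol n 0 = x₀ := fun n => (hsol n).choose_spec.1
  have solD : ∀ n : ℕ, ∀ t ∈ Icc (0:ℝ) (n:ℝ),
      HasDerivWithinAt (sol n) (fld P Q t (sol n t)) (Icc 0 (n:ℝ)) t :=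
    fun n => (hsol n).choose_spec.2
  have solC : ∀ n, ContinuousOn (sol n) (Icc 0 (n:ℝ)) :=
    fun n t ht => (solD n t ht).continuousWithinAt
  -- consistency
  have consist : ∀ j n : ℕ, j ≤ n → EqOn (sol j) (sol n) (Icc 0 (j:ℝ)) := by
    intro j n hjn
    have hjr : (j:ℝ) ≤ n := Nat.cast_le.mpr hjn
    apply unique_Icc hP hQ (Nat.cast_nonneg j) (solC j)
      ((solC n).mono (Icc_subset_Icc le_rfl hjr))
    · intro t ht
      exact toIcit (solD j t ⟨ht.1, ht.2.le⟩) ht.1 ht.2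
    · intro t ht
      exact toIcit (solD n t ⟨ht.1, ht.2.le.trans hjr⟩) ht.1 (lt_of_lt_of_le ht.2 hjr)
    · rw [sol0, sol0]
  set F : ℝ → ℝ × ℝ := fun t => sol (⌊max t 0⌋₊ + 1) t with hF
  have hFeq : ∀ n : ℕ, EqOn F (sol n) (Icc 0 (n:ℝ)) := by
    intro n s hs
    have hs0 : max s 0 = s := max_eq_left hs.1
    have hsj : s < (⌊max s 0⌋₊ + 1 : ℕ) := by
      rw [hs0]; push_cast; exact Nat.lt_floor_add_one s
    rcases le_total (⌊max s 0⌋₊ + 1 : ℕ) n with h | h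
    · exact consist _ n h ⟨hs.1, hsj.le⟩
    · exact (consist n _ h ⟨hs.1, hs.2⟩).symm
  have hFD : ∀ t ∈ Ici (0:ℝ), HasDerivWithinAt F (fld P Q t (F t)) (Ici 0) t := by
    intro t ht
    set n : ℕ := ⌊max t 0⌋₊ + 1 with hn
    have htn : t < (n:ℝ) := by
      have := Nat.lt_floor_add_one (max t 0)
      rw [hn]; push_cast
      rw [max_eq_left (mem_Ici.mp ht)]
      exact Nat.lt_floor_add_one t
    have hD := toIci0 (solD n t ⟨ht, htn.le⟩) htn
    have hmem : Icc (0:ℝ) (n:ℝ) ∈ nhdsWithin t (Ici 0) := by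
      apply Filter.mem_of_superset (inter_mem_nhdsWithin (Ici 0) (Iio_mem_nhds htn))
      rintro x ⟨hx1, hx2⟩; exact ⟨hx1, hx2.le⟩
    have hFt : F t = sol n t := hFeq n ⟨ht, htn.le⟩
    have heq' : F =ᶠ[nhdsWithin t (Ici 0)] sol n :=
      Filter.eventually_iff_exists_mem.mpr ⟨_, hmem, fun x hx => hFeq n hx⟩
    rw [hFt]
    exact hD.congr_of_eventuallyEq heq' hFt
  refine ⟨fun t => (F t).1, fun t => (F t).2, ?_, ?_, ?_, ?_⟩
  · show (F 0).1 = x₀.1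
    rw [show F 0 = x₀ from by rw [hFeq 0 ⟨le_refl 0, by norm_num⟩]; exact sol0 0]
  · show (F 0).2 = x₀.2
    rw [show F 0 = x₀ from by rw [hFeq 0 ⟨le_refl 0, by norm_num⟩]; exact sol0 0]
  · intro t ht
    have := (ContinuousLinearMap.fst ℝ ℝ ℝ).hasFDerivAt.comp_hasDerivWithinAt t (hFD t ht)
    exact this
  · intro t ht
    have := (ContinuousLinearMap.snd ℝ ℝ ℝ).hasFDerivAt.comp_hasDerivWithinAt t (hFD t ht)
    exact this


/-- primitive of P -/
def prim (P : ℝ → ℝ) (t : ℝ) : ℝ := ∫ s in (0:ℝ)..t, P s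

lemma prim_hasDerivAt {P : ℝ → ℝ} (hP : Continuous P) (t : ℝ) :
    HasDerivAt (prim P) (P t) t :=
  intervalIntegral.integral_hasDerivAt_right (hP.intervalIntegrable 0 t)
    (hP.stronglyMeasurableAtFilter _ _) hP.continuousAt

lemma prim_zero (P : ℝ → ℝ) : prim P 0 = 0 := by simp [prim]

/-- strict monotonicity on `Icc a b ⊆ Ici 0` from a positive one-sided derivative. -/
lemma smono_Icc {f f' : ℝ → ℝ} {a b : ℝ}
    (h : ∀ t ∈ Ici (0:ℝ), HasDerivWithinAt f (f' t) (Ici 0) t)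
    (ha : 0 ≤ a)
    (hpos : ∀ t, a < t → t < b → 0 < f' t) : StrictMonoOn f (Icc a b) := by
  apply strictMonoOn_of_deriv_pos (convex_Icc a b)
  · intro t ht
    exact ((h t (ha.trans ht.1)).continuousWithinAt).mono
      (fun x hx => (ha.trans hx.1 : (0:ℝ) ≤ x))
  · intro t ht
    rw [interior_Icc] at ht
    have h0t : 0 < t := ha.trans_lt ht.1
    have := (h t h0t.le).hasDerivAt (Ici_mem_nhds h0t)
    rw [this.deriv]
    exact hpos t ht.1 ht.2

/-- antitonicity on `Icc a b ⊆ Ici 0` from a nonpositive one-sided derivative. -/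
lemma anti_Icc {f f' : ℝ → ℝ} {a b : ℝ}
    (h : ∀ t ∈ Ici (0:ℝ), HasDerivWithinAt f (f' t) (Ici 0) t)
    (ha : 0 ≤ a)
    (hneg : ∀ t, a < t → t < b → f' t ≤ 0) : AntitoneOn f (Icc a b) := by
  apply antitoneOn_of_deriv_nonpos (convex_Icc a b)
  · intro t ht
    exact ((h t (ha.trans ht.1)).continuousWithinAt).mono
      (fun x hx => (ha.trans hx.1 : (0:ℝ) ≤ x))
  · intro t ht
    rw [interior_Icc] at ht
    have h0t : 0 < t := ha.trans_lt ht.1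
    exact (((h t h0t.le).hasDerivAt (Ici_mem_nhds h0t)).differentiableAt).differentiableWithinAt
  · intro t ht
    rw [interior_Icc] at ht
    have h0t : 0 < t := ha.trans_lt ht.1
    have := (h t h0t.le).hasDerivAt (Ici_mem_nhds h0t)
    rw [this.deriv]
    exact hneg t ht.1 ht.2

section Qual

variable {P Q u v : ℝ → ℝ}
variable (hP : Continuous P) (hQ : Continuous Q) (hQpos : ∀ t ∈ Ici (0:ℝ), 0 < Q t)
variable (hu : ∀ t ∈ Ici (0:ℝ), HasDerivWithinAt u (v t) (Ici 0) t)
variable (hv : ∀ t ∈ Ici (0:ℝ), HasDerivWithinAt v (P t * v t + Q t * u t) (Ici 0) t)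

include hP hu hv in
/-- derivative of the exponentially weighted slope `v·e^{-∫P}`. -/
lemma gaux_deriv : ∀ t ∈ Ici (0:ℝ),
    HasDerivWithinAt (fun s => v s * exp (-(prim P s)))
      (Q t * u t * exp (-(prim P t))) (Ici 0) t := by
  intro t ht
  have h1 : HasDerivAt (fun s => exp (-(prim P s))) (exp (-(prim P t)) * (-(P t))) t :=
    ((prim_hasDerivAt hP t).neg).exp
  have := (hv t ht).mul h1.hasDerivWithinAt
  exact this.congr_deriv (by ring)

include hP hQ hQpos hu hv in
/-- If `u t₀ > 0` and `v t₀ ≥ 0`, then `u` stays positive afterwards. -/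
lemma pos_forever {t₀ : ℝ} (ht₀ : 0 ≤ t₀) (hu0 : 0 < u t₀) (hv0 : 0 ≤ v t₀) :
    ∀ t, t₀ ≤ t → 0 < u t := by
  by_contra hcon
  push_neg at hcon
  set A : Set ℝ := {t | t₀ ≤ t ∧ u t ≤ 0} with hA
  have hAne : A.Nonempty := by
    obtain ⟨t, ht1, ht2⟩ := hcon; exact ⟨t, ht1, ht2⟩
  have hbdd : BddBelow A := ⟨t₀, fun x hx => hx.1⟩
  have hucont : ContinuousOn u (Ici 0) := fun s hs => (hu s hs).continuousWithinAt
  have hclosed : IsClosed A := by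
    have : A = Ici t₀ ∩ u ⁻¹' Iic 0 := by
      ext x; simp [hA, mem_Ici, mem_Iic]
    rw [this]
    exact ContinuousOn.preimage_isClosed_of_isClosed
      (hucont.mono (fun x (hx : t₀ ≤ x) => ht₀.trans hx)) isClosed_Ici isClosed_Iic
  set τ := sInf A with hτdef
  have hτA : τ ∈ A := hclosed.csInf_mem hAne hbdd
  have ht₀τ : t₀ < τ := by
    rcases lt_or_eq_of_le hτA.1 with h | h
    · exact h
    · exfalso; rw [← h] at hτA; exact absurd hτA.2 (not_le.mpr hu0)
  have hupos : ∀ s, t₀ ≤ s → s < τ → 0 < u s := by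
    intro s hs1 hs2
    by_contra hc
    push_neg at hc
    exact absurd (csInf_le hbdd ⟨hs1, hc⟩) (not_le.mpr hs2)
  -- the weighted slope is strictly monotone on [t₀, τ]
  have hgm : StrictMonoOn (fun s => v s * exp (-(prim P s))) (Icc t₀ τ) := by
    apply smono_Icc (f' := fun s => Q s * u s * exp (-(prim P s))) (gaux_deriv hP hu hv) ht₀
    intro s hs1 hs2
    have h0s : (0:ℝ) ≤ s := ht₀.trans hs1.le
    have := hQpos s h0s
    have := hupos s hs1.le hs2
    positivity
  have hvpos : ∀ s, t₀ < s → s ≤ τ → 0 < v s := by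
    intro s hs1 hs2
    have h1 : v t₀ * exp (-(prim P t₀)) < v s * exp (-(prim P s)) :=
      hgm ⟨le_refl t₀, ht₀τ.le⟩ ⟨hs1.le, hs2⟩ hs1
    have h2 : (0:ℝ) ≤ v t₀ * exp (-(prim P t₀)) := by positivity
    nlinarith [exp_pos (-(prim P s))]
  have hum : StrictMonoOn u (Icc t₀ τ) := by
    apply smono_Icc (f' := v) hu ht₀
    intro s hs1 hs2
    exact hvpos s hs1 hs2.le
  have := hum ⟨le_refl t₀, ht₀τ.le⟩ ⟨ht₀τ.le, le_refl τ⟩ ht₀τ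
  have huτ := hτA.2
  linarith

include hP hQ hQpos hu hv in
/-- If `u 0 = 0 < v 0` then `u > 0` on `(0, ∞)`. -/
lemma psi_pos (hu0 : u 0 = 0) (hv0 : v 0 = 1) : ∀ t, 0 < t → 0 < u t := by
  have hvcont : ContinuousWithinAt v (Ici 0) 0 := (hv 0 (mem_Ici.mpr le_rfl)).continuousWithinAt
  have hev : {s : ℝ | 0 < v s} ∈ nhdsWithin 0 (Ici 0) := by
    have : Filter.Tendsto v (nhdsWithin 0 (Ici 0)) (nhds 1) := by
      have := hvcont.tendsto; rwa [hv0] at this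
    exact this (Ioi_mem_nhds zero_lt_one)
  rw [Metric.mem_nhdsWithin_iff] at hev
  obtain ⟨δ, hδ, hball⟩ := hev
  intro t ht
  set c := min (δ / 2) t with hc
  have hc0 : 0 < c := lt_min (by linarith) ht
  have hct : c ≤ t := min_le_right _ _
  have hcδ : c < δ := lt_of_le_of_lt (min_le_left _ _) (by linarith)
  have hvball : ∀ s, 0 ≤ s → s ≤ c → 0 < v s := by
    intro s hs1 hs2
    apply hball
    constructor
    · rw [Metric.mem_ball, Real.dist_eq, sub_zero, abs_of_nonneg hs1]
      exact lt_of_le_of_lt hs2 hcδ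
    · exact hs1
  have hmono : StrictMonoOn u (Icc 0 c) := by
    apply smono_Icc (f' := v) hu le_rfl
    intro s hs1 hs2
    exact hvball s hs1.le hs2.le
  have hucpos : 0 < u c := by
    have := hmono ⟨le_refl 0, hc0.le⟩ ⟨hc0.le, le_refl c⟩ hc0
    rwa [hu0] at this
  exact pos_forever hP hQ hQpos hu hv hc0.le hucpos (hvball c hc0.le le_rfl).le t hct

end Qual


section Qual

variable {P Q u v : ℝ → ℝ}
variable (hP : Continuous P) (hQ : Continuous Q)
variable (hu : ∀ t ∈ Ici (0:ℝ), HasDerivWithinAt u (v t) (Ici 0) t)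
variable (hv : ∀ t ∈ Ici (0:ℝ), HasDerivWithinAt v (P t * v t + Q t * u t) (Ici 0) t)

include hP hQ hu hv in
/-- A nonnegative solution with `u 0 = 1` is everywhere positive. -/
lemma never_zero (hnn : ∀ t ∈ Ici (0:ℝ), 0 ≤ u t) (h01 : u 0 = 1) :
    ∀ t ∈ Ici (0:ℝ), 0 < u t := by
  intro t₀ ht₀
  rcases lt_or_eq_of_le (hnn t₀ ht₀) with h | h
  · exact h
  exfalso
  have hut₀ : u t₀ = 0 := h.symm
  have ht₀pos : 0 < t₀ := by
    rcases lt_or_eq_of_le (mem_Ici.mp ht₀) with h' | h'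
    · exact h'
    · exfalso; rw [← h', h01] at hut₀; norm_num at hut₀
  -- v t₀ = 0 via local minimum
  have hmin : IsLocalMin u t₀ := by
    apply Filter.eventually_of_mem (isOpen_Ioi.mem_nhds ht₀pos)
    intro x hx
    rw [hut₀]
    exact hnn x (mem_Ici.mpr (le_of_lt hx))
  have hD : HasDerivAt u (v t₀) t₀ :=
    (hu t₀ ht₀).hasDerivAt (Ici_mem_nhds ht₀pos)
  have hvt₀ : v t₀ = 0 := hmin.hasDerivAt_eq_zero hD
  -- uniqueness backwards
  obtain ⟨MP, hMP⟩ := (isCompact_Icc (a := (0:ℝ)) (b := t₀)).exists_bound_of_continuousOn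
    hP.continuousOn
  obtain ⟨MQ, hMQ⟩ := (isCompact_Icc (a := (0:ℝ)) (b := t₀)).exists_bound_of_continuousOn
    hQ.continuousOn
  obtain ⟨M, hM0, hPb, hQb⟩ : ∃ M : ℝ, 0 ≤ M ∧ (∀ t ∈ Icc (0:ℝ) t₀, |P t| ≤ M) ∧
      (∀ t ∈ Icc (0:ℝ) t₀, |Q t| ≤ M) := by
    refine ⟨max 0 (max MP MQ), le_max_left _ _, fun t ht => ?_, fun t ht => ?_⟩
    · exact le_trans (hMP t ht) (le_trans (le_max_left _ _) (le_max_right _ _))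
    · exact le_trans (hMQ t ht) (le_trans (le_max_right _ _) (le_max_right _ _))
  set w : ℝ → ℝ × ℝ → ℝ × ℝ := fun t x => fld P Q (min (max t 0) t₀) x with hw
  have hclamp : ∀ t : ℝ, min (max t 0) t₀ ∈ Icc (0:ℝ) t₀ := fun t =>
    ⟨le_min (le_max_right _ _) ht₀pos.le, min_le_right _ _⟩
  have hlip : ∀ t, LipschitzOnWith ((1 + 2 * M).toNNReal) (w t) univ := fun t =>
    (fld_lip (hPb _ (hclamp t)) (hQb _ (hclamp t))).lipschitzOnWith
  set f : ℝ → ℝ × ℝ := fun t => (u t, v t) with hf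
  have hfc : ContinuousOn f (Icc 0 t₀) := by
    apply ContinuousOn.prodMk
    · exact fun s hs => ((hu s hs.1).continuousWithinAt).mono (fun x hx => hx.1)
    · exact fun s hs => ((hv s hs.1).continuousWithinAt).mono (fun x hx => hx.1)
  have hfd : ∀ t ∈ Ioc (0:ℝ) t₀, HasDerivWithinAt f (w t (f t)) (Iic t) t := by
    intro t ht
    have hD : HasDerivWithinAt f (v t, P t * v t + Q t * u t) (Ici 0) t :=
      (hu t ht.1.le).prodMk (hv t ht.1.le)
    have hmem : Ici (0:ℝ) ∈ nhdsWithin t (Iic t) := by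
      apply Filter.mem_of_superset (inter_mem_nhdsWithin (Iic t) (Ioi_mem_nhds ht.1))
      rintro x ⟨_, hx2⟩; exact mem_Ici.mpr (le_of_lt hx2)
    have := hD.mono_of_mem_nhdsWithin hmem
    have hweq : w t (f t) = (v t, P t * v t + Q t * u t) := by
      rw [hw]
      simp only [fld, hf]
      rw [max_eq_left ht.1.le, min_eq_left ht.2]
    rw [hweq]
    exact this
  have hgd : ∀ t ∈ Ioc (0:ℝ) t₀,
      HasDerivWithinAt (fun _ : ℝ => ((0:ℝ), (0:ℝ))) (w t ((0:ℝ), (0:ℝ))) (Iic t) t := by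
    intro t ht
    have : w t ((0:ℝ), (0:ℝ)) = (0, 0) := by
      rw [hw]; simp [fld]
    rw [this]
    exact hasDerivWithinAt_const t _ _
  have heq : EqOn f (fun _ : ℝ => ((0:ℝ), (0:ℝ))) (Icc 0 t₀) := by
    apply ODE_solution_unique_of_mem_Icc_left (fun t _ => hlip t) hfc hfd (fun _ _ => trivial)
      continuousOn_const hgd (fun _ _ => trivial)
    rw [hf]; simp [hut₀, hvt₀]
  have := heq ⟨le_refl 0, ht₀pos.le⟩
  rw [hf] at this
  simp only [Prod.mk.injEq] at this
  rw [h01] at this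
  norm_num at this

variable {w z : ℝ → ℝ}
variable (hw : ∀ t ∈ Ici (0:ℝ), HasDerivWithinAt w (z t) (Ici 0) t)
variable (hz : ∀ t ∈ Ici (0:ℝ), HasDerivWithinAt z (P t * z t + Q t * w t) (Ici 0) t)

include hP hu hv hw hz in
/-- Abel's formula for the Wronskian of two solutions. -/
lemma wronskian_eq :
    ∀ t ∈ Ici (0:ℝ), z t * u t - w t * v t = (z 0 * u 0 - w 0 * v 0) * exp (prim P t) := by
  have hW : ∀ t ∈ Ici (0:ℝ), HasDerivWithinAt (fun s => z s * u s - w s * v s)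
      (P t * (z t * u t - w t * v t)) (Ici 0) t := by
    intro t ht
    have := ((hz t ht).mul (hu t ht)).sub ((hw t ht).mul (hv t ht))
    exact this.congr_deriv (by ring)
  have hh : ∀ t ∈ Ici (0:ℝ), HasDerivWithinAt
      (fun s => (z s * u s - w s * v s) * exp (-(prim P s))) 0 (Ici 0) t := by
    intro t ht
    have h1 : HasDerivAt (fun s => exp (-(prim P s))) (exp (-(prim P t)) * (-(P t))) t :=
      ((prim_hasDerivAt hP t).neg).exp
    have := (hW t ht).mul h1.hasDerivWithinAt
    exact this.congr_deriv (by ring)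
  intro t ht
  have hconst : (z t * u t - w t * v t) * exp (-(prim P t))
      = (z 0 * u 0 - w 0 * v 0) * exp (-(prim P 0)) := by
    have hcont : ContinuousOn (fun s => (z s * u s - w s * v s) * exp (-(prim P s)))
        (Icc 0 t) := fun s hs => ((hh s hs.1).continuousWithinAt).mono (fun x hx => hx.1)
    have := constant_of_has_deriv_right_zero hcont
      (fun x hx => (hh x hx.1).mono (fun y (hy : x ≤ y) => le_trans hx.1 hy)) t ⟨ht, le_refl t⟩
    exact this
  rw [prim_zero, neg_zero, exp_zero, mul_one] at hconst
  have hepos := exp_pos (-(prim P t))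
  have : z t * u t - w t * v t = (z 0 * u 0 - w 0 * v 0) / exp (-(prim P t)) := by
    field_simp at hconst ⊢
    linarith
  rw [this, exp_neg]
  field_simp

end Qual


/-- Main lemma, for globally continuous coefficients. -/
lemma main {P Q : ℝ → ℝ} (hP : Continuous P) (hQ : Continuous Q)
    (hQpos : ∀ t ∈ Ici (0:ℝ), 0 < Q t) :
    ∃ u v : ℝ → ℝ,
      (∀ t ∈ Ici (0:ℝ), HasDerivWithinAt u (v t) (Ici 0) t) ∧
      (∀ t ∈ Ici (0:ℝ), HasDerivWithinAt v (P t * v t + Q t * u t) (Ici 0) t) ∧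
      (∀ t ∈ Ici (0:ℝ), 0 < u t ∧ v t < 0) := by
  obtain ⟨φ, φ', hφ0, hφ'0, hφd, hφ'd⟩ := exists_sol hP hQ (1, 0)
  obtain ⟨ψ, ψ', hψ0, hψ'0, hψd, hψ'd⟩ := exists_sol hP hQ (0, 1)
  simp only at hφ0 hφ'0 hψ0 hψ'0
  -- linear combinations are solutions
  have hder1 : ∀ a : ℝ, ∀ t ∈ Ici (0:ℝ),
      HasDerivWithinAt (fun s => φ s + a * ψ s) (φ' t + a * ψ' t) (Ici 0) t :=
    fun a t ht => (hφd t ht).add ((hψd t ht).const_mul a)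
  have hder2 : ∀ a : ℝ, ∀ t ∈ Ici (0:ℝ),
      HasDerivWithinAt (fun s => φ' s + a * ψ' s)
        (P t * (φ' t + a * ψ' t) + Q t * (φ t + a * ψ t)) (Ici 0) t := by
    intro a t ht
    have := (hφ'd t ht).add ((hψ'd t ht).const_mul a)
    exact this.congr_deriv (by ring)
  have hψpos : ∀ t, 0 < t → 0 < ψ t := psi_pos hP hQ hQpos hψd hψ'd hψ0 hψ'0
  -- the set of shooting slopes that lead below zero
  set B : Set ℝ := {a : ℝ | ∃ t, 0 < t ∧ φ t + a * ψ t < 0} with hB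
  have hψ1 : 0 < ψ 1 := hψpos 1 one_pos
  have hBne : B.Nonempty := by
    refine ⟨-(φ 1 + 1) / ψ 1, 1, one_pos, ?_⟩
    have : φ 1 + -(φ 1 + 1) / ψ 1 * ψ 1 = -1 := by field_simp; ring
    rw [this]; norm_num
  have hub : ∀ a ∈ B, a ≤ 0 := by
    intro a ⟨t, ht, hneg⟩
    by_contra hc
    push_neg at hc
    have hpos := pos_forever hP hQ hQpos (hder1 a) (hder2 a) (t₀ := 0) le_rfl
      (by simp [hφ0, hψ0]) (by simp [hφ'0, hψ'0]; linarith) t ht.le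
    linarith
  have hbdd : BddAbove B := ⟨0, hub⟩
  set c₀ : ℝ := sSup B with hc₀
  have hnotB : c₀ ∉ B := by
    rintro ⟨t, ht, hneg⟩
    have hψt := hψpos t ht
    set a' : ℝ := c₀ + -(φ t + c₀ * ψ t) / (2 * ψ t) with ha'def
    have ha' : c₀ < a' := by
      have h1 : 0 < -(φ t + c₀ * ψ t) / (2 * ψ t) := div_pos (by linarith) (by linarith)
      rw [ha'def]; linarith
    have ha'B : a' ∈ B := by
      refine ⟨t, ht, ?_⟩
      have : φ t + a' * ψ t = (φ t + c₀ * ψ t) / 2 := by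
        rw [ha'def]; field_simp; ring
      rw [this]; linarith
    exact absurd (le_csSup hbdd ha'B) (not_le.mpr ha')
  have hmem : ∀ a, a < c₀ → a ∈ B := by
    intro a ha
    obtain ⟨b, hbB, hab⟩ := exists_lt_of_lt_csSup hBne ha
    obtain ⟨t, ht, hneg⟩ := hbB
    refine ⟨t, ht, ?_⟩
    have := hψpos t ht
    nlinarith
  -- the principal solution
  set u : ℝ → ℝ := fun t => φ t + c₀ * ψ t with hu
  set v : ℝ → ℝ := fun t => φ' t + c₀ * ψ' t with hv
  have hud : ∀ t ∈ Ici (0:ℝ), HasDerivWithinAt u (v t) (Ici 0) t := hder1 c₀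
  have hvd : ∀ t ∈ Ici (0:ℝ),
      HasDerivWithinAt v (P t * v t + Q t * u t) (Ici 0) t := hder2 c₀
  have hu01 : u 0 = 1 := by rw [hu]; simp [hφ0, hψ0]
  have hnn : ∀ t ∈ Ici (0:ℝ), 0 ≤ u t := by
    intro t ht
    by_contra hc
    push_neg at hc
    have htpos : 0 < t := by
      rcases lt_or_eq_of_le (mem_Ici.mp ht) with h | h
      · exact h
      · exfalso; rw [← h, hu01] at hc; norm_num at hc
    exact hnotB ⟨t, htpos, hc⟩
  have hupos : ∀ t ∈ Ici (0:ℝ), 0 < u t := never_zero hP hQ hud hvd hnn hu01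
  clear_value u v
  refine ⟨u, v, hud, hvd, fun t ht => ⟨hupos t ht, ?_⟩⟩
  -- suppose v t₀ ≥ 0 at some point: derive a contradiction
  by_contra hcon
  push_neg at hcon
  set t₀ : ℝ := t with ht₀def
  have ht₀ : 0 ≤ t₀ := ht
  have hvt₀ : 0 ≤ v t₀ := hcon
  clear hcon ht
  -- the weighted slope is strictly increasing past t₀
  set gs : ℝ → ℝ := fun s => v s * exp (-(prim P s)) with hgs
  have hgmono : ∀ x y, t₀ ≤ x → x < y → gs x < gs y := by
    intro x y hx hxy
    have h0x : (0:ℝ) ≤ x := ht₀.trans hx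
    have := smono_Icc (f' := fun s => Q s * u s * exp (-(prim P s))) (b := y)
      (gaux_deriv hP hud hvd) h0x
      (fun s hs1 hs2 => by
        have h0s : (0:ℝ) ≤ s := h0x.trans hs1.le
        have := hQpos s h0s
        have := hupos s h0s
        positivity)
    exact this ⟨le_refl x, hxy.le⟩ ⟨hxy.le, le_refl y⟩ hxy
  set t₁ : ℝ := t₀ + 1 with ht₁def
  have ht₁0 : 0 ≤ t₁ := by linarith
  set cc : ℝ := gs t₁ with hccdef
  have hcc : 0 < cc := by
    have h1 : gs t₀ < gs t₁ := hgmono t₀ t₁ le_rfl (by linarith)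
    have h2 : 0 ≤ gs t₀ := by
      rw [hgs]
      positivity
    linarith
  have hvexp : ∀ s, 0 ≤ s → v s = gs s * exp (prim P s) := by
    intro s hs
    have hb : gs s = v s * exp (-(prim P s)) := rfl
    rw [hb, exp_neg]
    field_simp
  have hvge : ∀ s, t₁ ≤ s → cc * exp (prim P s) ≤ v s := by
    intro s hss
    have hgcc : cc ≤ gs s := by
      rcases eq_or_lt_of_le hss with h | h
      · rw [← h]
      · exact (hgmono t₁ s (by linarith) h).le
    rw [hvexp s (by linarith)]
    exact mul_le_mul_of_nonneg_right hgcc (exp_pos _).le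
  -- Wronskian identity
  have hwr : ∀ s ∈ Ici (0:ℝ), ψ' s * u s - ψ s * v s = exp (prim P s) := by
    have := wronskian_eq hP hud hvd hψd hψ'd
    intro s hs
    have h := this s hs
    rw [hψ0, hψ'0, hu01] at h
    simpa using h
  -- the comparison function
  set f₂ : ℝ → ℝ := fun s => ψ s / u s + 1 / (cc * u s) with hf₂
  set f₂' : ℝ → ℝ := fun s =>
    (ψ' s * u s - ψ s * v s) / u s ^ 2 +
      (0 * (cc * u s) - 1 * (cc * v s)) / (cc * u s) ^ 2 with hf₂'
  have hf₂d : ∀ s ∈ Ici (0:ℝ), HasDerivWithinAt f₂ (f₂' s) (Ici 0) s := by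
    intro s hs
    have hune : u s ≠ 0 := ne_of_gt (hupos s hs)
    have hcune : cc * u s ≠ 0 := by positivity
    exact ((hψd s hs).div (hud s hs) hune).add
      (((hasDerivWithinAt_const s (Ici 0) (1:ℝ)).div ((hud s hs).const_mul cc) hcune))
  have hanti : ∀ s, t₁ ≤ s → f₂ s ≤ f₂ t₁ := by
    intro s hss
    have := anti_Icc (f' := f₂') hf₂d ht₁0 (a := t₁) (b := s) ?_ ⟨le_refl t₁, hss⟩
      ⟨hss, le_refl s⟩ hss
    · exact this
    · intro x hx1 hx2
      have h0x : (0:ℝ) ≤ x := ht₁0.trans hx1.le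
      have hux : 0 < u x := hupos x h0x
      have hE : 0 < exp (prim P x) := exp_pos _
      have hvx := hvge x hx1.le
      rw [hf₂']
      simp only
      rw [hwr x h0x]
      have heq : exp (prim P x) / u x ^ 2 +
          (0 * (cc * u x) - 1 * (cc * v x)) / (cc * u x) ^ 2
          = (cc * exp (prim P x) - v x) / (cc * u x ^ 2) := by
        field_simp
        ring
      rw [heq]
      apply div_nonpos_of_nonpos_of_nonneg
      · linarith
      · positivity
  -- bound ψ by a multiple of u
  have hb1 : ∀ s, t₁ ≤ s → ψ s ≤ f₂ t₁ * u s := by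
    intro s hss
    have h0s : (0:ℝ) ≤ s := ht₁0.trans hss
    have hus : 0 < u s := hupos s h0s
    have h1 : ψ s / u s ≤ f₂ s := by
      rw [hf₂]
      simp only
      have : 0 < 1 / (cc * u s) := by positivity
      linarith
    have h2 : ψ s / u s ≤ f₂ t₁ := h1.trans (hanti s hss)
    calc ψ s = ψ s / u s * u s := by field_simp
      _ ≤ f₂ t₁ * u s := mul_le_mul_of_nonneg_right h2 hus.le
  have hucont : ContinuousOn u (Ici 0) := fun s hs => (hud s hs).continuousWithinAt
  have hψcont : ContinuousOn ψ (Ici 0) := fun s hs => (hψd s hs).continuousWithinAt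
  obtain ⟨zp, hzp, hzmax⟩ := (isCompact_Icc (a := (0:ℝ)) (b := t₁)).exists_isMaxOn
    (nonempty_Icc.mpr ht₁0)
    (ContinuousOn.div (hψcont.mono (fun x hx => hx.1)) (hucont.mono (fun x hx => hx.1))
      (fun x hx => ne_of_gt (hupos x hx.1)))
  have hb2 : ∀ s, 0 ≤ s → s ≤ t₁ → ψ s ≤ (ψ zp / u zp) * u s := by
    intro s hs1 hs2
    have hus : 0 < u s := hupos s hs1
    have := hzmax ⟨hs1, hs2⟩
    calc ψ s = ψ s / u s * u s := by field_simp
      _ ≤ (ψ zp / u zp) * u s := mul_le_mul_of_nonneg_right this hus.le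
  obtain ⟨M, hMle1, hMle2⟩ : ∃ M : ℝ, f₂ t₁ ≤ M ∧ ψ zp / u zp ≤ M :=
    ⟨max (f₂ t₁) (ψ zp / u zp), le_max_left _ _, le_max_right _ _⟩
  have hMb : ∀ s, 0 ≤ s → ψ s ≤ M * u s := by
    intro s hs
    have hus : 0 < u s := hupos s hs
    rcases le_total s t₁ with h | h
    · have h1 := hb2 s hs h
      have h3 : ψ zp / u zp * u s ≤ M * u s := mul_le_mul_of_nonneg_right hMle2 hus.le
      linarith
    · have h1 := hb1 s h
      have h3 : f₂ t₁ * u s ≤ M * u s := mul_le_mul_of_nonneg_right hMle1 hus.le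
      linarith
  obtain ⟨M', hM', hMM'⟩ : ∃ M' : ℝ, 0 < M' ∧ M ≤ M' - 1 := by
    refine ⟨max M 0 + 1, ?_, ?_⟩
    · have := le_max_right M 0; linarith
    · have := le_max_left M 0; linarith
  obtain ⟨s, hspos, hsneg⟩ := hmem (c₀ - 1 / M') (by
    have : 0 < 1 / M' := by positivity
    linarith)
  have hus : 0 < u s := hupos s hspos.le
  have hexpand : φ s + (c₀ - 1 / M') * ψ s = u s - 1 / M' * ψ s := by
    rw [hu]; ring
  rw [hexpand] at hsneg
  have hψs : u s < 1 / M' * ψ s := by linarith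
  have hψs2 : M' * u s < ψ s := by
    have h := (mul_lt_mul_iff_right₀ hM').mpr hψs
    calc M' * u s < M' * (1 / M' * ψ s) := h
      _ = ψ s := by field_simp
  have hψs3 : ψ s ≤ M * u s := hMb s hspos.le
  nlinarith


end OdeShoot

end OdeShootSection

/-- Existence of a positive decreasing solution of `u'' = P u' + Q u` on `[0,∞)`, `Q > 0`. -/
theorem ode_positive_decreasing_solution (P Q : ℝ → ℝ)
    (hP : ContinuousOn P (Ici 0)) (hQ : ContinuousOn Q (Ici 0))
    (hQpos : ∀ t ∈ Ici (0:ℝ), 0 < Q t) :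
    ∃ u u' : ℝ → ℝ,
      (∀ t ∈ Ici (0:ℝ), HasDerivWithinAt u (u' t) (Ici 0) t) ∧
      (∀ t ∈ Ici (0:ℝ), HasDerivWithinAt u' (P t * u' t + Q t * u t) (Ici 0) t) ∧
      (∀ t ∈ Ici (0:ℝ), 0 < u t ∧ u' t < 0) := by
  have hmax : Continuous (fun s : ℝ => max s 0) := continuous_id.max continuous_const
  have hmem : ∀ s : ℝ, max s 0 ∈ Ici (0:ℝ) := fun s => le_max_right s 0
  have hPe : Continuous (fun s : ℝ => P (max s 0)) := hP.comp_continuous hmax hmem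
  have hQe : Continuous (fun s : ℝ => Q (max s 0)) := hQ.comp_continuous hmax hmem
  have hQepos : ∀ t ∈ Ici (0:ℝ), 0 < (fun s : ℝ => Q (max s 0)) t := by
    intro t ht
    exact hQpos _ (hmem t)
  obtain ⟨u, v, hud, hvd, hpos⟩ := OdeShoot.main hPe hQe hQepos
  refine ⟨u, v, hud, fun t ht => ?_, hpos⟩
  have h := hvd t ht
  rwa [max_eq_left (mem_Ici.mp ht)] at h
end

section
/- Let P, Q be continuous functions on [0,∞) with 1 + Q > 0 and suppose there exist constants d, C₀ > 0 with |P(t)|, |Q(t)| ≤ C₀ e^{-dt} for all t. Then there exists a solution u₁ of u'' = P u' + (1+Q)u and a constant C > 0 such that C⁻¹ e^t ≤ u₁(t) ≤ C e^t and C⁻¹ e^t ≤ u₁'(t) ≤ C e^t for all t ≥ 0. -/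
open Set Real

open Filter Topology MeasureTheory

/-- Lower barrier: if the vector field is positive whenever the solution is `≤ 0`,
a solution starting positive stays positive on `[0, ∞)`. -/
lemma ode_barrier_pos {r G : ℝ → ℝ}
    (hr : ∀ t ∈ Ici (0:ℝ), HasDerivWithinAt r (G t) (Ici 0) t)
    (h0 : 0 < r 0)
    (hpos : ∀ t ∈ Ici (0:ℝ), r t ≤ 0 → 0 < G t) :
    ∀ t ∈ Ici (0:ℝ), 0 < r t := by
  by_contra h
  push_neg at h
  obtain ⟨t₀, ht₀, ht₀'⟩ := h
  set S : Set ℝ := {t | 0 ≤ t ∧ r t ≤ 0} with hS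
  have hne : S.Nonempty := ⟨t₀, ht₀, ht₀'⟩
  have hbd : BddBelow S := ⟨0, fun x hx => hx.1⟩
  set T := sInf S with hTdef
  have hT0 : 0 ≤ T := le_csInf hne fun x hx => hx.1
  have hclos : T ∈ closure S := csInf_mem_closure hne hbd
  have hrT : r T ≤ 0 := by
    haveI : (𝓝[S] T).NeBot := mem_closure_iff_nhdsWithin_neBot.1 hclos
    have htend : Tendsto r (𝓝[S] T) (𝓝 (r T)) :=
      (hr T hT0).continuousWithinAt.mono (fun x hx => hx.1)
    refine le_of_tendsto htend ?_
    filter_upwards [self_mem_nhdsWithin] with x hx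
    exact hx.2
  have hTpos : 0 < T := by
    rcases hT0.lt_or_eq with h | h
    · exact h
    · exfalso; rw [← h] at hrT; linarith
  have hlow : ∀ x ∈ Ico (0:ℝ) T, 0 < r x := by
    intro x hx
    by_contra hc
    exact absurd (csInf_le hbd ⟨hx.1, not_lt.1 hc⟩) (not_le.2 hx.2)
  have hD : 0 < G T := hpos T hT0 hrT
  have hder : HasDerivWithinAt r (G T) (Icc 0 T) T :=
    (hr T hT0).mono (fun x hx => hx.1)
  have hslope := hasDerivWithinAt_iff_tendsto_slope.1 hder
  rw [show Icc (0:ℝ) T \ {T} = Ico 0 T from Icc_sdiff_right] at hslope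
  haveI : (𝓝[Ico (0:ℝ) T] T).NeBot := by
    apply mem_closure_iff_nhdsWithin_neBot.1
    rw [closure_Ico hTpos.ne]
    exact right_mem_Icc.2 hT0
  have hGle : G T ≤ 0 := by
    refine le_of_tendsto hslope ?_
    filter_upwards [self_mem_nhdsWithin] with x hx
    have h1 : 0 ≤ r x - r T := by have := hlow x hx; linarith
    have h2 : x - T ≤ 0 := by have := hx.2; linarith
    have : slope r T x = (r x - r T) / (x - T) := slope_def_field r T x
    rw [this]
    exact div_nonpos_of_nonneg_of_nonpos h1 h2
  linarith

/-- Global existence on `[0, ∞)` for an ODE with globally Lipschitz, bounded field. -/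
lemma ode_global_exists (F : ℝ → ℝ → ℝ) (K : NNReal) (Cb : ℝ) (hCb : 0 ≤ Cb)
    (hFt : ∀ x : ℝ, ContinuousOn (fun t => F t x) (Ici 0))
    (hFlip : ∀ t ∈ Ici (0:ℝ), LipschitzWith K (F t))
    (hFb : ∀ t ∈ Ici (0:ℝ), ∀ x : ℝ, |F t x| ≤ Cb) :
    ∃ r : ℝ → ℝ, r 0 = 1 ∧ ∀ t ∈ Ici (0:ℝ), HasDerivWithinAt r (F t (r t)) (Ici 0) t := by
  have step : ∀ (n : ℕ) (x₀ : ℝ), ∃ f : ℝ → ℝ, f (n:ℝ) = x₀ ∧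
      ∀ t ∈ Icc (n:ℝ) ((n:ℝ)+1), HasDerivWithinAt f (F t (f t)) (Icc (n:ℝ) ((n:ℝ)+1)) t := by
    intro n x₀
    have hn0 : (0:ℝ) ≤ (n:ℝ) := Nat.cast_nonneg n
    have hsub : Icc (n:ℝ) ((n:ℝ)+1) ⊆ Ici 0 := fun x hx => le_trans hn0 hx.1
    have hpl : IsPicardLindelof F (tmin := (n:ℝ)) (tmax := (n:ℝ)+1)
        ⟨(n:ℝ), le_refl _, by linarith⟩ x₀ ⟨Cb, hCb⟩ 0 ⟨Cb, hCb⟩ K :=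
      { lipschitzOnWith := fun t ht => (hFlip t (hsub ht)).lipschitzOnWith
        continuousOn := fun x _ => (hFt x).mono hsub
        norm_le := fun t ht x _ => by
          rw [Real.norm_eq_abs]; exact hFb t (hsub ht) x
        mul_max_le := by
          have h1 : max ((n:ℝ)+1 - (n:ℝ)) ((n:ℝ) - (n:ℝ)) = 1 := by
            rw [add_sub_cancel_left, sub_self]; exact max_eq_left zero_le_one
          show Cb * max ((n:ℝ)+1 - (n:ℝ)) ((n:ℝ) - (n:ℝ)) ≤ Cb - ((0:NNReal):ℝ)
          rw [h1, mul_one, NNReal.coe_zero, sub_zero] }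
    exact hpl.exists_eq_forall_mem_Icc_hasDerivWithinAt₀
  choose sol hsol1 hsol2 using step
  obtain ⟨g, hg0, hgs⟩ : ∃ g : ℕ → ℝ → ℝ, g 0 = sol 0 1 ∧
      ∀ n : ℕ, g (n+1) = sol (n+1) (g n ((n:ℝ)+1)) :=
    ⟨fun n => Nat.rec (sol 0 1) (fun k ih => sol (k+1) (ih ((k:ℝ)+1))) n, rfl, fun _ => rfl⟩
  have hgderiv : ∀ n : ℕ, ∀ t ∈ Icc (n:ℝ) ((n:ℝ)+1),
      HasDerivWithinAt (g n) (F t (g n t)) (Icc (n:ℝ) ((n:ℝ)+1)) t := by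
    intro n
    cases n with
    | zero => rw [hg0]; simpa using hsol2 0 1
    | succ k =>
        rw [hgs k]
        simpa using hsol2 (k+1) (g k ((k:ℝ)+1))
  have hgval : ∀ n : ℕ, g (n+1) ((n:ℝ)+1) = g n ((n:ℝ)+1) := by
    intro n
    rw [hgs n]
    have := hsol1 (n+1) (g n ((n:ℝ)+1))
    push_cast at this
    exact this
  have hEq : ∀ m : ℕ, EqOn (fun y => g ⌊y⌋₊ y) (g m) (Icc (m:ℝ) ((m:ℝ)+1)) := by
    intro m x hx
    rcases lt_or_eq_of_le hx.2 with hlt | heq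
    · have hfl : ⌊x⌋₊ = m := by
        rw [Nat.floor_eq_iff (le_trans (Nat.cast_nonneg m) hx.1)]
        exact ⟨hx.1, hlt⟩
      simp only [hfl]
    · have hfl : ⌊x⌋₊ = m + 1 := by
        rw [heq, show ((m:ℝ)+1) = ((m+1:ℕ):ℝ) by push_cast; ring, Nat.floor_natCast]
      show g ⌊x⌋₊ x = g m x
      rw [hfl, heq]
      exact hgval m
  have hkey : ∀ m : ℕ, ∀ x ∈ Icc (m:ℝ) ((m:ℝ)+1),
      HasDerivWithinAt (fun y => g ⌊y⌋₊ y) (F x (g ⌊x⌋₊ x)) (Icc (m:ℝ) ((m:ℝ)+1)) x := by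
    intro m x hx
    have h2 := (hgderiv m x hx).congr (hEq m) (hEq m hx)
    rw [← hEq m hx] at h2
    exact h2
  refine ⟨fun t => g ⌊t⌋₊ t, ?_, ?_⟩
  · have h1 : ⌊(0:ℝ)⌋₊ = 0 := Nat.floor_zero
    simp only [h1, hg0]
    simpa using hsol1 0 1
  · intro t ht
    have hn1 : ((⌊t⌋₊ : ℕ):ℝ) ≤ t := Nat.floor_le ht
    have hn2 : t < ((⌊t⌋₊ : ℕ):ℝ)+1 := Nat.lt_floor_add_one t
    set n := ⌊t⌋₊ with hn
    rcases eq_or_lt_of_le hn1 with heq | hlt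
    · -- t is the integer n
      have hRmem : Icc (n:ℝ) ((n:ℝ)+1) ∈ 𝓝[Ici t] t := by
        have h1 : Ici t ∩ Iic ((n:ℝ)+1) ∈ 𝓝[Ici t] t :=
          Filter.inter_mem self_mem_nhdsWithin
            (mem_nhdsWithin_of_mem_nhds (Iic_mem_nhds hn2))
        refine Filter.mem_of_superset h1 ?_
        rintro x ⟨hx1, hx2⟩
        exact ⟨heq ▸ hx1, hx2⟩
      have hR : HasDerivWithinAt (fun y => g ⌊y⌋₊ y) (F t (g ⌊t⌋₊ t)) (Ici t) t :=
        (hkey n t ⟨hn1, hn2.le⟩).mono_of_mem_nhdsWithin hRmem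
      cases hnn : n with
      | zero =>
          have ht0 : t = 0 := by
            have := heq; rw [hnn] at this; simpa using this.symm
          rw [ht0] at hR ⊢
          exact hR
      | succ k =>
          have hkt : ((k:ℕ):ℝ) < t := by
            rw [← heq, hnn]; push_cast; linarith
          have htk1 : t ≤ ((k:ℕ):ℝ) + 1 := by
            rw [← heq, hnn]; push_cast; linarith
          have hLmem : Icc (k:ℝ) ((k:ℝ)+1) ∈ 𝓝[Iic t] t := by
            have h1 : Iic t ∩ Ioi ((k:ℕ):ℝ) ∈ 𝓝[Iic t] t :=
              Filter.inter_mem self_mem_nhdsWithin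
                (mem_nhdsWithin_of_mem_nhds (Ioi_mem_nhds hkt))
            refine Filter.mem_of_superset h1 ?_
            rintro x ⟨hx1, hx2⟩
            exact ⟨le_of_lt hx2, le_trans hx1 htk1⟩
          have hL : HasDerivWithinAt (fun y => g ⌊y⌋₊ y) (F t (g ⌊t⌋₊ t)) (Iic t) t :=
            (hkey k t ⟨hkt.le, htk1⟩).mono_of_mem_nhdsWithin hLmem
          have := hL.union hR
          rw [Iic_union_Ici] at this
          exact this.mono (subset_univ _)
    · exact ((hkey n t ⟨hn1, hn2.le⟩).hasDerivAt
        (Icc_mem_nhds hlt hn2)).hasDerivWithinAt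

/-- Existence of an exponentially growing fundamental solution of `u'' = P u' + (1+Q) u`. -/
theorem ode_growing_fundamental_solution (P Q : ℝ → ℝ) (d C₀ : ℝ)
    (hP : ContinuousOn P (Ici 0)) (hQ : ContinuousOn Q (Ici 0))
    (hQ1 : ∀ t ∈ Ici (0:ℝ), 0 < 1 + Q t)
    (hd : 0 < d) (hC₀ : 0 < C₀)
    (hPb : ∀ t ∈ Ici (0:ℝ), |P t| ≤ C₀ * exp (-d * t))
    (hQb : ∀ t ∈ Ici (0:ℝ), |Q t| ≤ C₀ * exp (-d * t)) :
    ∃ (u₁ u₁' : ℝ → ℝ) (C : ℝ), 0 < C ∧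
      (∀ t ∈ Ici (0:ℝ), HasDerivWithinAt u₁ (u₁' t) (Ici 0) t) ∧
      (∀ t ∈ Ici (0:ℝ), HasDerivWithinAt u₁' (P t * u₁' t + (1 + Q t) * u₁ t) (Ici 0) t) ∧
      (∀ t ∈ Ici (0:ℝ),
        C⁻¹ * exp t ≤ u₁ t ∧ u₁ t ≤ C * exp t ∧
        C⁻¹ * exp t ≤ u₁' t ∧ u₁' t ≤ C * exp t) := by
  -- the truncated Riccati vector field
  set M : ℝ := 2*C₀ + 2 with hMdef
  have hM0 : 0 < M := by simp only [hMdef]; linarith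
  have hM1 : 1 < M := by simp only [hMdef]; linarith
  set pr : ℝ → ℝ := fun x => max (min x M) 0 with hprdef
  have hpr0 : ∀ x, 0 ≤ pr x := fun x => le_max_right _ _
  have hprM : ∀ x, pr x ≤ M := fun x => max_le (min_le_right _ _) hM0.le
  have hprlip : ∀ x y, |pr x - pr y| ≤ |x - y| := by
    intro x y
    refine (abs_max_sub_max_le_abs _ _ _).trans ?_
    refine (abs_min_sub_min_le_max x M y M).trans ?_
    simp
  set F : ℝ → ℝ → ℝ := fun t x => P t * pr x + (1 + Q t) - (pr x)^2 with hFdef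
  have hexp1 : ∀ t ∈ Ici (0:ℝ), exp (-d * t) ≤ 1 := by
    intro t ht
    rw [← exp_zero]
    apply exp_le_exp.2
    have : (0:ℝ) ≤ d * t := mul_nonneg hd.le ht
    linarith
  have hP1 : ∀ t ∈ Ici (0:ℝ), |P t| ≤ C₀ := fun t ht =>
    (hPb t ht).trans (by nlinarith [hexp1 t ht])
  have hQ1b : ∀ t ∈ Ici (0:ℝ), |Q t| ≤ C₀ := fun t ht =>
    (hQb t ht).trans (by nlinarith [hexp1 t ht])
  set K : NNReal := ⟨C₀ + 2*M, by positivity⟩ with hKdef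
  have hKcoe : (K : ℝ) = C₀ + 2*M := rfl
  set Cb : ℝ := C₀*M + (1 + C₀) + M^2 with hCbdef
  have hCb : 0 ≤ Cb := by positivity
  have hFt : ∀ x : ℝ, ContinuousOn (fun t => F t x) (Ici 0) := by
    intro x
    simp only [hFdef]
    exact ((hP.mul continuousOn_const).add (continuousOn_const.add hQ)).sub continuousOn_const
  have hFlip : ∀ t ∈ Ici (0:ℝ), LipschitzWith K (F t) := by
    intro t ht
    apply LipschitzWith.of_dist_le_mul
    intro x y
    rw [Real.dist_eq, Real.dist_eq, hKcoe]
    have hl := hprlip x y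
    have h1 : F t x - F t y = P t * (pr x - pr y) - (pr x - pr y) * (pr x + pr y) := by
      simp only [hFdef]; ring
    have h2 : |pr x + pr y| ≤ 2*M := by
      rw [abs_of_nonneg (by linarith [hpr0 x, hpr0 y])]
      linarith [hprM x, hprM y]
    calc |F t x - F t y|
        ≤ |P t * (pr x - pr y)| + |(pr x - pr y) * (pr x + pr y)| := by
          rw [h1]; exact abs_sub _ _
      _ = |P t| * |pr x - pr y| + |pr x - pr y| * |pr x + pr y| := by
          rw [abs_mul, abs_mul]
      _ ≤ C₀ * |x - y| + |x - y| * (2*M) := by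
          refine add_le_add ?_ ?_
          · exact mul_le_mul (hP1 t ht) hl (abs_nonneg _) hC₀.le
          · exact mul_le_mul hl h2 (abs_nonneg _) (abs_nonneg _)
      _ = (C₀ + 2*M) * |x - y| := by ring
  have hFb : ∀ t ∈ Ici (0:ℝ), ∀ x : ℝ, |F t x| ≤ Cb := by
    intro t ht x
    have h1 : |P t * pr x| ≤ C₀ * M := by
      rw [abs_mul, abs_of_nonneg (hpr0 x)]
      exact mul_le_mul (hP1 t ht) (hprM x) (hpr0 x) hC₀.le
    have h2 : |1 + Q t| ≤ 1 + C₀ := by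
      refine (abs_add_le _ _).trans ?_
      simp only [abs_one]
      linarith [hQ1b t ht]
    have h3 : |(pr x)^2| ≤ M^2 := by
      rw [abs_of_nonneg (sq_nonneg _)]
      exact pow_le_pow_left₀ (hpr0 x) (hprM x) 2
    calc |F t x| ≤ |P t * pr x + (1 + Q t)| + |(pr x)^2| := by
          simp only [hFdef]; exact abs_sub _ _
      _ ≤ |P t * pr x| + |1 + Q t| + |(pr x)^2| := by
          gcongr; exact abs_add_le _ _
      _ ≤ C₀*M + (1 + C₀) + M^2 := by linarith
  obtain ⟨r, hr0, hrF⟩ := ode_global_exists F K Cb hCb hFt hFlip hFb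
  -- invariant region 0 < r < M
  have hrpos : ∀ t ∈ Ici (0:ℝ), 0 < r t := by
    refine ode_barrier_pos hrF (by rw [hr0]; norm_num) ?_
    intro t ht hle
    have hpr' : pr (r t) = 0 := by
      simp only [hprdef]
      rw [min_eq_left (le_trans hle hM0.le), max_eq_right hle]
    have : F t (r t) = 1 + Q t := by
      simp only [hFdef]; rw [hpr']; ring
    rw [this]; exact hQ1 t ht
  have hrM : ∀ t ∈ Ici (0:ℝ), r t < M := by
    have haux : ∀ t ∈ Ici (0:ℝ), 0 < M - r t := by
      apply ode_barrier_pos (r := fun t => M - r t) (G := fun t => -(F t (r t)))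
      · exact fun t ht => (hrF t ht).const_sub M
      · show 0 < M - r 0
        rw [hr0]; linarith
      · intro t ht hle
        have hle' : M - r t ≤ 0 := hle
        have hMr : M ≤ r t := by linarith
        have hpr' : pr (r t) = M := by
          simp only [hprdef]
          rw [min_eq_right hMr, max_eq_left hM0.le]
        have hF : F t (r t) = P t * M + (1 + Q t) - M^2 := by
          simp only [hFdef]; rw [hpr']
        show 0 < -(F t (r t))
        rw [hF]
        have hPt : P t ≤ C₀ := le_trans (le_abs_self _) (hP1 t ht)
        have hQt : Q t ≤ C₀ := le_trans (le_abs_self _) (hQ1b t ht)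
        have hPM : P t * M ≤ C₀ * M := mul_le_mul_of_nonneg_right hPt hM0.le
        simp only [hMdef] at hPM ⊢
        nlinarith
    intro t ht
    have h : 0 < M - r t := haux t ht
    linarith
  -- r solves the true Riccati equation
  have hrd : ∀ t ∈ Ici (0:ℝ),
      HasDerivWithinAt r (P t * r t + (1 + Q t) - (r t)^2) (Ici 0) t := by
    intro t ht
    have hpr' : pr (r t) = r t := by
      simp only [hprdef]
      rw [min_eq_left (hrM t ht).le, max_eq_left (hrpos t ht).le]
    have h := hrF t ht
    simp only [hFdef] at h
    rwa [hpr'] at h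
  have hrc : ContinuousOn r (Ici 0) := fun t ht => (hrF t ht).continuousWithinAt
  have hInt : ∀ a b : ℝ, 0 ≤ a → a ≤ b → IntervalIntegrable r volume a b := by
    intro a b ha hab
    exact ContinuousOn.intervalIntegrable_of_Icc hab
      (hrc.mono (fun x hx => le_trans ha hx.1))
  -- the primitive A of r
  set A : ℝ → ℝ := fun t => ∫ τ in (0:ℝ)..t, r τ with hAdef
  have hA : ∀ t ∈ Ici (0:ℝ), HasDerivWithinAt A (r t) (Ici 0) t := by
    intro t ht
    rcases eq_or_lt_of_le (show (0:ℝ) ≤ t from ht) with heq | hlt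
    · -- t = 0
      rw [← heq]
      apply intervalIntegral.integral_hasDerivWithinAt_right (t := Ioi 0)
      · exact IntervalIntegrable.refl
      · exact ⟨Ici 0, Filter.mem_of_superset self_mem_nhdsWithin Ioi_subset_Ici_self,
          (hrc.aestronglyMeasurable measurableSet_Ici)⟩
      · exact (hrc 0 self_mem_Ici).mono Ioi_subset_Ici_self
    · have hca : ContinuousAt r t := (hrc t ht).continuousAt (Ici_mem_nhds hlt)
      have hmeas : StronglyMeasurableAtFilter r (𝓝 t) :=
        ⟨Ioi 0, Ioi_mem_nhds hlt,
          ((hrc.mono Ioi_subset_Ici_self).aestronglyMeasurable measurableSet_Ioi)⟩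
      exact (intervalIntegral.integral_hasDerivAt_right (hInt 0 t le_rfl ht)
        hmeas hca).hasDerivWithinAt
  have hAc : ContinuousOn A (Ici 0) := fun t ht => (hA t ht).continuousWithinAt
  have hAmono : ∀ τ t : ℝ, 0 ≤ τ → τ ≤ t → A τ ≤ A t := by
    intro τ t hτ hτt
    have h0t : (0:ℝ) ≤ t := le_trans hτ hτt
    have h1 : A t - A τ = ∫ x in τ..t, r x :=
      intervalIntegral.integral_interval_sub_left (hInt 0 t le_rfl h0t) (hInt 0 τ le_rfl hτ)
    have h2 : 0 ≤ ∫ x in τ..t, r x :=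
      intervalIntegral.integral_nonneg hτt (fun x hx => (hrpos x (le_trans hτ hx.1)).le)
    linarith
  -- the weighted difference w
  set w : ℝ → ℝ := fun t => (r t - 1) * exp (A t + t) with hwdef
  have hw0 : w 0 = 0 := by simp only [hwdef]; rw [hr0]; ring
  have hwd : ∀ t ∈ Ici (0:ℝ),
      HasDerivWithinAt w (exp (A t + t) * (P t * r t + Q t)) (Ici 0) t := by
    intro t ht
    have h1 := (hrd t ht).sub_const 1
    have h2 := ((hA t ht).add ((hasDerivAt_id' t).hasDerivWithinAt)).exp
    have h3 := h1.fun_mul h2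
    refine h3.congr_deriv ?_
    simp only [Pi.add_apply]; ring
  have hwc : ContinuousOn w (Ici 0) := fun t ht => (hwd t ht).continuousWithinAt
  have hcont_int : ContinuousOn (fun τ => exp (A τ + τ) * (P τ * r τ + Q τ)) (Ici 0) :=
    (Real.continuous_exp.comp_continuousOn (hAc.add continuousOn_id)).mul
      ((hP.mul hrc).add hQ)
  have hwFTC : ∀ t ∈ Ici (0:ℝ),
      w t = ∫ τ in (0:ℝ)..t, exp (A τ + τ) * (P τ * r τ + Q τ) := by
    intro t ht
    have h := intervalIntegral.integral_eq_sub_of_hasDeriv_right_of_le ht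
      (hwc.mono (fun x hx => hx.1))
      (fun x hx => ((hwd x hx.1.le).hasDerivAt (Ici_mem_nhds hx.1)).hasDerivWithinAt)
      (ContinuousOn.intervalIntegrable_of_Icc ht (hcont_int.mono (fun x hx => hx.1)))
    rw [hw0, sub_zero] at h
    exact h.symm
  -- decay constants
  set c : ℝ := min 1 d / 2 with hcdef
  have hc0 : 0 < c := by
    have h := lt_min one_pos hd
    simp only [hcdef]; linarith
  have hc1 : 2*c ≤ 1 := by
    have h := min_le_left 1 d; simp only [hcdef]; linarith
  have hcd : 2*c ≤ d := by
    have h := min_le_right 1 d; simp only [hcdef]; linarith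
  set Kc : ℝ := (M+1)*C₀/c with hKcdef
  have hKc0 : 0 < Kc := by
    simp only [hKcdef]
    exact div_pos (mul_pos (by linarith) hC₀) hc0
  -- the exponential decay of r - 1
  have hdecay : ∀ t ∈ Ici (0:ℝ), |r t - 1| ≤ Kc * exp (-(c*t)) := by
    intro t ht
    have hsub : Icc (0:ℝ) t ⊆ Ici 0 := fun x hx => hx.1
    have hInt2 : IntervalIntegrable (fun τ => exp (A τ + τ) * |P τ * r τ + Q τ|) volume 0 t :=
      ContinuousOn.intervalIntegrable_of_Icc ht
        (((Real.continuous_exp.comp_continuousOn (hAc.add continuousOn_id)).mul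
          ((hP.mul hrc).add hQ).abs).mono hsub)
    have hcont3' : Continuous (fun τ : ℝ => (M+1)*C₀*exp (-(d*τ))) :=
      continuous_const.mul (Real.continuous_exp.comp
        ((continuous_const.mul continuous_id).neg))
    have hcont3 : ContinuousOn (fun τ => exp (A τ + τ) * ((M+1)*C₀*exp (-(d*τ)))) (Ici 0) :=
      (Real.continuous_exp.comp_continuousOn (hAc.add continuousOn_id)).mul
        hcont3'.continuousOn
    have hInt3 : IntervalIntegrable (fun τ => exp (A τ + τ) * ((M+1)*C₀*exp (-(d*τ)))) volume 0 t :=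
      ContinuousOn.intervalIntegrable_of_Icc ht (hcont3.mono hsub)
    have hInt4 : IntervalIntegrable
        (fun τ => exp (A τ + τ) * ((M+1)*C₀*exp (-(d*τ))) * exp (-(A t + t))) volume 0 t :=
      hInt3.mul_const _
    have h1 : |w t| ≤ ∫ τ in (0:ℝ)..t, exp (A τ + τ) * |P τ * r τ + Q τ| := by
      rw [hwFTC t ht]
      simpa [Real.norm_eq_abs] using
        intervalIntegral.norm_integral_le_integral_norm
          (f := fun τ => exp (A τ + τ) * (P τ * r τ + Q τ)) ht
    have h2 : (∫ τ in (0:ℝ)..t, exp (A τ + τ) * |P τ * r τ + Q τ|)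
        ≤ ∫ τ in (0:ℝ)..t, exp (A τ + τ) * ((M+1)*C₀*exp (-(d*τ))) := by
      apply intervalIntegral.integral_mono_on ht hInt2 hInt3
      intro x hx
      have hx0 : (0:ℝ) ≤ x := hx.1
      apply mul_le_mul_of_nonneg_left _ (exp_pos _).le
      have hb1 : |P x * r x| ≤ C₀ * exp (-d*x) * M := by
        rw [abs_mul, abs_of_pos (hrpos x hx0)]
        exact mul_le_mul (hPb x hx0) (hrM x hx0).le (hrpos x hx0).le (by positivity)
      have hb2 := hQb x hx0
      calc |P x * r x + Q x| ≤ |P x * r x| + |Q x| := abs_add_le _ _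
        _ ≤ C₀ * exp (-d*x) * M + C₀ * exp (-d*x) := by linarith
        _ = (M+1)*C₀*exp (-(d*x)) := by
            rw [show -(d*x) = -d*x from by ring]; ring
    have h3 : |r t - 1| = |w t| * exp (-(A t + t)) := by
      have hwt : |w t| = |r t - 1| * exp (A t + t) := by
        simp only [hwdef]
        rw [abs_mul, abs_of_pos (exp_pos _)]
      rw [hwt, exp_neg, mul_assoc, mul_inv_cancel₀ (exp_pos _).ne', mul_one]
    have h4 : |w t| * exp (-(A t + t))
        ≤ (∫ τ in (0:ℝ)..t, exp (A τ + τ) * ((M+1)*C₀*exp (-(d*τ)))) * exp (-(A t + t)) :=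
      mul_le_mul_of_nonneg_right (h1.trans h2) (exp_pos _).le
    have h5 : (∫ τ in (0:ℝ)..t, exp (A τ + τ) * ((M+1)*C₀*exp (-(d*τ)))) * exp (-(A t + t))
        = ∫ τ in (0:ℝ)..t, exp (A τ + τ) * ((M+1)*C₀*exp (-(d*τ))) * exp (-(A t + t)) :=
      (intervalIntegral.integral_mul_const _ _).symm
    have h6 : (∫ τ in (0:ℝ)..t, exp (A τ + τ) * ((M+1)*C₀*exp (-(d*τ))) * exp (-(A t + t)))
        ≤ ∫ τ in (0:ℝ)..t, (M+1)*C₀ * exp (-(2*c*t)) := by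
      apply intervalIntegral.integral_mono_on ht hInt4 intervalIntegrable_const
      intro x hx
      have key : ∀ a b cc kk : ℝ, exp a * (kk * exp b) * exp cc = kk * exp (a + b + cc) := by
        intro a b cc kk
        rw [exp_add, exp_add]; ring
      rw [key (A x + x) (-(d*x)) (-(A t + t)) ((M+1)*C₀)]
      apply mul_le_mul_of_nonneg_left _ (by positivity)
      apply exp_le_exp.2
      have hAx := hAmono x t hx.1 hx.2
      nlinarith [mul_nonneg (by linarith : (0:ℝ) ≤ 1 - 2*c)
          (by linarith [hx.2] : (0:ℝ) ≤ t - x),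
        mul_nonneg (by linarith : (0:ℝ) ≤ d - 2*c) hx.1]
    have h7 : (∫ τ in (0:ℝ)..t, (M+1)*C₀ * exp (-(2*c*t)))
        = t * ((M+1)*C₀ * exp (-(2*c*t))) := by
      rw [intervalIntegral.integral_const, smul_eq_mul, sub_zero]
    have h8 : t * exp (-(c*t)) ≤ 1/c := by
      have hx1 : c*t ≤ exp (c*t) := by linarith [add_one_le_exp (c*t)]
      have hp := exp_pos (c*t)
      rw [exp_neg, ← div_eq_mul_inv, div_le_div_iff₀ hp hc0]
      nlinarith
    have h9 : t * ((M+1)*C₀ * exp (-(2*c*t))) ≤ Kc * exp (-(c*t)) := by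
      have hsplit : exp (-(2*c*t)) = exp (-(c*t)) * exp (-(c*t)) := by
        rw [← exp_add]; congr 1; ring
      calc t * ((M+1)*C₀ * exp (-(2*c*t)))
          = ((M+1)*C₀ * exp (-(c*t))) * (t * exp (-(c*t))) := by rw [hsplit]; ring
        _ ≤ ((M+1)*C₀ * exp (-(c*t))) * (1/c) := mul_le_mul_of_nonneg_left h8 (by positivity)
        _ = Kc * exp (-(c*t)) := by simp only [hKcdef]; ring
    calc |r t - 1| = |w t| * exp (-(A t + t)) := h3
      _ ≤ (∫ τ in (0:ℝ)..t, exp (A τ + τ) * ((M+1)*C₀*exp (-(d*τ)))) * exp (-(A t + t)) := h4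
      _ = ∫ τ in (0:ℝ)..t, exp (A τ + τ) * ((M+1)*C₀*exp (-(d*τ))) * exp (-(A t + t)) := h5
      _ ≤ ∫ τ in (0:ℝ)..t, (M+1)*C₀ * exp (-(2*c*t)) := h6
      _ = t * ((M+1)*C₀ * exp (-(2*c*t))) := h7
      _ ≤ Kc * exp (-(c*t)) := h9
  -- bound on |A t - t|
  set B₀ : ℝ := Kc/c with hB₀def
  have hB₀0 : 0 ≤ B₀ := by simp only [hB₀def]; positivity
  have hexpc : Continuous (fun τ : ℝ => Kc * exp (-(c*τ))) :=
    continuous_const.mul (Real.continuous_exp.comp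
      ((continuous_const.mul continuous_id).neg))
  have hAbound : ∀ t ∈ Ici (0:ℝ), |A t - t| ≤ B₀ := by
    intro t ht
    have hsub : Icc (0:ℝ) t ⊆ Ici 0 := fun x hx => hx.1
    have hint1 : IntervalIntegrable (fun τ => r τ - 1) volume 0 t :=
      ContinuousOn.intervalIntegrable_of_Icc ht ((hrc.sub continuousOn_const).mono hsub)
    have h1 : A t - t = ∫ τ in (0:ℝ)..t, (r τ - 1) := by
      rw [intervalIntegral.integral_sub (hInt 0 t le_rfl ht) intervalIntegrable_const,
        intervalIntegral.integral_const]
      simp only [hAdef, smul_eq_mul, sub_zero, mul_one]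
    have h2 : |∫ τ in (0:ℝ)..t, (r τ - 1)| ≤ ∫ τ in (0:ℝ)..t, |r τ - 1| := by
      simpa [Real.norm_eq_abs] using
        intervalIntegral.norm_integral_le_integral_norm (f := fun τ => r τ - 1) ht
    have h3 : (∫ τ in (0:ℝ)..t, |r τ - 1|) ≤ ∫ τ in (0:ℝ)..t, Kc * exp (-(c*τ)) := by
      apply intervalIntegral.integral_mono_on ht
        (ContinuousOn.intervalIntegrable_of_Icc ht
          (((hrc.sub continuousOn_const).mono hsub).abs))
        (hexpc.continuousOn.intervalIntegrable_of_Icc ht)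
      intro x hx
      exact hdecay x hx.1
    have h4 : (∫ τ in (0:ℝ)..t, Kc * exp (-(c*τ))) = Kc/c - Kc/c * exp (-(c*t)) := by
      have hder : ∀ τ ∈ uIcc (0:ℝ) t, HasDerivAt (fun y => -(Kc/c) * exp (-(c*y)))
          (Kc * exp (-(c*τ))) τ := by
        intro τ _
        have h0 : HasDerivAt (fun y : ℝ => -(c * y)) (-c) τ := by
          simpa using ((hasDerivAt_id τ).const_mul c).fun_neg
        have h1' := (h0.exp).const_mul (-(Kc/c))
        refine h1'.congr_deriv ?_
        field_simp
      rw [intervalIntegral.integral_eq_sub_of_hasDerivAt hder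
        (hexpc.intervalIntegrable 0 t)]
      rw [mul_zero, neg_zero, exp_zero, mul_one]
      ring
    have h5 : Kc/c - Kc/c * exp (-(c*t)) ≤ Kc/c := by
      have hp : 0 < Kc/c * exp (-(c*t)) := by positivity
      linarith
    calc |A t - t| = |∫ τ in (0:ℝ)..t, (r τ - 1)| := by rw [h1]
      _ ≤ ∫ τ in (0:ℝ)..t, |r τ - 1| := h2
      _ ≤ ∫ τ in (0:ℝ)..t, Kc * exp (-(c*τ)) := h3
      _ = Kc/c - Kc/c * exp (-(c*t)) := h4
      _ ≤ B₀ := h5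
  -- uniform positive lower bound for r
  set T₀ : ℝ := max 0 (Real.log (2*Kc) / c) with hT₀def
  have hT₀0 : (0:ℝ) ≤ T₀ := le_max_left _ _
  have hhalf : ∀ t : ℝ, T₀ ≤ t → 1/2 ≤ r t := by
    intro t hT
    have ht0 : (0:ℝ) ≤ t := le_trans hT₀0 hT
    have h2Kc : (0:ℝ) < 2*Kc := by linarith
    have hlog : Real.log (2*Kc) ≤ c * t := by
      have h1 : Real.log (2*Kc) / c ≤ t := le_trans (le_max_right _ _) hT
      calc Real.log (2*Kc) = c * (Real.log (2*Kc) / c) := by field_simp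
        _ ≤ c * t := mul_le_mul_of_nonneg_left h1 hc0.le
    have h3 : exp (-(c*t)) ≤ (2*Kc)⁻¹ := by
      rw [show (2*Kc)⁻¹ = exp (-(Real.log (2*Kc))) by rw [exp_neg, exp_log h2Kc]]
      exact exp_le_exp.2 (by linarith)
    have h4 : Kc * exp (-(c*t)) ≤ 1/2 := by
      calc Kc * exp (-(c*t)) ≤ Kc * (2*Kc)⁻¹ := mul_le_mul_of_nonneg_left h3 hKc0.le
        _ = 1/2 := by field_simp
    have h5 := (hdecay t ht0).trans h4
    have h6 := (abs_le.1 h5).1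
    linarith
  obtain ⟨x₀, hx₀mem, hx₀min⟩ := isCompact_Icc.exists_isMinOn (nonempty_Icc.2 hT₀0)
    (hrc.mono (fun x hx => hx.1 : Icc (0:ℝ) T₀ ⊆ Ici 0))
  set ρ : ℝ := min (r x₀) (1/2) with hρdef
  have hρ0 : 0 < ρ := lt_min (hrpos x₀ hx₀mem.1) one_half_pos
  have hρ1 : ρ ≤ 1 := le_trans (min_le_right _ _) (by norm_num)
  have hρr : ∀ t ∈ Ici (0:ℝ), ρ ≤ r t := by
    intro t ht
    rcases le_total t T₀ with h | h
    · exact le_trans (min_le_left _ _) (isMinOn_iff.1 hx₀min t ⟨ht, h⟩)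
    · exact le_trans (min_le_right _ _) (hhalf t h)
  -- assemble the solution
  refine ⟨fun t => exp (A t), fun t => r t * exp (A t), exp B₀ * (M + ρ⁻¹), ?_, ?_, ?_, ?_⟩
  · positivity
  · intro t ht
    show HasDerivWithinAt (fun t => exp (A t)) (r t * exp (A t)) (Ici 0) t
    simpa [mul_comm] using (hA t ht).exp
  · intro t ht
    have h1 := (hrd t ht).fun_mul ((hA t ht).exp)
    refine h1.congr_deriv ?_
    simp only; ring
  · intro t ht
    obtain ⟨hlo, hhi⟩ := abs_le.1 (hAbound t ht)
    have hE1 : exp (t - B₀) ≤ exp (A t) := exp_le_exp.2 (by linarith)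
    have hE2 : exp (A t) ≤ exp (t + B₀) := exp_le_exp.2 (by linarith)
    have hEP := exp_pos B₀
    have hρinv : 0 < ρ⁻¹ := inv_pos.2 hρ0
    have hstep : exp B₀ ≤ exp B₀ * (M + ρ⁻¹) := by
      calc exp B₀ = exp B₀ * 1 := (mul_one _).symm
        _ ≤ exp B₀ * (M + ρ⁻¹) :=
          mul_le_mul_of_nonneg_left (by linarith) hEP.le
    have hCinv1 : (exp B₀ * (M + ρ⁻¹))⁻¹ ≤ exp (-B₀) := by
      apply inv_le_of_inv_le₀ (exp_pos (-B₀))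
      rw [exp_neg, inv_inv]
      exact hstep
    have hCinv2 : (exp B₀ * (M + ρ⁻¹))⁻¹ ≤ ρ * exp (-B₀) := by
      apply inv_le_of_inv_le₀ (by positivity)
      rw [mul_inv, exp_neg, inv_inv, mul_comm]
      exact mul_le_mul_of_nonneg_left (by linarith) hEP.le
    refine ⟨?_, ?_, ?_, ?_⟩
    · calc (exp B₀ * (M + ρ⁻¹))⁻¹ * exp t ≤ exp (-B₀) * exp t :=
          mul_le_mul_of_nonneg_right hCinv1 (exp_pos t).le
        _ = exp (t - B₀) := by rw [← exp_add]; congr 1; ring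
        _ ≤ exp (A t) := hE1
    · calc exp (A t) ≤ exp (t + B₀) := hE2
        _ = exp B₀ * exp t := by rw [← exp_add]; congr 1; ring
        _ ≤ exp B₀ * (M + ρ⁻¹) * exp t :=
          mul_le_mul_of_nonneg_right hstep (exp_pos t).le
    · calc (exp B₀ * (M + ρ⁻¹))⁻¹ * exp t ≤ (ρ * exp (-B₀)) * exp t :=
          mul_le_mul_of_nonneg_right hCinv2 (exp_pos t).le
        _ = ρ * exp (t - B₀) := by rw [mul_assoc, ← exp_add]; congr 2; ring
        _ ≤ ρ * exp (A t) := mul_le_mul_of_nonneg_left hE1 hρ0.le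
        _ ≤ r t * exp (A t) := mul_le_mul_of_nonneg_right (hρr t ht) (exp_pos _).le
    · calc r t * exp (A t) ≤ M * exp (t + B₀) :=
          mul_le_mul (hrM t ht).le hE2 (exp_pos _).le hM0.le
        _ = M * exp B₀ * exp t := by rw [mul_assoc, ← exp_add]; congr 2; ring
        _ ≤ exp B₀ * (M + ρ⁻¹) * exp t := by
          apply mul_le_mul_of_nonneg_right _ (exp_pos t).le
          rw [mul_comm M (exp B₀)]
          exact mul_le_mul_of_nonneg_left (by linarith) hEP.le
end

section
/- Let P, Q be continuous functions on [0,∞) with 1 + Q > 0 and suppose there exist constants d, C₀ > 0 with |P(t)|, |Q(t)| ≤ C₀ e^{-dt} for all t. Then there exists a solution u₂ of u'' = P u' + (1+Q)u and a constant C > 0 such that C⁻¹ e^{-t} ≤ u₂(t) ≤ C e^{-t} and C⁻¹ e^{-t} ≤ -u₂'(t) ≤ C e^{-t} for all t ≥ 0. -/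
open Set Real MeasureTheory Filter Topology

/-- Integrability on `Ioi τ` (τ ≥ 0) of a continuous function with exponential decay on `Ici 0`. -/
lemma aux_integrableOn {f : ℝ → ℝ} (hf : Continuous f) {B d : ℝ} (hd : 0 < d)
    (hb : ∀ s, 0 ≤ s → |f s| ≤ B * exp (-d * s)) {τ : ℝ} (hτ : 0 ≤ τ) :
    IntegrableOn f (Ioi τ) := by
  refine Integrable.mono' ((exp_neg_integrableOn_Ioi τ hd).const_mul B) (hf.aestronglyMeasurable.restrict) ?_
  filter_upwards [ae_restrict_mem measurableSet_Ioi] with s hs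
  exact hb s (le_of_lt (lt_of_le_of_lt hτ hs))

lemma aux_abs_integral_le {f g : ℝ → ℝ} {τ : ℝ} (hf : IntegrableOn f (Ioi τ))
    (hg : IntegrableOn g (Ioi τ)) (h : ∀ s ∈ Ioi τ, |f s| ≤ g s) :
    |∫ s in Ioi τ, f s| ≤ ∫ s in Ioi τ, g s := by
  calc |∫ s in Ioi τ, f s| ≤ ∫ s in Ioi τ, |f s| := by
        simpa [Real.norm_eq_abs] using norm_integral_le_integral_norm (μ := volume.restrict (Ioi τ)) f
    _ ≤ ∫ s in Ioi τ, g s :=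
        setIntegral_mono_on hf.abs hg measurableSet_Ioi h

lemma aux_integral_exp_Ioi {a : ℝ} (ha : 0 < a) (τ : ℝ) :
    ∫ s in Ioi τ, exp (-a * s) = exp (-a * τ) / a := by
  have h : ∀ x ∈ Ici τ, HasDerivAt (fun x => -exp (-a * x) / a) (exp (-a * x)) x := by
    intro x _
    have : HasDerivAt (fun x => -a * x) (-a) x := by
      simpa using (hasDerivAt_id x).const_mul (-a)
    have := (this.exp).fun_neg.div_const a
    refine this.congr_deriv ?_
    field_simp
  have ht : Tendsto (fun x => -exp (-a * x) / a) atTop (𝓝 0) := by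
    have : Tendsto (fun x : ℝ => -a * x) atTop atBot := tendsto_id.const_mul_atTop_of_neg (by linarith)
    have := (tendsto_exp_atBot.comp this).neg.div_const a
    simpa using this
  have := integral_Ioi_of_hasDerivAt_of_tendsto' h (exp_neg_integrableOn_Ioi τ ha) ht
  rw [this]; field_simp; ring

/-- Splitting the improper integral at `0 ≤ t`. -/
lemma aux_split {f : ℝ → ℝ} (hf0 : IntegrableOn f (Ioi 0)) {t : ℝ} (ht : 0 ≤ t)
    (hloc : IntegrableOn f (Ioc 0 t)) :
    ∫ s in Ioi t, f s = (∫ s in Ioi 0, f s) - ∫ s in (0:ℝ)..t, f s := by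
  have hIoi : IntegrableOn f (Ioi t) := hf0.mono_set (Ioi_subset_Ioi ht)
  have hu : Ioc 0 t ∪ Ioi t = Ioi (0:ℝ) := Ioc_union_Ioi_eq_Ioi ht
  have hdisj : Disjoint (Ioc 0 t) (Ioi t) := Ioc_disjoint_Ioi le_rfl
  have := MeasureTheory.setIntegral_union hdisj measurableSet_Ioi hloc hIoi
  rw [hu] at this
  rw [intervalIntegral.integral_of_le ht]
  linarith [this]

open Set Real MeasureTheory Filter Topology

noncomputable def odeJ (f : ℝ → ℝ) (t : ℝ) : ℝ := ∫ s in Ioi (t ⊔ 0), f s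

noncomputable def odeF (p q : ℝ → ℝ) (w : ℝ → ℝ × ℝ) (s : ℝ) : ℝ :=
  (q s - p s) * (1 + (w s).1) + p s * (w s).2

noncomputable def odePhi (p q : ℝ → ℝ) (w : ℝ → ℝ × ℝ) (t : ℝ) : ℝ × ℝ :=
  (odeJ (odeF p q w) t / 2
      - exp (2 * (t ⊔ 0)) * odeJ (fun s => exp (-2 * s) * odeF p q w s) t / 2,
   -(exp (2 * (t ⊔ 0)) * odeJ (fun s => exp (-2 * s) * odeF p q w s) t))

section core

variable {d B : ℝ}

/-- Core estimate for the two components of the operator. -/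
lemma phi_comp_le {F : ℝ → ℝ} (hF : Continuous F) (ha : 0 < d) (hB : 0 ≤ B)
    (hFb : ∀ s, 0 ≤ s → |F s| ≤ B * exp (-d * s)) (t : ℝ) :
    |odeJ F t| ≤ B / d * exp (-d * (t ⊔ 0)) ∧
    |exp (2 * (t ⊔ 0)) * odeJ (fun s => exp (-2 * s) * F s) t| ≤ B / d * exp (-d * (t ⊔ 0)) := by
  set τ := t ⊔ 0 with hτdef
  have hτ : 0 ≤ τ := le_max_right _ _
  have hFi : IntegrableOn F (Ioi τ) := aux_integrableOn hF ha hFb hτ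
  have hGc : Continuous fun s => exp (-2 * s) * F s := by continuity
  have hGb : ∀ s, 0 ≤ s → |exp (-2 * s) * F s| ≤ B * exp (-d * s) := by
    intro s hs
    rw [abs_mul, abs_of_pos (exp_pos _)]
    calc exp (-2 * s) * |F s| ≤ 1 * |F s| := by
          apply mul_le_mul_of_nonneg_right _ (abs_nonneg _)
          rw [← Real.exp_zero]
          exact exp_le_exp.2 (by nlinarith)
      _ = |F s| := one_mul _
      _ ≤ B * exp (-d * s) := hFb s hs
  have hGi : IntegrableOn (fun s => exp (-2 * s) * F s) (Ioi τ) := aux_integrableOn hGc ha hGb hτ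
  have hρi : IntegrableOn (fun s => B * exp (-d * s)) (Ioi τ) :=
    (exp_neg_integrableOn_Ioi τ ha).const_mul B
  have hint : ∫ s in Ioi τ, B * exp (-d * s) = B * (exp (-d * τ) / d) := by
    rw [MeasureTheory.integral_const_mul, aux_integral_exp_Ioi ha]
  have key1 : |odeJ F t| ≤ B * (exp (-d * τ) / d) := by
    rw [odeJ, ← hτdef, ← hint]
    exact aux_abs_integral_le hFi hρi fun s hs => hFb s (le_of_lt (lt_of_le_of_lt hτ hs))
  have key2 : |odeJ (fun s => exp (-2 * s) * F s) t| ≤ exp (-2 * τ) * (B * (exp (-d * τ) / d)) := by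
    have hρi2 : IntegrableOn (fun s => exp (-2 * τ) * (B * exp (-d * s))) (Ioi τ) :=
      hρi.const_mul _
    have hb2 : ∀ s ∈ Ioi τ, |exp (-2 * s) * F s| ≤ exp (-2 * τ) * (B * exp (-d * s)) := by
      intro s hs
      have hs0 : (0:ℝ) ≤ s := le_of_lt (lt_of_le_of_lt hτ hs)
      rw [abs_mul, abs_of_pos (exp_pos _)]
      have h1 : exp (-2 * s) ≤ exp (-2 * τ) := exp_le_exp.2 (by nlinarith [le_of_lt (show τ < s from hs)])
      have h2 : |F s| ≤ B * exp (-d * s) := hFb s hs0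
      nlinarith [abs_nonneg (F s), exp_pos (-2*τ), exp_pos (-2*s), mul_le_mul h1 h2 (abs_nonneg _) (exp_pos (-2*τ)).le]
    have := aux_abs_integral_le hGi hρi2 hb2
    calc |odeJ (fun s => exp (-2 * s) * F s) t| ≤ ∫ s in Ioi τ, exp (-2*τ) * (B * exp (-d * s)) := by
          rw [odeJ, ← hτdef]; exact this
      _ = exp (-2*τ) * (B * (exp (-d * τ)/d)) := by
          rw [MeasureTheory.integral_const_mul, hint]
  constructor
  · calc |odeJ F t| ≤ B * (exp (-d * τ) / d) := key1
      _ = B / d * exp (-d * τ) := by ring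
  · rw [abs_mul, abs_of_pos (exp_pos _)]
    calc exp (2*τ) * |odeJ (fun s => exp (-2 * s) * F s) t|
        ≤ exp (2*τ) * (exp (-2 * τ) * (B * (exp (-d * τ) / d))) :=
          mul_le_mul_of_nonneg_left key2 (exp_pos _).le
      _ = (exp (2*τ) * exp (-2*τ)) * (B * (exp (-d * τ) / d)) := by ring
      _ = B / d * exp (-d * τ) := by
          rw [← Real.exp_add]; norm_num; ring
section ops

variable {p q : ℝ → ℝ} {d c : ℝ}

lemma odeF_sub (p q : ℝ → ℝ) (w w' : ℝ → ℝ × ℝ) (s : ℝ) :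
    odeF p q w s - odeF p q w' s
      = (q s - p s) * ((w s).1 - (w' s).1) + p s * ((w s).2 - (w' s).2) := by
  simp only [odeF]; ring

lemma odeF_cont (hp : Continuous p) (hq : Continuous q) {w : ℝ → ℝ × ℝ} (hw : Continuous w) :
    Continuous (odeF p q w) := by
  apply Continuous.add
  · exact (hq.sub hp).mul (continuous_const.add ((continuous_fst.comp hw)))
  · exact hp.mul (continuous_snd.comp hw)

lemma odeF_bound (hd : 0 < d) (hc : 0 < c)
    (hpb : ∀ s, 0 ≤ s → |p s| ≤ c * Real.exp (-d * s))
    (hqb : ∀ s, 0 ≤ s → |q s| ≤ c * Real.exp (-d * s))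
    {w : ℝ → ℝ × ℝ} {N : ℝ} (hN : 0 ≤ N) (hwN : ∀ s, ‖w s‖ ≤ N) :
    ∀ s, 0 ≤ s → |odeF p q w s| ≤ 3 * c * (1 + N) * Real.exp (-d * s) := by
  intro s hs
  have h1 : |(w s).1| ≤ N := le_trans (by simpa using norm_fst_le (w s)) (hwN s)
  have h2 : |(w s).2| ≤ N := le_trans (by simpa using norm_snd_le (w s)) (hwN s)
  have hps := hpb s hs
  have hqs := hqb s hs
  have he : (0:ℝ) < Real.exp (-d * s) := Real.exp_pos _
  calc |odeF p q w s| ≤ |q s - p s| * |1 + (w s).1| + |p s| * |(w s).2| := by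
        rw [odeF]; exact (abs_add_le _ _).trans (by rw [abs_mul, abs_mul])
    _ ≤ (2 * c * Real.exp (-d * s)) * (1 + N) + (c * Real.exp (-d * s)) * N := by
        apply add_le_add
        · apply mul_le_mul _ _ (abs_nonneg _) (by positivity)
          · calc |q s - p s| ≤ |q s| + |p s| := abs_sub _ _
              _ ≤ 2 * c * Real.exp (-d * s) := by linarith
          · calc |1 + (w s).1| ≤ 1 + |(w s).1| := (abs_add_le _ _).trans (by simp)
              _ ≤ 1 + N := by linarith
        · exact mul_le_mul hps h2 (abs_nonneg _) (by positivity)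
    _ ≤ 3 * c * (1 + N) * Real.exp (-d * s) := by nlinarith
  
lemma odeF_lip (hd : 0 < d) (hc : 0 < c)
    (hpb : ∀ s, 0 ≤ s → |p s| ≤ c * Real.exp (-d * s))
    (hqb : ∀ s, 0 ≤ s → |q s| ≤ c * Real.exp (-d * s))
    (w w' : ℝ → ℝ × ℝ) :
    ∀ s, 0 ≤ s → |odeF p q w s - odeF p q w' s|
      ≤ 3 * c * Real.exp (-d * s) * dist (w s) (w' s) := by
  intro s hs
  have h1 : |(w s).1 - (w' s).1| ≤ dist (w s) (w' s) := by
    rw [Prod.dist_eq]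
    exact le_trans (by rw [Real.dist_eq]) (le_max_left _ _)
  have h2 : |(w s).2 - (w' s).2| ≤ dist (w s) (w' s) := by
    rw [Prod.dist_eq]
    exact le_trans (by rw [Real.dist_eq]) (le_max_right _ _)
  have hps := hpb s hs
  have hqs := hqb s hs
  have hdist : (0:ℝ) ≤ dist (w s) (w' s) := dist_nonneg
  have he : (0:ℝ) < Real.exp (-d * s) := Real.exp_pos _
  rw [odeF_sub]
  calc |(q s - p s) * ((w s).1 - (w' s).1) + p s * ((w s).2 - (w' s).2)|
      ≤ |q s - p s| * |(w s).1 - (w' s).1| + |p s| * |(w s).2 - (w' s).2| :=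
        (abs_add_le _ _).trans (by rw [abs_mul, abs_mul])
    _ ≤ (2 * c * Real.exp (-d * s)) * dist (w s) (w' s)
        + (c * Real.exp (-d * s)) * dist (w s) (w' s) := by
        apply add_le_add
        · apply mul_le_mul _ h1 (abs_nonneg _) (by positivity)
          calc |q s - p s| ≤ |q s| + |p s| := abs_sub _ _
            _ ≤ 2 * c * Real.exp (-d * s) := by linarith
        · exact mul_le_mul hps h2 (abs_nonneg _) (by positivity)
    _ = 3 * c * Real.exp (-d * s) * dist (w s) (w' s) := by ring

end ops
section ops2

open Set Real MeasureTheory Filter Topology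

variable {p q : ℝ → ℝ} {d c : ℝ}

lemma primitive_continuous {f : ℝ → ℝ} (hf : Continuous f) :
    Continuous fun t => ∫ s in (0:ℝ)..t, f s := by
  rw [continuous_iff_continuousAt]
  exact fun b => (hf.integral_hasStrictDerivAt 0 b).hasDerivAt.continuousAt

lemma odeJ_eq {f : ℝ → ℝ} (hf : Continuous f) (hi : IntegrableOn f (Ioi 0)) (t : ℝ) :
    odeJ f t = (∫ s in Ioi 0, f s) - ∫ s in (0:ℝ)..(t ⊔ 0), f s :=
  aux_split hi (le_max_right t 0) (hf.integrableOn_Ioc)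

lemma odeJ_cont {f : ℝ → ℝ} (hf : Continuous f) (hi : IntegrableOn f (Ioi 0)) :
    Continuous (odeJ f) := by
  have : (odeJ f) = fun t => (∫ s in Ioi 0, f s) - ∫ s in (0:ℝ)..(t ⊔ 0), f s :=
    funext (odeJ_eq hf hi)
  rw [this]
  exact continuous_const.sub ((primitive_continuous hf).comp (continuous_id.max continuous_const))

lemma odePhi_cont (hp : Continuous p) (hq : Continuous q) (hd : 0 < d) (hc : 0 < c)
    (hpb : ∀ s, 0 ≤ s → |p s| ≤ c * exp (-d * s))
    (hqb : ∀ s, 0 ≤ s → |q s| ≤ c * exp (-d * s))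
    {w : ℝ → ℝ × ℝ} (hw : Continuous w) {N : ℝ} (hN : 0 ≤ N) (hwN : ∀ s, ‖w s‖ ≤ N) :
    Continuous (odePhi p q w) := by
  have hFc : Continuous (odeF p q w) := odeF_cont hp hq hw
  have hFb := odeF_bound hd hc hpb hqb hN hwN
  have hFi : IntegrableOn (odeF p q w) (Ioi 0) := aux_integrableOn hFc hd hFb le_rfl
  have hGc : Continuous fun s => exp (-2 * s) * odeF p q w s := by continuity
  have hGb : ∀ s, 0 ≤ s → |exp (-2 * s) * odeF p q w s| ≤ 3 * c * (1 + N) * exp (-d * s) := by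
    intro s hs
    rw [abs_mul, abs_of_pos (exp_pos _)]
    calc exp (-2 * s) * |odeF p q w s| ≤ 1 * |odeF p q w s| := by
          apply mul_le_mul_of_nonneg_right _ (abs_nonneg _)
          rw [← Real.exp_zero]; exact exp_le_exp.2 (by nlinarith)
      _ ≤ 3 * c * (1 + N) * exp (-d * s) := by rw [one_mul]; exact hFb s hs
  have hGi : IntegrableOn (fun s => exp (-2 * s) * odeF p q w s) (Ioi 0) :=
    aux_integrableOn hGc hd hGb le_rfl
  have hJc := odeJ_cont hFc hFi
  have hIc := odeJ_cont hGc hGi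
  have hec : Continuous fun t : ℝ => exp (2 * (t ⊔ 0)) := by continuity
  exact Continuous.prodMk
    ((hJc.div_const 2).sub ((hec.mul hIc).div_const 2))
    ((hec.mul hIc).neg)

end ops2
section ops3

open Set Real MeasureTheory Filter Topology

variable {p q : ℝ → ℝ} {d c : ℝ}

/-- Norm bound for the operator, with exponential decay. -/
lemma odePhi_norm_le (hp : Continuous p) (hq : Continuous q) (hd : 0 < d)
    {w : ℝ → ℝ × ℝ} (hw : Continuous w) {B : ℝ} (hB : 0 ≤ B)
    (hFb : ∀ s, 0 ≤ s → |odeF p q w s| ≤ B * exp (-d * s)) (t : ℝ) :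
    ‖odePhi p q w t‖ ≤ B / d * exp (-d * (t ⊔ 0)) := by
  have hFc : Continuous (odeF p q w) := odeF_cont hp hq hw
  obtain ⟨k1, k2⟩ := phi_comp_le hFc hd hB hFb t
  rw [odePhi, Prod.norm_def]
  apply max_le
  · rw [Real.norm_eq_abs]
    calc |odeJ (odeF p q w) t / 2
          - exp (2 * (t ⊔ 0)) * odeJ (fun s => exp (-2 * s) * odeF p q w s) t / 2|
        ≤ |odeJ (odeF p q w) t| / 2
          + |exp (2 * (t ⊔ 0)) * odeJ (fun s => exp (-2 * s) * odeF p q w s) t| / 2 := by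
          have := abs_sub (odeJ (odeF p q w) t / 2)
            (exp (2 * (t ⊔ 0)) * odeJ (fun s => exp (-2 * s) * odeF p q w s) t / 2)
          calc _ ≤ _ := this
            _ = _ := by rw [abs_div, abs_div]; norm_num
      _ ≤ B / d * exp (-d * (t ⊔ 0)) := by linarith
  · rw [Real.norm_eq_abs, abs_neg]
    exact k2

/-- Distance (Lipschitz-type) bound for the operator. -/
lemma odePhi_dist_le (hp : Continuous p) (hq : Continuous q) (hd : 0 < d) (hc : 0 < c)
    (hpb : ∀ s, 0 ≤ s → |p s| ≤ c * exp (-d * s))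
    (hqb : ∀ s, 0 ≤ s → |q s| ≤ c * exp (-d * s))
    {w w' : ℝ → ℝ × ℝ} (hw : Continuous w) (hw' : Continuous w')
    {N N' : ℝ} (hN : 0 ≤ N) (hwN : ∀ s, ‖w s‖ ≤ N) (hN' : 0 ≤ N') (hwN' : ∀ s, ‖w' s‖ ≤ N')
    {K a : ℝ} (ha : 0 < a) (hK : 0 ≤ K)
    (hΔ : ∀ s, 0 ≤ s → |odeF p q w s - odeF p q w' s| ≤ K * exp (-a * s)) (t : ℝ) :
    dist (odePhi p q w t) (odePhi p q w' t) ≤ K / a * exp (-a * (t ⊔ 0)) := by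
  have hτ : (0:ℝ) ≤ t ⊔ 0 := le_max_right _ _
  set Δ : ℝ → ℝ := fun s => odeF p q w s - odeF p q w' s with hΔdef
  have hΔc : Continuous Δ := (odeF_cont hp hq hw).sub (odeF_cont hp hq hw')
  -- integrability of the two F's on Ioi τ
  have hF1b := odeF_bound hd hc hpb hqb hN hwN
  have hF2b := odeF_bound hd hc hpb hqb hN' hwN'
  have hF1i : IntegrableOn (odeF p q w) (Ioi (t ⊔ 0)) :=
    aux_integrableOn (odeF_cont hp hq hw) hd hF1b hτ
  have hF2i : IntegrableOn (odeF p q w') (Ioi (t ⊔ 0)) :=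
    aux_integrableOn (odeF_cont hp hq hw') hd hF2b hτ
  have hexpb : ∀ (F : ℝ → ℝ) (B : ℝ), (∀ s, 0 ≤ s → |F s| ≤ B * exp (-d * s)) →
      ∀ s, 0 ≤ s → |exp (-2 * s) * F s| ≤ B * exp (-d * s) := by
    intro F B hb s hs
    rw [abs_mul, abs_of_pos (exp_pos _)]
    calc exp (-2 * s) * |F s| ≤ 1 * |F s| := by
          apply mul_le_mul_of_nonneg_right _ (abs_nonneg _)
          rw [← Real.exp_zero]; exact exp_le_exp.2 (by nlinarith)
      _ ≤ B * exp (-d * s) := by rw [one_mul]; exact hb s hs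
  have hG1i : IntegrableOn (fun s => exp (-2 * s) * odeF p q w s) (Ioi (t ⊔ 0)) :=
    aux_integrableOn ((Real.continuous_exp.comp (continuous_const.mul continuous_id) : Continuous fun s : ℝ => exp (-2 * s)).mul (odeF_cont hp hq hw)) hd (hexpb _ _ hF1b) hτ
  have hG2i : IntegrableOn (fun s => exp (-2 * s) * odeF p q w' s) (Ioi (t ⊔ 0)) :=
    aux_integrableOn ((Real.continuous_exp.comp (continuous_const.mul continuous_id) : Continuous fun s : ℝ => exp (-2 * s)).mul (odeF_cont hp hq hw')) hd (hexpb _ _ hF2b) hτ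
  -- difference identities
  have hJsub : odeJ (odeF p q w) t - odeJ (odeF p q w') t = odeJ Δ t := by
    rw [odeJ, odeJ, odeJ, ← MeasureTheory.integral_sub hF1i hF2i]
  have hIsub : odeJ (fun s => exp (-2 * s) * odeF p q w s) t
      - odeJ (fun s => exp (-2 * s) * odeF p q w' s) t
      = odeJ (fun s => exp (-2 * s) * Δ s) t := by
    rw [odeJ, odeJ, odeJ, ← MeasureTheory.integral_sub hG1i hG2i]
    congr 1; funext s; simp [hΔdef]; ring
  obtain ⟨k1, k2⟩ := phi_comp_le hΔc ha hK hΔ t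
  rw [Prod.dist_eq]
  apply max_le
  · rw [Real.dist_eq]
    have heq : (odePhi p q w t).1 - (odePhi p q w' t).1
        = odeJ Δ t / 2 - exp (2 * (t ⊔ 0)) * odeJ (fun s => exp (-2 * s) * Δ s) t / 2 := by
      simp only [odePhi]
      rw [← hJsub, ← hIsub]; ring
    rw [heq]
    calc |odeJ Δ t / 2 - exp (2 * (t ⊔ 0)) * odeJ (fun s => exp (-2 * s) * Δ s) t / 2|
        ≤ |odeJ Δ t| / 2 + |exp (2 * (t ⊔ 0)) * odeJ (fun s => exp (-2 * s) * Δ s) t| / 2 := by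
          calc _ ≤ _ := abs_sub _ _
            _ = _ := by rw [abs_div, abs_div]; norm_num
      _ ≤ K / a * exp (-a * (t ⊔ 0)) := by linarith
  · rw [Real.dist_eq]
    have heq : (odePhi p q w t).2 - (odePhi p q w' t).2
        = -(exp (2 * (t ⊔ 0)) * odeJ (fun s => exp (-2 * s) * Δ s) t) := by
      simp only [odePhi]
      rw [← hIsub]; ring
    rw [heq, abs_neg]
    exact k2

end ops3
section fixedpt

open Set Real MeasureTheory Filter Topology BoundedContinuousFunction

lemma exists_phi_fixed_point {p q : ℝ → ℝ} {d c : ℝ}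
    (hp : Continuous p) (hq : Continuous q) (hd : 0 < d) (hc : 0 < c)
    (hpb : ∀ s, 0 ≤ s → |p s| ≤ c * exp (-d * s))
    (hqb : ∀ s, 0 ≤ s → |q s| ≤ c * exp (-d * s)) :
    ∃ w : ℝ →ᵇ (ℝ × ℝ), ∀ t, odePhi p q ⇑w t = w t := by
  classical
  -- the operator on bounded continuous functions
  have hbdd : ∀ w : ℝ →ᵇ (ℝ × ℝ), ∀ x, ‖odePhi p q ⇑w x‖ ≤ 3 * c * (1 + ‖w‖) / d := by
    intro w x
    have hFb := odeF_bound hd hc hpb hqb (norm_nonneg w) w.norm_coe_le_norm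
    have := odePhi_norm_le hp hq hd w.continuous (by positivity) hFb x
    calc ‖odePhi p q ⇑w x‖ ≤ 3 * c * (1 + ‖w‖) / d * exp (-d * (x ⊔ 0)) := this
      _ ≤ 3 * c * (1 + ‖w‖) / d * 1 := by
          apply mul_le_mul_of_nonneg_left _ (by positivity)
          rw [← Real.exp_zero]
          exact exp_le_exp.2 (by nlinarith [le_max_right x (0:ℝ)])
      _ = 3 * c * (1 + ‖w‖) / d := mul_one _
  set Φ : (ℝ →ᵇ (ℝ × ℝ)) → (ℝ →ᵇ (ℝ × ℝ)) := fun w =>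
    BoundedContinuousFunction.ofNormedAddCommGroup (odePhi p q ⇑w)
      (odePhi_cont hp hq hd hc hpb hqb w.continuous (norm_nonneg w) w.norm_coe_le_norm)
      (3 * c * (1 + ‖w‖) / d) (hbdd w) with hΦdef
  have hΦcoe : ∀ (w : ℝ →ᵇ (ℝ × ℝ)) (t : ℝ), (Φ w) t = odePhi p q ⇑w t := fun w t => rfl
  -- iterated distance estimate
  have key : ∀ (n : ℕ) (w w' : ℝ →ᵇ (ℝ × ℝ)) (t : ℝ),
      dist ((Φ^[n] w) t) ((Φ^[n] w') t)
        ≤ (3 * c / d) ^ n * exp (-(d * n) * (t ⊔ 0)) / n.factorial * dist w w' := by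
    intro n
    induction n with
    | zero =>
      intro w w' t
      simpa using BoundedContinuousFunction.dist_coe_le_dist t
    | succ n ih =>
      intro w w' t
      rw [Function.iterate_succ_apply', Function.iterate_succ_apply']
      set W := Φ^[n] w
      set W' := Φ^[n] w'
      set δ := dist w w' with hδdef
      have hδ0 : 0 ≤ δ := dist_nonneg
      have hΔ : ∀ s, 0 ≤ s → |odeF p q ⇑W s - odeF p q ⇑W' s|
          ≤ (3 * c * ((3 * c / d) ^ n / n.factorial * δ)) * exp (-(d * (n + 1)) * s) := by
        intro s hs
        have hlip := odeF_lip hd hc hpb hqb ⇑W ⇑W' s hs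
        have hih := ih w w' s
        rw [max_eq_left hs] at hih
        calc |odeF p q ⇑W s - odeF p q ⇑W' s|
            ≤ 3 * c * exp (-d * s) * dist (W s) (W' s) := hlip
          _ ≤ 3 * c * exp (-d * s) * ((3 * c / d) ^ n * exp (-(d * n) * s) / n.factorial * δ) := by
              apply mul_le_mul_of_nonneg_left hih (by positivity)
          _ = (3 * c * ((3 * c / d) ^ n / n.factorial * δ)) * exp (-(d * (n + 1)) * s) := by
              rw [show (-(d * ((n : ℝ) + 1)) * s) = (-d * s) + (-(d * (n:ℝ)) * s) by ring,
                Real.exp_add]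
              ring
      have ha : (0:ℝ) < d * (n + 1) := by positivity
      have hres := odePhi_dist_le hp hq hd hc hpb hqb W.continuous W'.continuous
        (norm_nonneg W) W.norm_coe_le_norm (norm_nonneg W') W'.norm_coe_le_norm
        ha (by positivity) hΔ t
      rw [hΦcoe, hΦcoe]
      calc dist (odePhi p q ⇑W t) (odePhi p q ⇑W' t)
          ≤ (3 * c * ((3 * c / d) ^ n / n.factorial * δ)) / (d * (n + 1))
              * exp (-(d * (n + 1)) * (t ⊔ 0)) := hres
        _ = (3 * c / d) ^ (n + 1) * exp (-(d * ↑(n + 1)) * (t ⊔ 0)) / (n + 1).factorial * δ := by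
            rw [Nat.factorial_succ]
            push_cast
            have hdne : d ≠ 0 := ne_of_gt hd
            have hfacne : (n.factorial : ℝ) ≠ 0 := Nat.cast_ne_zero.2 n.factorial_ne_zero
            rw [pow_succ]
            field_simp
            try ring
  -- Lipschitz constants for the iterates
  have lip : ∀ n : ℕ, LipschitzWith ((3 * c / d) ^ n / n.factorial).toNNReal Φ^[n] := by
    intro n
    apply LipschitzWith.of_dist_le_mul
    intro w w'
    have hnn : (0:ℝ) ≤ (3 * c / d) ^ n / n.factorial := by positivity
    rw [Real.coe_toNNReal _ hnn]
    rw [BoundedContinuousFunction.dist_le (by positivity)]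
    intro t
    calc dist ((Φ^[n] w) t) ((Φ^[n] w') t)
        ≤ (3 * c / d) ^ n * exp (-(d * n) * (t ⊔ 0)) / n.factorial * dist w w' := key n w w' t
      _ ≤ (3 * c / d) ^ n * 1 / n.factorial * dist w w' := by
          have he : exp (-(d * n) * (t ⊔ 0)) ≤ 1 := by
            rw [← Real.exp_zero]
            apply exp_le_exp.2
            nlinarith [mul_nonneg (mul_nonneg hd.le (Nat.cast_nonneg n)) (le_max_right t (0:ℝ))]
          gcongr
      _ = (3 * c / d) ^ n / n.factorial * dist w w' := by rw [mul_one]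
  -- pick an iterate that is a contraction
  have htend := FloorSemiring.tendsto_pow_div_factorial_atTop (3 * c / d)
  have hev : ∀ᶠ n : ℕ in atTop, (3 * c / d) ^ n / n.factorial < 1 :=
    htend.eventually_lt_const one_pos
  obtain ⟨n₀, hn₀⟩ := hev.exists
  have hnn : (0:ℝ) ≤ (3 * c / d) ^ n₀ / n₀.factorial := by positivity
  have hK1 : ((3 * c / d) ^ n₀ / n₀.factorial).toNNReal < 1 := by
    rw [← NNReal.coe_lt_coe, Real.coe_toNNReal _ hnn, NNReal.coe_one]
    exact hn₀
  have hcontr : ContractingWith ((3 * c / d) ^ n₀ / n₀.factorial).toNNReal Φ^[n₀] :=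
    ⟨hK1, lip n₀⟩
  have hfix : Function.IsFixedPt Φ (hcontr.fixedPoint Φ^[n₀]) :=
    hcontr.isFixedPt_fixedPoint_iterate
  refine ⟨hcontr.fixedPoint Φ^[n₀], fun t => ?_⟩
  conv_rhs => rw [← hfix]
  exact (hΦcoe _ t).symm

end fixedpt
section solutionpair

open Set Real MeasureTheory Filter Topology

lemma exists_hg {p q : ℝ → ℝ} {d c : ℝ}
    (hp : Continuous p) (hq : Continuous q) (hd : 0 < d) (hc : 0 < c)
    (hpb : ∀ s, 0 ≤ s → |p s| ≤ c * exp (-d * s))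
    (hqb : ∀ s, 0 ≤ s → |q s| ≤ c * exp (-d * s)) :
    ∃ (h g : ℝ → ℝ) (B : ℝ), 0 < B ∧ Continuous h ∧ Continuous g ∧
      (∀ t, HasDerivAt h (g t) t) ∧
      (∀ t, 0 ≤ t →
        HasDerivAt g (2 * g t + ((q t - p t) * (1 + h t) + p t * g t)) t) ∧
      (∀ t, 0 ≤ t → |h t| ≤ B * exp (-d * t)) ∧
      (∀ t, 0 ≤ t → |g t| ≤ B * exp (-d * t)) := by
  obtain ⟨w, hw⟩ := exists_phi_fixed_point hp hq hd hc hpb hqb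
  set F : ℝ → ℝ := odeF p q ⇑w with hFdef
  have hFc : Continuous F := odeF_cont hp hq w.continuous
  set B₀ : ℝ := 3 * c * (1 + ‖w‖) with hB₀def
  have hB₀ : 0 < B₀ := by positivity
  have hFb : ∀ s, 0 ≤ s → |F s| ≤ B₀ * exp (-d * s) :=
    odeF_bound hd hc hpb hqb (norm_nonneg w) w.norm_coe_le_norm
  set G : ℝ → ℝ := fun s => exp (-2 * s) * F s with hGdef
  have hGc : Continuous G := (Real.continuous_exp.comp (continuous_const.mul continuous_id)).mul hFc
  have hGb : ∀ s, 0 ≤ s → |G s| ≤ B₀ * exp (-d * s) := by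
    intro s hs
    rw [hGdef]
    simp only
    rw [abs_mul, abs_of_pos (exp_pos _)]
    calc exp (-2 * s) * |F s| ≤ 1 * |F s| := by
          apply mul_le_mul_of_nonneg_right _ (abs_nonneg _)
          rw [← Real.exp_zero]; exact exp_le_exp.2 (by nlinarith)
      _ ≤ B₀ * exp (-d * s) := by rw [one_mul]; exact hFb s hs
  have hFi : IntegrableOn F (Ioi 0) := aux_integrableOn hFc hd hFb le_rfl
  have hGi : IntegrableOn G (Ioi 0) := aux_integrableOn hGc hd hGb le_rfl
  set A1 : ℝ := ∫ s in Ioi 0, F s with hA1def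
  set A2 : ℝ := ∫ s in Ioi 0, G s with hA2def
  set h : ℝ → ℝ := fun t => (A1 - ∫ s in (0:ℝ)..t, F s) / 2
      - exp (2 * t) * (A2 - ∫ s in (0:ℝ)..t, G s) / 2 with hhdef
  set g : ℝ → ℝ := fun t => -(exp (2 * t) * (A2 - ∫ s in (0:ℝ)..t, G s)) with hgdef
  -- identification with the fixed point on `Ici 0`
  have hEG : ∀ t : ℝ, exp (2 * t) * G t = F t := by
    intro t
    rw [hGdef]
    simp only
    rw [← mul_assoc, ← Real.exp_add]
    norm_num
  have hid : ∀ t : ℝ, 0 ≤ t → (w t).1 = h t ∧ (w t).2 = g t := by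
    intro t ht
    have hmax : t ⊔ 0 = t := max_eq_left ht
    have h1 : odeJ F t = A1 - ∫ s in (0:ℝ)..t, F s := by
      rw [odeJ_eq hFc hFi t, hmax]
    have h2 : odeJ G t = A2 - ∫ s in (0:ℝ)..t, G s := by
      rw [odeJ_eq hGc hGi t, hmax]
    have := (hw t).symm
    rw [this]
    constructor
    · show (odePhi p q (⇑w) t).1 = h t
      rw [odePhi]
      simp only
      rw [hmax, h1, ← hGdef, h2]
    · show (odePhi p q (⇑w) t).2 = g t
      rw [odePhi]
      simp only
      rw [hmax, ← hGdef, h2]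
  -- derivatives
  have hFprim : ∀ b : ℝ, HasDerivAt (fun u => ∫ s in (0:ℝ)..u, F s) (F b) b :=
    fun b => (hFc.integral_hasStrictDerivAt 0 b).hasDerivAt
  have hGprim : ∀ b : ℝ, HasDerivAt (fun u => ∫ s in (0:ℝ)..u, G s) (G b) b :=
    fun b => (hGc.integral_hasStrictDerivAt 0 b).hasDerivAt
  have hexp2 : ∀ b : ℝ, HasDerivAt (fun t => exp (2 * t)) (2 * exp (2 * b)) b := by
    intro b
    have := ((hasDerivAt_id b).const_mul (2:ℝ)).exp
    simpa [mul_comm] using this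
  have hY : ∀ b : ℝ, HasDerivAt (fun t => A2 - ∫ s in (0:ℝ)..t, G s) (-G b) b :=
    fun b => ((hGprim b).const_sub A2)
  have hEY : ∀ b : ℝ, HasDerivAt (fun t => exp (2 * t) * (A2 - ∫ s in (0:ℝ)..t, G s))
      (2 * exp (2 * b) * (A2 - ∫ s in (0:ℝ)..b, G s) - F b) b := by
    intro b
    have := (hexp2 b).fun_mul (hY b)
    refine this.congr_deriv ?_
    rw [← hEG b]
    ring
  have hhder : ∀ b : ℝ, HasDerivAt h (g b) b := by
    intro b
    have h1 : HasDerivAt (fun t => (A1 - ∫ s in (0:ℝ)..t, F s) / 2) (-F b / 2) b :=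
      ((hFprim b).const_sub A1).div_const 2
    have h2 : HasDerivAt (fun t => exp (2 * t) * (A2 - ∫ s in (0:ℝ)..t, G s) / 2)
        ((2 * exp (2 * b) * (A2 - ∫ s in (0:ℝ)..b, G s) - F b) / 2) b :=
      (hEY b).div_const 2
    have := h1.fun_sub h2
    rw [hhdef, hgdef]
    refine this.congr_deriv ?_
    ring
  have hgder : ∀ b : ℝ, HasDerivAt g (2 * g b + F b) b := by
    intro b
    have := (hEY b).fun_neg
    rw [hgdef]
    refine this.congr_deriv ?_
    simp only
    ring
  have hprimF : Continuous fun t => ∫ s in (0:ℝ)..t, F s := primitive_continuous hFc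
  have hprimG : Continuous fun t => ∫ s in (0:ℝ)..t, G s := primitive_continuous hGc
  have hE : Continuous fun t : ℝ => exp (2 * t) :=
    Real.continuous_exp.comp (continuous_const.mul continuous_id)
  have hcont_h : Continuous h := by
    rw [hhdef]
    exact ((continuous_const.sub hprimF).div_const 2).sub
      ((hE.mul (continuous_const.sub hprimG)).div_const 2)
  have hcont_g : Continuous g := by
    rw [hgdef]
    exact (hE.mul (continuous_const.sub hprimG)).neg
  refine ⟨h, g, B₀ / d, by positivity, hcont_h, hcont_g, hhder, ?_, ?_, ?_⟩
  · intro t ht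
    have hFt : F t = (q t - p t) * (1 + h t) + p t * g t := by
      rw [hFdef, odeF, (hid t ht).1, (hid t ht).2]
    rw [← hFt]
    exact hgder t
  · intro t ht
    have := odePhi_norm_le hp hq hd w.continuous hB₀.le hFb t
    rw [hw t, max_eq_left ht] at this
    calc |h t| = |(w t).1| := by rw [(hid t ht).1]
      _ ≤ ‖w t‖ := by simpa using norm_fst_le (w t)
      _ ≤ B₀ / d * exp (-d * t) := this
  · intro t ht
    have := odePhi_norm_le hp hq hd w.continuous hB₀.le hFb t
    rw [hw t, max_eq_left ht] at this
    calc |g t| = |(w t).2| := by rw [(hid t ht).2]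
      _ ≤ ‖w t‖ := by simpa using norm_snd_le (w t)
      _ ≤ B₀ / d * exp (-d * t) := this

end solutionpair
section positivity

open Set Real Filter Topology

lemma pos_on_Icc {u u' R : ℝ → ℝ} {T : ℝ}
    (hu : Continuous u) (hu' : Continuous u')
    (hder' : ∀ t, 0 ≤ t → HasDerivAt u' (R t) t)
    (hderu : ∀ t, 0 ≤ t → HasDerivAt u (u' t) t)
    (hR : ∀ t, 0 ≤ t → u' t = 0 → 0 < u t → 0 < R t)
    (huT : 0 < u T) (hu'T : u' T < 0) :
    ∀ t ∈ Icc 0 T, 0 < u t ∧ u' t < 0 := by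
  set S := {x | x ∈ Icc 0 T ∧ (u x ≤ 0 ∨ 0 ≤ u' x)} with hSdef
  suffices hSempty : S = ∅ by
    intro t ht
    by_contra hcon
    have : t ∈ S := by
      refine ⟨ht, ?_⟩
      rcases not_and_or.1 hcon with h | h
      · exact Or.inl (not_lt.1 h)
      · exact Or.inr (not_lt.1 h)
    rw [hSempty] at this
    exact this
  by_contra hne
  rw [← ne_eq, ← nonempty_iff_ne_empty] at hne
  have hbdd : BddAbove S := ⟨T, fun x hx => hx.1.2⟩
  have hclosed : IsClosed S := by
    have : S = Icc 0 T ∩ ({x | u x ≤ 0} ∪ {x | 0 ≤ u' x}) := by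
      ext x; simp [hSdef, Set.mem_inter_iff, Set.mem_union]
    rw [this]
    exact isClosed_Icc.inter ((isClosed_le hu continuous_const).union
      (isClosed_le continuous_const hu'))
  set s := sSup S with hsdef
  have hsS : s ∈ S := hclosed.csSup_mem hne hbdd
  have hs0 : 0 ≤ s := hsS.1.1
  have hsT : s ≤ T := hsS.1.2
  have hTnot : T ∉ S := by
    intro hT'
    rcases hT'.2 with h | h
    · linarith
    · linarith
  have hsltT : s < T := lt_of_le_of_ne hsT (fun he => hTnot (he ▸ hsS))
  have hafter : ∀ x, s < x → x ≤ T → 0 < u x ∧ u' x < 0 := by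
    intro x hx hxT
    by_contra hcon
    have hxS : x ∈ S := by
      refine ⟨⟨le_trans hs0 hx.le, hxT⟩, ?_⟩
      rcases not_and_or.1 hcon with h | h
      · exact Or.inl (not_lt.1 h)
      · exact Or.inr (not_lt.1 h)
    have := le_csSup hbdd hxS
    rw [← hsdef] at this
    linarith
  have hus : 0 < u s := by
    have hanti : StrictAntiOn u (Icc s T) := by
      apply strictAntiOn_of_deriv_neg (convex_Icc s T) hu.continuousOn
      intro x hx
      rw [interior_Icc] at hx
      have hx0 : 0 ≤ x := le_trans hs0 hx.1.le
      rw [(hderu x hx0).deriv]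
      exact (hafter x hx.1 hx.2.le).2
    have hTlt : u T < u s := hanti ⟨le_rfl, hsT⟩ ⟨hsT, le_rfl⟩ hsltT
    linarith
  have hu's : 0 ≤ u' s := by
    rcases hsS.2 with h | h
    · linarith
    · exact h
  -- find a point just right of s with positive derivative: contradiction
  have hex : ∃ x, s < x ∧ x < T ∧ 0 < u' x := by
    rcases eq_or_lt_of_le hu's with h | h
    · -- u' s = 0, use second derivative
      have hc : 0 < R s := hR s hs0 h.symm hus
      have hd2 := hder' s hs0
      rw [hasDerivAt_iff_tendsto_slope] at hd2
      have hev : ∀ᶠ x in 𝓝[≠] s, 0 < slope u' s x := hd2.eventually (lt_mem_nhds hc)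
      have hev' : ∀ᶠ x in 𝓝[>] s, 0 < slope u' s x :=
        hev.filter_mono (nhdsWithin_mono s (fun x hx => ne_of_gt hx))
      have hevT : ∀ᶠ x in 𝓝[>] s, x < T :=
        eventually_nhdsWithin_of_eventually_nhds (isOpen_Iio.mem_nhds hsltT)
      have hmem : ∀ᶠ x in 𝓝[>] s, s < x := eventually_mem_nhdsWithin
      obtain ⟨x, hx1, hx2, hx3⟩ := (hmem.and (hevT.and hev')).exists
      refine ⟨x, hx1, hx2, ?_⟩
      have hxs : 0 < x - s := sub_pos.2 hx1
      rw [slope_def_field] at hx3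
      rcases div_pos_iff.1 hx3 with ⟨h1, _⟩ | ⟨_, h2⟩
      · linarith
      · linarith
    · -- u' s > 0, use continuity
      have hopen : IsOpen {x | 0 < u' x} := isOpen_lt continuous_const hu'
      have hev : ∀ᶠ x in 𝓝[>] s, 0 < u' x :=
        eventually_nhdsWithin_of_eventually_nhds (hopen.mem_nhds h)
      have hevT : ∀ᶠ x in 𝓝[>] s, x < T :=
        eventually_nhdsWithin_of_eventually_nhds (isOpen_Iio.mem_nhds hsltT)
      have hmem : ∀ᶠ x in 𝓝[>] s, s < x := eventually_mem_nhdsWithin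
      obtain ⟨x, hx1, hx2, hx3⟩ := (hmem.and (hevT.and hev)).exists
      exact ⟨x, hx1, hx2, hx3⟩
  obtain ⟨x, hx1, hx2, hx3⟩ := hex
  have := (hafter x hx1 hx2.le).2
  linarith

end positivity
open Set Real MeasureTheory Filter Topology

/-- Existence of an exponentially decaying fundamental solution of `u'' = P u' + (1+Q) u`. -/
theorem ode_decaying_fundamental_solution (P Q : ℝ → ℝ) (d C₀ : ℝ)
    (hP : ContinuousOn P (Ici 0)) (hQ : ContinuousOn Q (Ici 0))
    (hQ1 : ∀ t ∈ Ici (0:ℝ), 0 < 1 + Q t)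
    (hd : 0 < d) (hC₀ : 0 < C₀)
    (hPb : ∀ t ∈ Ici (0:ℝ), |P t| ≤ C₀ * exp (-d * t))
    (hQb : ∀ t ∈ Ici (0:ℝ), |Q t| ≤ C₀ * exp (-d * t)) :
    ∃ (u₂ u₂' : ℝ → ℝ) (C : ℝ), 0 < C ∧
      (∀ t ∈ Ici (0:ℝ), HasDerivWithinAt u₂ (u₂' t) (Ici 0) t) ∧
      (∀ t ∈ Ici (0:ℝ), HasDerivWithinAt u₂' (P t * u₂' t + (1 + Q t) * u₂ t) (Ici 0) t) ∧
      (∀ t ∈ Ici (0:ℝ),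
        C⁻¹ * exp (-t) ≤ u₂ t ∧ u₂ t ≤ C * exp (-t) ∧
        C⁻¹ * exp (-t) ≤ -u₂' t ∧ -u₂' t ≤ C * exp (-t)) := by
  classical
  -- clamped coefficient functions, continuous on all of `ℝ`
  set p : ℝ → ℝ := fun t => P (t ⊔ 0) with hpdef
  set q : ℝ → ℝ := fun t => Q (t ⊔ 0) with hqdef
  have hclamp : Continuous fun t : ℝ => t ⊔ 0 := continuous_id.max continuous_const
  have hmem : ∀ t : ℝ, t ⊔ 0 ∈ Ici (0:ℝ) := fun t => le_max_right t 0
  have hp : Continuous p := hP.comp_continuous hclamp hmem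
  have hq : Continuous q := hQ.comp_continuous hclamp hmem
  have hpeq : ∀ t : ℝ, 0 ≤ t → p t = P t := by
    intro t ht; rw [hpdef]; simp only; rw [max_eq_left ht]
  have hqeq : ∀ t : ℝ, 0 ≤ t → q t = Q t := by
    intro t ht; rw [hqdef]; simp only; rw [max_eq_left ht]
  have hpb : ∀ s, 0 ≤ s → |p s| ≤ C₀ * exp (-d * s) := by
    intro s hs; rw [hpeq s hs]; exact hPb s hs
  have hqb : ∀ s, 0 ≤ s → |q s| ≤ C₀ * exp (-d * s) := by
    intro s hs; rw [hqeq s hs]; exact hQb s hs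
  obtain ⟨h, g, B, hB, hch, hcg, hhder, hgder, hhb, hgb⟩ := exists_hg hp hq hd hC₀ hpb hqb
  -- the solution and its derivative
  set u : ℝ → ℝ := fun t => exp (-t) * (1 + h t) with hudef
  set v : ℝ → ℝ := fun t => exp (-t) * (g t - 1 - h t) with hvdef
  have hcu : Continuous u := by
    rw [hudef]
    exact (Real.continuous_exp.comp continuous_neg).mul (continuous_const.add hch)
  have hcv : Continuous v := by
    rw [hvdef]
    exact (Real.continuous_exp.comp continuous_neg).mul ((hcg.sub continuous_const).sub hch)
  have hexpneg : ∀ b : ℝ, HasDerivAt (fun t : ℝ => exp (-t)) (-exp (-b)) b := by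
    intro b
    have := (hasDerivAt_id b).neg.exp
    simpa using this
  have huder : ∀ b, HasDerivAt u (v b) b := by
    intro b
    have := (hexpneg b).fun_mul ((hhder b).const_add 1)
    rw [hudef, hvdef]
    refine this.congr_deriv ?_
    simp only
    ring
  have hvder : ∀ t, 0 ≤ t → HasDerivAt v (P t * v t + (1 + Q t) * u t) t := by
    intro t ht
    have hinner : HasDerivAt (fun s => g s - 1 - h s)
        ((2 * g t + ((q t - p t) * (1 + h t) + p t * g t)) - g t) t :=
      ((hgder t ht).sub_const 1).sub (hhder t)
    have := (hexpneg t).fun_mul hinner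
    rw [hvdef]
    refine this.congr_deriv ?_
    simp only
    rw [← hpeq t ht, ← hqeq t ht, hudef]
    simp only
    ring
  -- tail smallness
  set T : ℝ := max 0 (Real.log (4 * B) / d) with hTdef
  have hT0 : 0 ≤ T := le_max_left _ _
  have htail : ∀ t, T ≤ t → B * exp (-d * t) ≤ 1/4 := by
    intro t htt
    have h4B : (0:ℝ) < 4 * B := by positivity
    have hlog : Real.log (4 * B) / d ≤ t := le_trans (le_max_right _ _) htt
    have h1 : Real.log (4 * B) ≤ d * t := by
      rw [div_le_iff₀ hd] at hlog; linarith
    have h2 : exp (-d * t) ≤ exp (-Real.log (4 * B)) := exp_le_exp.2 (by linarith)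
    have h3 : exp (-Real.log (4 * B)) = (4 * B)⁻¹ := by
      rw [Real.exp_neg, Real.exp_log h4B]
    calc B * exp (-d * t) ≤ B * (4 * B)⁻¹ := by
          apply mul_le_mul_of_nonneg_left _ hB.le
          rw [← h3]; exact h2
      _ = 1/4 := by field_simp
  have hhtail : ∀ t, T ≤ t → |h t| ≤ 1/4 :=
    fun t htt => le_trans (hhb t (le_trans hT0 htt)) (htail t htt)
  have hgtail : ∀ t, T ≤ t → |g t| ≤ 1/4 :=
    fun t htt => le_trans (hgb t (le_trans hT0 htt)) (htail t htt)
  have huT : 0 < u T := by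
    have := hhtail T le_rfl
    have h1 : -(1/4 : ℝ) ≤ h T := neg_le_of_abs_le this
    rw [hudef]
    have : (0:ℝ) < 1 + h T := by linarith
    positivity
  have hvT : v T < 0 := by
    have h1 : h T ≥ -(1/4 : ℝ) := neg_le_of_abs_le (hhtail T le_rfl)
    have h2 : g T ≤ 1/4 := le_of_abs_le (hgtail T le_rfl)
    rw [hvdef]
    apply mul_neg_of_pos_of_neg (exp_pos _)
    linarith
  -- positivity on the compact part
  have hpos : ∀ t ∈ Icc 0 T, 0 < u t ∧ v t < 0 := by
    apply pos_on_Icc hcu hcv hvder (fun t _ => huder t) _ huT hvT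
    intro t ht hv0 hu0
    rw [hv0, mul_zero, zero_add]
    exact mul_pos (hQ1 t ht) hu0
  -- extrema on the compact part
  have hKc : IsCompact (Icc (0:ℝ) T) := isCompact_Icc
  have hKne : (Icc (0:ℝ) T).Nonempty := ⟨0, le_rfl, hT0⟩
  have hφc : Continuous fun t => u t * exp t := hcu.mul Real.continuous_exp
  have hψc : Continuous fun t => -v t * exp t := hcv.neg.mul Real.continuous_exp
  obtain ⟨x₁, hx₁K, hx₁⟩ := hKc.exists_isMinOn hKne hφc.continuousOn
  obtain ⟨x₂, hx₂K, hx₂⟩ := hKc.exists_isMaxOn hKne hφc.continuousOn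
  obtain ⟨x₃, hx₃K, hx₃⟩ := hKc.exists_isMinOn hKne hψc.continuousOn
  obtain ⟨x₄, hx₄K, hx₄⟩ := hKc.exists_isMaxOn hKne hψc.continuousOn
  set m₁ : ℝ := u x₁ * exp x₁ with hm₁def
  set M₁ : ℝ := u x₂ * exp x₂ with hM₁def
  set m₂ : ℝ := -v x₃ * exp x₃ with hm₂def
  set M₂ : ℝ := -v x₄ * exp x₄ with hM₂def
  have hm₁ : 0 < m₁ := mul_pos (hpos x₁ hx₁K).1 (exp_pos _)
  have hm₂ : 0 < m₂ := mul_pos (by linarith [(hpos x₃ hx₃K).2] : 0 < -v x₃) (exp_pos _)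
  -- the constant
  set C : ℝ := max 2 (max (max M₁ M₂) (max m₁⁻¹ m₂⁻¹)) with hCdef
  have hC2 : (2:ℝ) ≤ C := le_max_left _ _
  have hC : 0 < C := by linarith
  have hCinv2 : C⁻¹ ≤ 1/2 := by
    rw [show (1/2 : ℝ) = 2⁻¹ by norm_num]
    exact inv_anti₀ (by norm_num) hC2
  have hCm₁ : C⁻¹ ≤ m₁ := by
    have : m₁⁻¹ ≤ C := le_trans (le_max_left _ _) (le_trans (le_max_right _ _) (le_max_right _ _))
    calc C⁻¹ ≤ (m₁⁻¹)⁻¹ := inv_anti₀ (by positivity) this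
      _ = m₁ := inv_inv _
  have hCm₂ : C⁻¹ ≤ m₂ := by
    have : m₂⁻¹ ≤ C := le_trans (le_max_right _ _) (le_trans (le_max_right _ _) (le_max_right _ _))
    calc C⁻¹ ≤ (m₂⁻¹)⁻¹ := inv_anti₀ (by positivity) this
      _ = m₂ := inv_inv _
  have hCM₁ : M₁ ≤ C := le_trans (le_max_left _ _) (le_trans (le_max_left _ _) (le_max_right _ _))
  have hCM₂ : M₂ ≤ C := le_trans (le_max_right _ _) (le_trans (le_max_left _ _) (le_max_right _ _))
  -- conclusion
  refine ⟨u, v, C, hC, fun t _ => (huder t).hasDerivWithinAt,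
    fun t ht => (hvder t ht).hasDerivWithinAt, ?_⟩
  intro t ht
  have hexpid : ∀ y : ℝ, y * exp t * exp (-t) = y := by
    intro y
    rw [mul_assoc, ← Real.exp_add]
    simp
  have main : C⁻¹ ≤ u t * exp t ∧ u t * exp t ≤ C ∧ C⁻¹ ≤ -v t * exp t ∧ -v t * exp t ≤ C := by
    by_cases htT : t ≤ T
    · have htK : t ∈ Icc 0 T := ⟨ht, htT⟩
      refine ⟨le_trans hCm₁ (hx₁ htK), le_trans (hx₂ htK) hCM₁,
        le_trans hCm₂ (hx₃ htK), le_trans (hx₄ htK) hCM₂⟩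
    · push_neg at htT
      have h1 : |h t| ≤ 1/4 := hhtail t htT.le
      have h2 : |g t| ≤ 1/4 := hgtail t htT.le
      have h1' : -(1/4:ℝ) ≤ h t := neg_le_of_abs_le h1
      have h1'' : h t ≤ 1/4 := le_of_abs_le h1
      have h2' : -(1/4:ℝ) ≤ g t := neg_le_of_abs_le h2
      have h2'' : g t ≤ 1/4 := le_of_abs_le h2
      have hue : u t * exp t = 1 + h t := by
        rw [hudef]; simp only; rw [mul_comm, ← mul_assoc, ← Real.exp_add]; simp
      have hve : -v t * exp t = 1 + h t - g t := by
        rw [hvdef]; simp only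
        rw [show -(exp (-t) * (g t - 1 - h t)) = exp (-t) * (1 + h t - g t) by ring]
        rw [mul_comm, ← mul_assoc, ← Real.exp_add]; simp
      rw [hue, hve]
      refine ⟨by linarith, by linarith, by linarith, by linarith⟩
  obtain ⟨k1, k2, k3, k4⟩ := main
  refine ⟨?_, ?_, ?_, ?_⟩
  · calc C⁻¹ * exp (-t) ≤ (u t * exp t) * exp (-t) :=
        mul_le_mul_of_nonneg_right k1 (exp_pos _).le
      _ = u t := hexpid _
  · calc u t = (u t * exp t) * exp (-t) := (hexpid _).symm
      _ ≤ C * exp (-t) := mul_le_mul_of_nonneg_right k2 (exp_pos _).le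
  · calc C⁻¹ * exp (-t) ≤ (-v t * exp t) * exp (-t) :=
        mul_le_mul_of_nonneg_right k3 (exp_pos _).le
      _ = -v t := hexpid _
  · calc -v t = (-v t * exp t) * exp (-t) := (hexpid _).symm
      _ ≤ C * exp (-t) := mul_le_mul_of_nonneg_right k4 (exp_pos _).le
end core
end

section
/- Let u be a positive solution on [0,∞) of u'' = P u' + (1+Q) u with |P(t)|, |Q(t)| ≤ C₀ e^{-dt} (C₀, d > 0), u > 0, u' > 0. Setting w = u + u', the function w satisfies the differential inequality (1 - |P| - |Q|) w ≤ w' ≤ (1 + |P| + |Q|) w, and consequently there is a constant C₁ > 0 with C₁⁻¹ e^t ≤ u(t) + u'(t) ≤ C₁ e^t for all t ≥ 0. -/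
open Set Real

/-- For a positive increasing solution of `u'' = P u' + (1+Q) u` with exponentially decaying
`P, Q`, the function `w = u + u'` satisfies `(1-|P|-|Q|) w ≤ w' ≤ (1+|P|+|Q|) w`, and hence
`C₁⁻¹ e^t ≤ u + u' ≤ C₁ e^t`. -/
theorem ode_sum_estimate (P Q u u' : ℝ → ℝ) (d C₀ : ℝ)
    (hP : ContinuousOn P (Ici 0)) (hQ : ContinuousOn Q (Ici 0))
    (hd : 0 < d) (hC₀ : 0 < C₀)
    (hPb : ∀ t ∈ Ici (0:ℝ), |P t| ≤ C₀ * exp (-d * t))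
    (hQb : ∀ t ∈ Ici (0:ℝ), |Q t| ≤ C₀ * exp (-d * t))
    (hu : ∀ t ∈ Ici (0:ℝ), HasDerivWithinAt u (u' t) (Ici 0) t)
    (hu' : ∀ t ∈ Ici (0:ℝ), HasDerivWithinAt u' (P t * u' t + (1 + Q t) * u t) (Ici 0) t)
    (hupos : ∀ t ∈ Ici (0:ℝ), 0 < u t) (hu'pos : ∀ t ∈ Ici (0:ℝ), 0 < u' t) :
    (∀ t ∈ Ici (0:ℝ),
      (1 - |P t| - |Q t|) * (u t + u' t) ≤ u' t + (P t * u' t + (1 + Q t) * u t) ∧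
      u' t + (P t * u' t + (1 + Q t) * u t) ≤ (1 + |P t| + |Q t|) * (u t + u' t)) ∧
    ∃ C₁ : ℝ, 0 < C₁ ∧ ∀ t ∈ Ici (0:ℝ),
      C₁⁻¹ * exp t ≤ u t + u' t ∧ u t + u' t ≤ C₁ * exp t := by
  set w : ℝ → ℝ := fun t => u t + u' t with hwdef
  set w' : ℝ → ℝ := fun t => u' t + (P t * u' t + (1 + Q t) * u t) with hw'def
  have hwpos : ∀ t ∈ Ici (0:ℝ), 0 < w t := fun t ht => by
    have := hupos t ht; have := hu'pos t ht; simp only [hwdef]; linarith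
  have hwd : ∀ t ∈ Ici (0:ℝ), HasDerivWithinAt w (w' t) (Ici 0) t :=
    fun t ht => (hu t ht).add (hu' t ht)
  -- Part 1
  have part1 : ∀ t ∈ Ici (0:ℝ),
      (1 - |P t| - |Q t|) * (u t + u' t) ≤ u' t + (P t * u' t + (1 + Q t) * u t) ∧
      u' t + (P t * u' t + (1 + Q t) * u t) ≤ (1 + |P t| + |Q t|) * (u t + u' t) := by
    intro t ht
    have h1 := hupos t ht
    have h2 := hu'pos t ht
    have h3 := neg_abs_le (P t)
    have h4 := le_abs_self (P t)
    have h5 := neg_abs_le (Q t)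
    have h6 := le_abs_self (Q t)
    constructor
    · nlinarith [mul_le_mul_of_nonneg_right h3 h2.le, mul_le_mul_of_nonneg_right h5 h1.le,
        abs_nonneg (P t), abs_nonneg (Q t)]
    · nlinarith [mul_le_mul_of_nonneg_right h4 h2.le, mul_le_mul_of_nonneg_right h6 h1.le,
        abs_nonneg (P t), abs_nonneg (Q t)]
  refine ⟨part1, ?_⟩
  -- derivative bounds: w' ≤ (1 + 2C₀e^{-dt}) w  and  (1 - 2C₀e^{-dt}) w ≤ w'
  have hbnd : ∀ t ∈ Ici (0:ℝ),
      (1 - 2*C₀*exp (-d*t)) * w t ≤ w' t ∧ w' t ≤ (1 + 2*C₀*exp (-d*t)) * w t := by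
    intro t ht
    obtain ⟨hl, hr⟩ := part1 t ht
    have hp := hPb t ht
    have hq := hQb t ht
    have hw := hwpos t ht
    constructor
    · calc (1 - 2*C₀*exp (-d*t)) * w t ≤ (1 - |P t| - |Q t|) * w t := by nlinarith
        _ ≤ w' t := hl
    · calc w' t ≤ (1 + |P t| + |Q t|) * w t := hr
        _ ≤ (1 + 2*C₀*exp (-d*t)) * w t := by nlinarith
  -- continuity of log ∘ w minus stuff
  have hwc : ContinuousOn w (Ici 0) := fun t ht => (hwd t ht).continuousWithinAt
  have hlogc : ContinuousOn (fun t => log (w t)) (Ici 0) :=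
    ContinuousOn.log hwc (fun t ht => (hwpos t ht).ne')
  have hexpc : Continuous (fun t : ℝ => (2*C₀/d) * exp (-d*t)) := by continuity
  have hIoi : interior (Ici (0:ℝ)) = Ioi 0 := interior_Ici
  -- derivative of the combined functions on the interior
  have hderiv : ∀ (c : ℝ), ∀ t ∈ interior (Ici (0:ℝ)),
      HasDerivWithinAt (fun s => log (w s) - s + c * ((2*C₀/d) * exp (-d*s)))
        (w' t / w t - 1 + c * (-(2*C₀) * exp (-d*t))) (interior (Ici 0)) t := by
    intro c t ht
    rw [hIoi] at ht ⊢
    have htI : t ∈ Ici (0:ℝ) := mem_Ici.mpr (le_of_lt (mem_Ioi.mp ht))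
    have h1 : HasDerivWithinAt (fun s => log (w s)) (w' t / w t) (Ioi 0) t :=
      (((hwd t htI).mono (Ioi_subset_Ici_self)).log (hwpos t htI).ne')
    have h2 : HasDerivAt (fun s : ℝ => exp (-d*s)) (exp (-d*t) * (-d)) t := by
      have : HasDerivAt (fun s : ℝ => -d*s) (-d) t := by
        simpa using (hasDerivAt_id t).const_mul (-d)
      exact this.exp
    have h3 : HasDerivAt (fun s : ℝ => c * ((2*C₀/d) * exp (-d*s)))
        (c * ((2*C₀/d) * (exp (-d*t) * (-d)))) t := (h2.const_mul _).const_mul _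
    have h4 := (h1.sub (hasDerivWithinAt_id t (Ioi 0))).add h3.hasDerivWithinAt
    refine h4.congr_deriv ?_
    field_simp
  -- upper bound: log(w t) - t + (2C₀/d)e^{-dt} is antitone
  have hupper : AntitoneOn (fun s => log (w s) - s + 1 * ((2*C₀/d) * exp (-d*s))) (Ici 0) := by
    apply antitoneOn_of_hasDerivWithinAt_nonpos (convex_Ici 0)
      (by fun_prop) (hderiv 1)
    intro t ht
    rw [hIoi] at ht
    have htI : t ∈ Ici (0:ℝ) := mem_Ici.mpr (le_of_lt (mem_Ioi.mp ht))
    have hw := hwpos t htI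
    have := (hbnd t htI).2
    have : w' t / w t ≤ 1 + 2*C₀*exp (-d*t) := by
      rw [div_le_iff₀ hw]; linarith
    nlinarith
  have hlower : MonotoneOn (fun s => log (w s) - s + (-1) * ((2*C₀/d) * exp (-d*s))) (Ici 0) := by
    apply monotoneOn_of_hasDerivWithinAt_nonneg (convex_Ici 0)
      (by fun_prop) (hderiv (-1))
    intro t ht
    rw [hIoi] at ht
    have htI : t ∈ Ici (0:ℝ) := mem_Ici.mpr (le_of_lt (mem_Ioi.mp ht))
    have hw := hwpos t htI
    have := (hbnd t htI).1
    have : 1 - 2*C₀*exp (-d*t) ≤ w' t / w t := by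
      rw [le_div_iff₀ hw]; linarith
    nlinarith
  have hw0 : 0 < w 0 := hwpos 0 (mem_Ici.mpr le_rfl)
  set K : ℝ := 2*C₀/d with hK
  have hKpos : 0 < K := by positivity
  refine ⟨(w 0 + (w 0)⁻¹) * exp K, by positivity, ?_⟩
  intro t ht
  have h0I : (0:ℝ) ∈ Ici (0:ℝ) := mem_Ici.mpr le_rfl
  have hub := hupper h0I ht ht
  have hlb := hlower h0I ht ht
  simp only [mul_zero, neg_zero, Real.exp_zero, mul_one, one_mul, neg_one_mul, sub_zero] at hub hlb
  -- hub : log (w t) - t + K * exp (-d*t) ≤ log (w 0) + K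
  -- hlb : log (w 0) - K ≤ log (w t) - t - K * exp (-d*t)
  have hexppos : (0:ℝ) < exp (-d*t) := exp_pos _
  have hexple : exp (-d*t) ≤ 1 := by
    rw [Real.exp_le_one_iff]
    have : (0:ℝ) ≤ t := ht
    nlinarith
  have hKe : 0 < K * exp (-d*t) := by positivity
  have hlog_ub : log (w t) ≤ t + log (w 0) + K := by nlinarith
  have hlog_lb : t + log (w 0) - K ≤ log (w t) := by nlinarith
  have hwt := hwpos t ht
  constructor
  · -- lower bound
    have : exp (t + log (w 0) - K) ≤ w t := by
      rw [← Real.exp_log hwt]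
      exact Real.exp_le_exp.mpr hlog_lb
    have heq : exp (t + log (w 0) - K) = w 0 * exp (-K) * exp t := by
      rw [show t + log (w 0) - K = log (w 0) + (-K) + t by ring, Real.exp_add, Real.exp_add,
        Real.exp_log hw0]
    rw [heq] at this
    have hCinv : ((w 0 + (w 0)⁻¹) * exp K)⁻¹ ≤ w 0 * exp (-K) := by
      rw [Real.exp_neg]
      rw [show w 0 * (exp K)⁻¹ = ((w 0)⁻¹ * exp K)⁻¹ by
        rw [mul_inv, inv_inv]]
      apply inv_anti₀ (by positivity)
      exact mul_le_mul_of_nonneg_right (le_add_of_nonneg_left hw0.le) (exp_pos K).le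
    calc ((w 0 + (w 0)⁻¹) * exp K)⁻¹ * exp t ≤ w 0 * exp (-K) * exp t := by
          exact mul_le_mul_of_nonneg_right hCinv (exp_pos t).le
      _ ≤ w t := this
  · -- upper bound
    have : w t ≤ exp (t + log (w 0) + K) := by
      rw [← Real.exp_log hwt]
      exact Real.exp_le_exp.mpr hlog_ub
    have heq : exp (t + log (w 0) + K) = w 0 * exp K * exp t := by
      rw [show t + log (w 0) + K = log (w 0) + K + t by ring, Real.exp_add, Real.exp_add,
        Real.exp_log hw0]
    rw [heq] at this
    calc w t ≤ w 0 * exp K * exp t := this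
      _ ≤ (w 0 + (w 0)⁻¹) * exp K * exp t := by
          have h1 : (0:ℝ) < (w 0)⁻¹ := by positivity
          gcongr
          linarith
end

section
/- Let f : [0,∞) → ℝ be continuous with |f(t)| ≤ C₀ e^{-dt} for some d > 1, and let u₁, u₂ be solutions of the homogeneous equation u'' = P u' + (1+Q)u with C⁻¹e^{±t} ≤ u₁, u₂ ≤ Ce^{±t} respectively and Wronskian bounded away from zero: u₁u₂' − u₂u₁' ≤ −2C⁻². Then any solution u of u'' = P u' + (1+Q)u + f satisfies |u(t) − c₁ u₁(t) − c₂ u₂(t)| ≤ C' e^{-dt} for some constants c₁, c₂ and C' > 0. -/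
open Set Real

open Filter Topology in
lemma decay_of_deriv_bound {g g' : ℝ → ℝ} {K ε : ℝ} (hK : 0 ≤ K) (hε : 0 < ε)
    (hg : ∀ t ∈ Ici (0:ℝ), HasDerivWithinAt g (g' t) (Ici 0) t)
    (hb : ∀ t ∈ Ici (0:ℝ), |g' t| ≤ K * exp (-ε * t)) :
    ∃ c, ∀ t ∈ Ici (0:ℝ), |g t - c| ≤ (K / ε) * exp (-ε * t) := by
  set h : ℝ → ℝ := fun t => (K / ε) * exp (-ε * t) with hh
  have hh' : ∀ t, HasDerivAt h (-(K * exp (-ε * t))) t := by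
    intro t
    have hlin : HasDerivAt (fun y : ℝ => -ε * y) (-ε) t := by
      simpa using (hasDerivAt_id t).const_mul (-ε)
    have : HasDerivAt (fun t => exp (-ε * t)) (exp (-ε * t) * (-ε)) t :=
      (Real.hasDerivAt_exp (-ε * t)).comp t hlin
    have := this.const_mul (K / ε)
    refine this.congr_deriv ?_
    field_simp
  have hgc : ContinuousOn g (Ici 0) := fun t ht => (hg t ht).continuousWithinAt
  have hanti : AntitoneOn (fun t => g t + h t) (Ici 0) := by
    apply antitoneOn_of_hasDerivWithinAt_nonpos (convex_Ici 0)
      (f' := fun t => g' t + -(K * exp (-ε * t)))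
      (hgc.add (fun x _ => (hh' x).continuousAt.continuousWithinAt))
    · intro x hx
      have hx' : x ∈ Ici (0:ℝ) := le_of_lt (by simpa using hx)
      exact ((hg x hx').mono interior_subset).add ((hh' x).hasDerivWithinAt)
    · intro x hx
      have hx' : x ∈ Ici (0:ℝ) := le_of_lt (by simpa using hx)
      have := hb x hx'
      have := abs_le.mp this
      linarith [this.2]
  have hmono : MonotoneOn (fun t => g t - h t) (Ici 0) := by
    apply monotoneOn_of_hasDerivWithinAt_nonneg (convex_Ici 0)
      (f' := fun t => g' t - -(K * exp (-ε * t)))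
      (hgc.sub (fun x _ => (hh' x).continuousAt.continuousWithinAt))
    · intro x hx
      have hx' : x ∈ Ici (0:ℝ) := le_of_lt (by simpa using hx)
      exact ((hg x hx').mono interior_subset).sub ((hh' x).hasDerivWithinAt)
    · intro x hx
      have hx' : x ∈ Ici (0:ℝ) := le_of_lt (by simpa using hx)
      have := abs_le.mp (hb x hx')
      linarith [this.1]
  have hpos : ∀ t, 0 ≤ h t := fun t => by positivity
  have hhle : ∀ s t : ℝ, s ≤ t → h t ≤ h s := by
    intro s t hst
    have : exp (-ε * t) ≤ exp (-ε * s) := exp_le_exp.mpr (by nlinarith)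
    have hK' : 0 ≤ K / ε := by positivity
    exact mul_le_mul_of_nonneg_left this hK'
  have key : ∀ s t : ℝ, 0 ≤ s → s ≤ t → |g t - g s| ≤ h s := by
    intro s t hs hst
    have ht : (0:ℝ) ≤ t := le_trans hs hst
    have h1 := hanti hs ht hst
    have h2 := hmono hs ht hst
    simp only at h1 h2
    rw [abs_le]
    constructor <;> nlinarith [hpos t]
  -- the sequence g n is Cauchy
  have hcs : CauchySeq (fun n : ℕ => g n) := by
    apply cauchySeq_of_le_tendsto_0 (fun N : ℕ => h N)
    · intro n m N hn hm
      rcases le_total n m with hle | hle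
      · calc dist (g n) (g m) = |g m - g n| := by rw [Real.dist_eq, abs_sub_comm]
          _ ≤ h n := key n m (Nat.cast_nonneg n) (by exact_mod_cast hle)
          _ ≤ h N := hhle _ _ (by exact_mod_cast hn)
      · calc dist (g n) (g m) = |g n - g m| := Real.dist_eq _ _
          _ ≤ h m := key m n (Nat.cast_nonneg m) (by exact_mod_cast hle)
          _ ≤ h N := hhle _ _ (by exact_mod_cast hm)
    · have : Tendsto (fun N : ℕ => -ε * N) atTop atBot := by
        apply Tendsto.const_mul_atTop_of_neg (by linarith)
        exact tendsto_natCast_atTop_atTop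
      have := (Real.tendsto_exp_atBot.comp this).const_mul (K / ε)
      simpa [hh, Function.comp, mul_comm] using this
  obtain ⟨c, hc⟩ := cauchySeq_tendsto_of_complete hcs
  refine ⟨c, fun t ht => ?_⟩
  have h1 : Tendsto (fun n : ℕ => |g t - g n|) atTop (𝓝 |g t - c|) :=
    ((tendsto_const_nhds.sub hc).abs)
  refine le_of_tendsto h1 ?_
  filter_upwards [eventually_ge_atTop ⌈t⌉₊] with n hn
  rw [abs_sub_comm]
  exact key t n ht (le_trans (Nat.le_ceil t) (by exact_mod_cast hn))

/-- Variation of parameters estimate: any solution of the inhomogeneous equation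
`u'' = P u' + (1+Q) u + f` with `|P|, |Q|, |f| ≤ C₀ e^{-dt}`, `d > 1`, differs from some
linear combination of the fundamental solutions `u₁, u₂` by `O(e^{-dt})`. -/
theorem ode_inhomogeneous_estimate (P Q f u u' u₁ u₁' u₂ u₂' : ℝ → ℝ) (d C₀ C : ℝ)
    (hd : 1 < d) (hC₀ : 0 < C₀) (hC : 0 < C)
    (hP : ContinuousOn P (Ici 0)) (hQ : ContinuousOn Q (Ici 0))
    (hf : ContinuousOn f (Ici 0))
    (hQ1 : ∀ t ∈ Ici (0:ℝ), 0 < 1 + Q t)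
    (hPb : ∀ t ∈ Ici (0:ℝ), |P t| ≤ C₀ * exp (-d * t))
    (hQb : ∀ t ∈ Ici (0:ℝ), |Q t| ≤ C₀ * exp (-d * t))
    (hfb : ∀ t ∈ Ici (0:ℝ), |f t| ≤ C₀ * exp (-d * t))
    (hu₁ : ∀ t ∈ Ici (0:ℝ), HasDerivWithinAt u₁ (u₁' t) (Ici 0) t)
    (hu₁' : ∀ t ∈ Ici (0:ℝ), HasDerivWithinAt u₁' (P t * u₁' t + (1 + Q t) * u₁ t) (Ici 0) t)
    (hu₂ : ∀ t ∈ Ici (0:ℝ), HasDerivWithinAt u₂ (u₂' t) (Ici 0) t)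
    (hu₂' : ∀ t ∈ Ici (0:ℝ), HasDerivWithinAt u₂' (P t * u₂' t + (1 + Q t) * u₂ t) (Ici 0) t)
    (hb₁ : ∀ t ∈ Ici (0:ℝ), C⁻¹ * exp t ≤ u₁ t ∧ u₁ t ≤ C * exp t)
    (hb₂ : ∀ t ∈ Ici (0:ℝ), C⁻¹ * exp (-t) ≤ u₂ t ∧ u₂ t ≤ C * exp (-t))
    (hW : ∀ t ∈ Ici (0:ℝ), u₁ t * u₂' t - u₂ t * u₁' t ≤ -2 * C⁻¹ ^ 2)
    (hu : ∀ t ∈ Ici (0:ℝ), HasDerivWithinAt u (u' t) (Ici 0) t)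
    (hu' : ∀ t ∈ Ici (0:ℝ),
      HasDerivWithinAt u' (P t * u' t + (1 + Q t) * u t + f t) (Ici 0) t) :
    ∃ (c₁ c₂ C' : ℝ), 0 < C' ∧
      ∀ t ∈ Ici (0:ℝ), |u t - (c₁ * u₁ t + c₂ * u₂ t)| ≤ C' * exp (-d * t) := by
  set W : ℝ → ℝ := fun t => u₁ t * u₂' t - u₂ t * u₁' t with hWdef
  have hCi : (0:ℝ) < C⁻¹ := inv_pos.mpr hC
  have hWneg : ∀ t ∈ Ici (0:ℝ), W t < 0 := fun t ht =>
    lt_of_le_of_lt (hW t ht) (by nlinarith)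
  have hWne : ∀ t ∈ Ici (0:ℝ), W t ≠ 0 := fun t ht => ne_of_lt (hWneg t ht)
  have hWabs : ∀ t ∈ Ici (0:ℝ), 2 * C⁻¹ ^ 2 ≤ |W t| := by
    intro t ht
    rw [abs_of_neg (hWneg t ht)]
    linarith [hW t ht]
  set a : ℝ → ℝ := fun t => (u t * u₂' t - u' t * u₂ t) / W t with hadef
  set b : ℝ → ℝ := fun t => (u' t * u₁ t - u t * u₁' t) / W t with hbdef
  -- derivative of W
  have hWd : ∀ t ∈ Ici (0:ℝ), HasDerivWithinAt W
      (u₁' t * u₂' t + u₁ t * (P t * u₂' t + (1 + Q t) * u₂ t)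
        - (u₂' t * u₁' t + u₂ t * (P t * u₁' t + (1 + Q t) * u₁ t))) (Ici 0) t := by
    intro t ht
    exact ((hu₁ t ht).mul (hu₂' t ht)).sub ((hu₂ t ht).mul (hu₁' t ht))
  -- derivative of a
  have had : ∀ t ∈ Ici (0:ℝ), HasDerivWithinAt a (-(f t * u₂ t) / W t) (Ici 0) t := by
    intro t ht
    have hN : HasDerivWithinAt (fun t => u t * u₂' t - u' t * u₂ t)
        (u' t * u₂' t + u t * (P t * u₂' t + (1 + Q t) * u₂ t)
          - ((P t * u' t + (1 + Q t) * u t + f t) * u₂ t + u' t * u₂' t)) (Ici 0) t :=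
      ((hu t ht).mul (hu₂' t ht)).sub ((hu' t ht).mul (hu₂ t ht))
    have := hN.div (hWd t ht) (hWne t ht)
    refine this.congr_deriv ?_
    have h0 := hWne t ht
    field_simp
    ring
  -- derivative of b
  have hbd : ∀ t ∈ Ici (0:ℝ), HasDerivWithinAt b (f t * u₁ t / W t) (Ici 0) t := by
    intro t ht
    have hM : HasDerivWithinAt (fun t => u' t * u₁ t - u t * u₁' t)
        ((P t * u' t + (1 + Q t) * u t + f t) * u₁ t + u' t * u₁' t
          - (u' t * u₁' t + u t * (P t * u₁' t + (1 + Q t) * u₁ t))) (Ici 0) t :=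
      ((hu' t ht).mul (hu₁ t ht)).sub ((hu t ht).mul (hu₁' t ht))
    have := hM.div (hWd t ht) (hWne t ht)
    refine this.congr_deriv ?_
    have h0 := hWne t ht
    field_simp
    ring
  set K : ℝ := C₀ * C ^ 3 / 2 with hKdef
  have hK0 : 0 ≤ K := by positivity
  -- bound |a'|
  have hu₁pos : ∀ t ∈ Ici (0:ℝ), 0 < u₁ t := fun t ht =>
    lt_of_lt_of_le (by positivity) (hb₁ t ht).1
  have hu₂pos : ∀ t ∈ Ici (0:ℝ), 0 < u₂ t := fun t ht =>
    lt_of_lt_of_le (by positivity) (hb₂ t ht).1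
  have habound : ∀ t ∈ Ici (0:ℝ), |(-(f t * u₂ t) / W t)| ≤ K * exp (-(d+1) * t) := by
    intro t ht
    rw [abs_div, abs_neg, abs_mul]
    rw [div_le_iff₀ (lt_of_lt_of_le (by positivity) (hWabs t ht))]
    have h1 : |f t| ≤ C₀ * exp (-d * t) := hfb t ht
    have h2 : |u₂ t| ≤ C * exp (-t) := by
      rw [abs_of_pos (hu₂pos t ht)]; exact (hb₂ t ht).2
    have h3 : |f t| * |u₂ t| ≤ C₀ * exp (-d * t) * (C * exp (-t)) := by
      apply mul_le_mul h1 h2 (abs_nonneg _) (by positivity)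
    have h4 : exp (-d * t) * exp (-t) = exp (-(d+1) * t) := by
      rw [← exp_add]; ring_nf
    have h5 : K * exp (-(d+1)*t) * (2 * C⁻¹^2) = C₀ * exp (-d*t) * (C * exp (-t)) := by
      rw [hKdef, ← h4]
      field_simp
    calc |f t| * |u₂ t| ≤ C₀ * exp (-d * t) * (C * exp (-t)) := h3
      _ = K * exp (-(d+1)*t) * (2 * C⁻¹^2) := h5.symm
      _ ≤ K * exp (-(d+1)*t) * |W t| := by
          apply mul_le_mul_of_nonneg_left (hWabs t ht) (by positivity)
  have hbbound : ∀ t ∈ Ici (0:ℝ), |f t * u₁ t / W t| ≤ K * exp (-(d-1) * t) := by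
    intro t ht
    rw [abs_div, abs_mul]
    rw [div_le_iff₀ (lt_of_lt_of_le (by positivity) (hWabs t ht))]
    have h1 : |f t| ≤ C₀ * exp (-d * t) := hfb t ht
    have h2 : |u₁ t| ≤ C * exp t := by
      rw [abs_of_pos (hu₁pos t ht)]; exact (hb₁ t ht).2
    have h3 : |f t| * |u₁ t| ≤ C₀ * exp (-d * t) * (C * exp t) := by
      apply mul_le_mul h1 h2 (abs_nonneg _) (by positivity)
    have h4 : exp (-d * t) * exp t = exp (-(d-1) * t) := by
      rw [← exp_add]; ring_nf
    have h5 : K * exp (-(d-1)*t) * (2 * C⁻¹^2) = C₀ * exp (-d*t) * (C * exp t) := by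
      rw [hKdef, ← h4]
      field_simp
    calc |f t| * |u₁ t| ≤ C₀ * exp (-d * t) * (C * exp t) := h3
      _ = K * exp (-(d-1)*t) * (2 * C⁻¹^2) := h5.symm
      _ ≤ K * exp (-(d-1)*t) * |W t| := by
          apply mul_le_mul_of_nonneg_left (hWabs t ht) (by positivity)
  obtain ⟨c₁, hc₁⟩ := decay_of_deriv_bound hK0 (by linarith : (0:ℝ) < d + 1) had habound
  obtain ⟨c₂, hc₂⟩ := decay_of_deriv_bound hK0 (by linarith : (0:ℝ) < d - 1) hbd hbbound
  have hd1 : (0:ℝ) < d + 1 := by linarith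
  have hd2 : (0:ℝ) < d - 1 := by linarith
  have t1 : 0 ≤ C * (K / (d+1)) := mul_nonneg hC.le (div_nonneg hK0 hd1.le)
  have t2 : 0 ≤ C * (K / (d-1)) := mul_nonneg hC.le (div_nonneg hK0 hd2.le)
  refine ⟨c₁, c₂, C * (K / (d+1)) + C * (K / (d-1)) + 1, by linarith, ?_⟩
  intro t ht
  -- identity: u t = a t * u₁ t + b t * u₂ t
  have hid : u t = a t * u₁ t + b t * u₂ t := by
    rw [hadef, hbdef]
    have h0 := hWne t ht
    field_simp
    ring
  have hsplit : u t - (c₁ * u₁ t + c₂ * u₂ t)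
      = (a t - c₁) * u₁ t + (b t - c₂) * u₂ t := by rw [hid]; ring
  rw [hsplit]
  have e1 : |(a t - c₁) * u₁ t| ≤ (K/(d+1)) * exp (-(d+1)*t) * (C * exp t) := by
    rw [abs_mul, abs_of_pos (hu₁pos t ht)]
    exact mul_le_mul (hc₁ t ht) (hb₁ t ht).2 (le_of_lt (hu₁pos t ht))
      (mul_nonneg (div_nonneg hK0 hd1.le) (exp_pos _).le)
  have e2 : |(b t - c₂) * u₂ t| ≤ (K/(d-1)) * exp (-(d-1)*t) * (C * exp (-t)) := by
    rw [abs_mul, abs_of_pos (hu₂pos t ht)]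
    exact mul_le_mul (hc₂ t ht) (hb₂ t ht).2 (le_of_lt (hu₂pos t ht))
      (mul_nonneg (div_nonneg hK0 hd2.le) (exp_pos _).le)
  have e3 : exp (-(d+1)*t) * exp t = exp (-d*t) := by rw [← exp_add]; ring_nf
  have e4 : exp (-(d-1)*t) * exp (-t) = exp (-d*t) := by rw [← exp_add]; ring_nf
  calc |(a t - c₁) * u₁ t + (b t - c₂) * u₂ t|
      ≤ |(a t - c₁) * u₁ t| + |(b t - c₂) * u₂ t| := abs_add_le _ _
    _ ≤ (K/(d+1)) * exp (-(d+1)*t) * (C * exp t)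
        + (K/(d-1)) * exp (-(d-1)*t) * (C * exp (-t)) := add_le_add e1 e2
    _ = (C * (K/(d+1)) + C * (K/(d-1))) * exp (-d*t) := by
        rw [show (K/(d+1)) * exp (-(d+1)*t) * (C * exp t)
            = C * (K/(d+1)) * (exp (-(d+1)*t) * exp t) by ring,
          show (K/(d-1)) * exp (-(d-1)*t) * (C * exp (-t))
            = C * (K/(d-1)) * (exp (-(d-1)*t) * exp (-t)) by ring, e3, e4]
        ring
    _ ≤ (C * (K/(d+1)) + C * (K/(d-1)) + 1) * exp (-d*t) := by
        apply mul_le_mul_of_nonneg_right (by linarith) (le_of_lt (exp_pos _))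
end
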